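/- arXiv:2210.07847 — 7 statements merged into one kernel-verified Lean document; each statement's English description precedes it below -/
import Mathlib

section
/- For every C > 0 and A > 0, the integral of 1/(l₁² l₂²) over the region {l ∈ ℝ² : A ≤ ‖l‖ ≤ t, |l₁ l₂| ≥ C} is asymptotically equivalent to (8/C)·log t as t → ∞. -/
open MeasureTheory Filter Real Set

lemma abs_band {c s : ℝ} (hc : 0 < c) :
    {y : ℝ | c ≤ |y| ∧ |y| ≤ s} = Icc (-s) (-c) ∪ Icc c s := by
  ext y
  simp only [mem_setOf_eq, mem_union, mem_Icc]
  rcases le_or_gt 0 y with h | h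
  · rw [abs_of_nonneg h]
    exact ⟨fun ⟨h1, h2⟩ => Or.inr ⟨h1, h2⟩,
      fun hh => hh.elim (fun ⟨h1, h2⟩ => ⟨by linarith, by linarith⟩) fun ⟨h1, h2⟩ => ⟨h1, h2⟩⟩
  · rw [abs_of_neg h]
    exact ⟨fun ⟨h1, h2⟩ => Or.inl ⟨by linarith, by linarith⟩,
      fun hh => hh.elim (fun ⟨h1, h2⟩ => ⟨by linarith, by linarith⟩)
        fun ⟨h1, h2⟩ => ⟨by linarith, by linarith⟩⟩

lemma inv_sq_integral (k u v : ℝ) (hk : k ≠ 0) (h0 : ∀ y ∈ Set.uIcc u v, y ≠ 0) :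
    ∫ y in u..v, 1/(k*y^2) = 1/(k*u) - 1/(k*v) := by
  have hderiv : ∀ y ∈ Set.uIcc u v,
      HasDerivAt (fun y : ℝ => -(1/k) * y⁻¹) (1/(k*y^2)) y := by
    intro y hy
    have h2 := (hasDerivAt_inv (h0 y hy)).const_mul (-(1/k))
    convert! h2 using 1
    have := h0 y hy
    field_simp
  have hcont : IntervalIntegrable (fun y => 1/(k*y^2)) volume u v := by
    apply ContinuousOn.intervalIntegrable
    exact continuousOn_const.div (continuousOn_const.mul (continuousOn_pow 2)) fun y hy =>
      mul_ne_zero hk (pow_ne_zero 2 (h0 y hy))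
  rw [intervalIntegral.integral_eq_sub_of_hasDerivAt hderiv hcont]
  have hu : u ≠ 0 := h0 u Set.left_mem_uIcc
  have hv : v ≠ 0 := h0 v Set.right_mem_uIcc
  field_simp
  ring

lemma slice_integral (C s x : ℝ) (hC : 0 < C) (hs : 0 < s) (hx : C/s ≤ |x|) (hxs : |x| ≤ s) :
    ∫ y in {y : ℝ | C ≤ |x*y| ∧ |x| ≤ s ∧ |y| ≤ s}, 1/(x^2*y^2) =
      2/(C*|x|) - 2/(s*x^2) := by
  have hx0 : x ≠ 0 := by
    intro h
    rw [h, abs_zero] at hx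
    have : 0 < C/s := div_pos hC hs
    linarith
  have hax : 0 < |x| := abs_pos.2 hx0
  set c := C/|x| with hc
  have hc0 : 0 < c := div_pos hC hax
  have hcs : c ≤ s := by
    rw [hc, div_le_iff₀ hax]
    rw [div_le_iff₀ hs] at hx
    linarith [mul_comm s (|x|)]
  have hset : {y : ℝ | C ≤ |x*y| ∧ |x| ≤ s ∧ |y| ≤ s} = Icc (-s) (-c) ∪ Icc c s := by
    rw [← abs_band hc0]
    ext y
    simp only [mem_setOf_eq, abs_mul]
    constructor
    · rintro ⟨h1, _, h3⟩
      refine ⟨?_, h3⟩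
      rw [hc, div_le_iff₀ hax]
      calc C ≤ |x| * |y| := h1
        _ = |y| * |x| := mul_comm _ _
    · rintro ⟨h1, h2⟩
      refine ⟨?_, hxs, h2⟩
      rw [hc, div_le_iff₀ hax] at h1
      calc C ≤ |y| * |x| := h1
        _ = |x| * |y| := mul_comm _ _
  rw [hset]
  have hdisj : Disjoint (Icc (-s) (-c)) (Icc c s) := by
    rw [Set.disjoint_left]
    rintro y ⟨_, h1⟩ ⟨h2, _⟩
    linarith
  have hint1 : IntegrableOn (fun y => 1/(x^2*y^2)) (Icc (-s) (-c)) := by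
    apply ContinuousOn.integrableOn_Icc
    exact continuousOn_const.div (continuousOn_const.mul (continuousOn_pow 2)) fun y hy =>
      mul_ne_zero (pow_ne_zero 2 hx0) (pow_ne_zero 2 (by rintro rfl; simp at hy; linarith [hy.1, hy.2]))
  have hint2 : IntegrableOn (fun y => 1/(x^2*y^2)) (Icc c s) := by
    apply ContinuousOn.integrableOn_Icc
    exact continuousOn_const.div (continuousOn_const.mul (continuousOn_pow 2)) fun y hy =>
      mul_ne_zero (pow_ne_zero 2 hx0) (pow_ne_zero 2 (by rintro rfl; simp at hy; linarith [hy.1, hy.2]))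
  rw [setIntegral_union hdisj measurableSet_Icc hint1 hint2]
  rw [integral_Icc_eq_integral_Ioc, integral_Icc_eq_integral_Ioc,
    ← intervalIntegral.integral_of_le (by linarith : -s ≤ -c),
    ← intervalIntegral.integral_of_le hcs]
  rw [inv_sq_integral (x^2) (-s) (-c) (pow_ne_zero 2 hx0)
      (fun y hy => by rw [Set.uIcc_of_le (by linarith : -s ≤ -c)] at hy; rintro rfl; simp at hy; linarith [hy.1, hy.2]),
    inv_sq_integral (x^2) c s (pow_ne_zero 2 hx0)
      (fun y hy => by rw [Set.uIcc_of_le hcs] at hy; rintro rfl; linarith [hy.1, hy.2])]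
  rw [hc]
  rw [← sq_abs x]
  have : |x| ≠ 0 := hax.ne'
  field_simp
  linear_combination (0:ℝ) * sq_abs x

lemma hasDeriv_aux (Cc s x : ℝ) (hC : 0 < Cc) (hs : 0 < s) (hx0 : x ≠ 0) :
    HasDerivAt (fun x => (2/Cc) * Real.log x + 2/s * x⁻¹) (2/(Cc*x) - 2/(s*x^2)) x := by
  have h1 := (Real.hasDerivAt_log hx0).const_mul (2/Cc)
  have h2 := (hasDerivAt_inv hx0).const_mul (2/s)
  convert! h1.add h2 using 1
  field_simp
  ring

lemma pos_interval_integral {Cc s u v : ℝ} (hC : 0 < Cc) (hs : 0 < s) (hu : 0 < u) (huv : u ≤ v) :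
    ∫ x in u..v, (2/(Cc*x) - 2/(s*x^2)) =
      (2/Cc) * (Real.log v - Real.log u) + 2/(s*v) - 2/(s*u) := by
  have hne : ∀ x ∈ Set.uIcc u v, x ≠ 0 := by
    intro x hx
    rw [Set.uIcc_of_le huv] at hx
    exact (lt_of_lt_of_le hu hx.1).ne'
  have hcont : IntervalIntegrable (fun x => 2/(Cc*x) - 2/(s*x^2)) volume u v := by
    apply ContinuousOn.intervalIntegrable
    apply ContinuousOn.sub
    · exact continuousOn_const.div (continuousOn_const.mul (continuousOn_id)) fun x hx => by
        simpa using mul_ne_zero hC.ne' (hne x hx)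
    · exact continuousOn_const.div (continuousOn_const.mul (continuousOn_pow 2)) fun x hx =>
        mul_ne_zero hs.ne' (pow_ne_zero 2 (hne x hx))
  rw [intervalIntegral.integral_eq_sub_of_hasDerivAt
    (fun x hx => hasDeriv_aux Cc s x hC hs (hne x hx)) hcont]
  have hu0 : u ≠ 0 := hu.ne'
  have hv0 : (v:ℝ) ≠ 0 := (lt_of_lt_of_le hu huv).ne'
  field_simp
  ring

lemma g_meas : Measurable fun p : ℝ × ℝ => 1/(p.1^2*p.2^2) :=
  measurable_const.div ((measurable_fst.pow_const 2).mul (measurable_snd.pow_const 2))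

lemma integrableOn_g {C : ℝ} (hC : 0 < C) {s : Set (ℝ × ℝ)} (hm : MeasurableSet s)
    (hb : Bornology.IsBounded s) (hsub : ∀ p ∈ s, C ≤ |p.1*p.2|) :
    IntegrableOn (fun p : ℝ × ℝ => 1/(p.1^2*p.2^2)) s := by
  refine Measure.integrableOn_of_bounded (M := 1/C^2) hb.measure_lt_top.ne
    g_meas.aestronglyMeasurable ?_
  filter_upwards [ae_restrict_mem hm] with p hp
  have h1 : C^2 ≤ p.1^2*p.2^2 := by nlinarith [hsub p hp, sq_abs (p.1*p.2)]
  rw [Real.norm_eq_abs, abs_of_nonneg (by positivity)]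
  exact one_div_le_one_div_of_le (by positivity) h1

lemma square_integral {C : ℝ} (hC : 0 < C) {s : ℝ} (hs : Real.sqrt C ≤ s) :
    ∫ p in {p : ℝ × ℝ | C ≤ |p.1*p.2| ∧ |p.1| ≤ s ∧ |p.2| ≤ s}, 1/(p.1^2*p.2^2)
      = 8/C * Real.log s - 4*(Real.log C + 1)/C + 4/s^2 := by
  have hs0 : 0 < s := lt_of_lt_of_le (Real.sqrt_pos.2 hC) hs
  have hCs2 : C ≤ s^2 := by nlinarith [Real.sq_sqrt hC.le, Real.sqrt_nonneg C]
  set a := C/s with ha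
  have ha0 : 0 < a := div_pos hC hs0
  have has : a ≤ s := by rw [ha, div_le_iff₀ hs0]; nlinarith
  set T := {p : ℝ × ℝ | C ≤ |p.1*p.2| ∧ |p.1| ≤ s ∧ |p.2| ≤ s} with hTdef
  have hT : MeasurableSet T := by
    apply MeasurableSet.inter
    · exact measurableSet_le measurable_const (measurable_fst.mul measurable_snd).abs
    · exact (measurableSet_le measurable_fst.abs measurable_const).inter
        (measurableSet_le measurable_snd.abs measurable_const)
  have hTb : Bornology.IsBounded T := by
    apply (Metric.isBounded_closedBall (x := (0 : ℝ × ℝ)) (r := s)).subset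
    rintro p ⟨_, h2, h3⟩
    rw [Metric.mem_closedBall, dist_zero_right, Prod.norm_def]
    exact max_le (by rwa [Real.norm_eq_abs]) (by rwa [Real.norm_eq_abs])
  have hint : IntegrableOn (fun p : ℝ × ℝ => 1/(p.1^2*p.2^2)) T :=
    integrableOn_g hC hT hTb (fun p hp => hp.1)
  rw [← integral_indicator hT]
  have hint2 : Integrable (T.indicator fun p : ℝ × ℝ => 1/(p.1^2*p.2^2)) volume :=
    (integrable_indicator_iff hT).2 hint
  rw [show (volume : Measure (ℝ × ℝ)) = (volume : Measure ℝ).prod volume from rfl] at hint2 ⊢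
  rw [integral_prod _ hint2]
  -- inner integral
  have hinner : ∀ x : ℝ,
      (∫ y, T.indicator (fun p : ℝ × ℝ => 1/(p.1^2*p.2^2)) (x, y)) =
        Set.indicator {x : ℝ | a ≤ |x| ∧ |x| ≤ s} (fun x => 2/(C*|x|) - 2/(s*x^2)) x := by
    intro x
    have hslice : (fun y => T.indicator (fun p : ℝ × ℝ => 1/(p.1^2*p.2^2)) (x, y)) =
        Set.indicator {y : ℝ | C ≤ |x*y| ∧ |x| ≤ s ∧ |y| ≤ s} (fun y => 1/(x^2*y^2)) := by
      ext y
      by_cases h : (x, y) ∈ T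
      · rw [Set.indicator_of_mem h, Set.indicator_of_mem (by exact h)]
      · rw [Set.indicator_of_notMem h, Set.indicator_of_notMem (by exact h)]
    rw [hslice]
    have hSx : MeasurableSet {y : ℝ | C ≤ |x*y| ∧ |x| ≤ s ∧ |y| ≤ s} := by
      apply MeasurableSet.inter
      · exact measurableSet_le measurable_const (measurable_const.mul measurable_id).abs
      · exact (MeasurableSet.const _).inter
          (measurableSet_le measurable_id.abs measurable_const)
    rw [integral_indicator hSx]
    by_cases hcase : a ≤ |x| ∧ |x| ≤ s
    · rw [Set.indicator_of_mem (show x ∈ {x : ℝ | a ≤ |x| ∧ |x| ≤ s} from hcase)]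
      exact slice_integral C s x hC hs0 hcase.1 hcase.2
    · rw [Set.indicator_of_notMem (show x ∉ {x : ℝ | a ≤ |x| ∧ |x| ≤ s} from hcase)]
      have hempty : {y : ℝ | C ≤ |x*y| ∧ |x| ≤ s ∧ |y| ≤ s} = ∅ := by
        rw [Set.eq_empty_iff_forall_notMem]
        rintro y ⟨h1, h2, h3⟩
        apply hcase
        refine ⟨?_, h2⟩
        rw [ha, div_le_iff₀ hs0]
        calc C ≤ |x*y| := h1
          _ = |x| * |y| := abs_mul _ _
          _ ≤ |x| * s := by
              apply mul_le_mul_of_nonneg_left h3 (abs_nonneg x)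
      rw [hempty]
      simp
  rw [integral_congr_ae (Filter.Eventually.of_forall hinner)]
  have hD : MeasurableSet {x : ℝ | a ≤ |x| ∧ |x| ≤ s} :=
    (measurableSet_le measurable_const measurable_id.abs).inter
      (measurableSet_le measurable_id.abs measurable_const)
  rw [integral_indicator hD]
  have hDband : {x : ℝ | a ≤ |x| ∧ |x| ≤ s} = Icc (-s) (-a) ∪ Icc a s := abs_band ha0
  rw [hDband]
  have hcontOn : ∀ u v : ℝ, (∀ y ∈ Icc u v, y ≠ 0) →
      IntegrableOn (fun x => 2/(C*|x|) - 2/(s*x^2)) (Icc u v) := by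
    intro u v h0
    apply ContinuousOn.integrableOn_Icc
    apply ContinuousOn.sub
    · exact continuousOn_const.div (continuousOn_const.mul continuous_abs.continuousOn)
        fun y hy => mul_ne_zero hC.ne' (abs_ne_zero.2 (h0 y hy))
    · exact continuousOn_const.div (continuousOn_const.mul (continuousOn_pow 2))
        fun y hy => mul_ne_zero hs0.ne' (pow_ne_zero 2 (h0 y hy))
  have hdisj : Disjoint (Icc (-s) (-a)) (Icc a s) := by
    rw [Set.disjoint_left]
    rintro y ⟨_, h1⟩ ⟨h2, _⟩
    linarith
  rw [setIntegral_union hdisj measurableSet_Icc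
    (hcontOn _ _ (fun y hy => by rintro rfl; simp at hy; linarith [hy.1, hy.2]))
    (hcontOn _ _ (fun y hy => by rintro rfl; linarith [hy.1, hy.2]))]
  rw [integral_Icc_eq_integral_Ioc, integral_Icc_eq_integral_Ioc,
    ← intervalIntegral.integral_of_le (by linarith : -s ≤ -a),
    ← intervalIntegral.integral_of_le has]
  have hneg : (∫ x in (-s)..(-a), (2/(C*|x|) - 2/(s*x^2))) =
      ∫ x in a..s, (2/(C*|x|) - 2/(s*x^2)) := by
    rw [← intervalIntegral.integral_comp_neg (fun x => 2/(C*|x|) - 2/(s*x^2))]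
    congr 1
    ext x
    rw [abs_neg, neg_pow]
    norm_num
  rw [hneg]
  have hposint : (∫ x in a..s, (2/(C*|x|) - 2/(s*x^2))) =
      ∫ x in a..s, (2/(C*x) - 2/(s*x^2)) := by
    apply intervalIntegral.integral_congr
    intro x hx
    rw [Set.uIcc_of_le has] at hx
    simp only [abs_of_pos (lt_of_lt_of_le ha0 hx.1)]
  rw [hposint, pos_interval_integral hC hs0 ha0 has]
  have hla : Real.log a = Real.log C - Real.log s := Real.log_div hC.ne' hs0.ne'
  rw [ha] at hla ⊢
  rw [hla]
  field_simp
  ring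

noncomputable def phi : ℝ × ℝ → EuclideanSpace ℝ (Fin 2) :=
  (MeasurableEquiv.toLp 2 (Fin 2 → ℝ)) ∘ (MeasurableEquiv.piFinTwo fun _ => ℝ).symm

lemma phi_mp : MeasurePreserving phi volume volume :=
  ((EuclideanSpace.volume_preserving_symm_measurableEquiv_toLp (Fin 2)).symm _).comp
    ((volume_preserving_piFinTwo fun _ => ℝ).symm _)

lemma phi_emb : MeasurableEmbedding phi :=
  ((MeasurableEquiv.toLp 2 (Fin 2 → ℝ)).measurableEmbedding).comp
    (MeasurableEquiv.piFinTwo fun _ => ℝ).symm.measurableEmbedding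

lemma phi_apply0 (p : ℝ × ℝ) : phi p 0 = p.1 := rfl
lemma phi_apply1 (p : ℝ × ℝ) : phi p 1 = p.2 := rfl

lemma phi_norm (p : ℝ × ℝ) : ‖phi p‖ = Real.sqrt (p.1 ^ 2 + p.2 ^ 2) := by
  rw [EuclideanSpace.norm_eq]
  simp [Fin.sum_univ_two, phi_apply0, phi_apply1, sq_abs]

lemma tendsto_ratio (b d : ℝ) (hb : 0 < b) (r : ℝ → ℝ) (hr : Tendsto r atTop (nhds 0)) :
    Tendsto (fun t => (b * Real.log t + d + r t) / (b * Real.log t)) atTop (nhds 1) := by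
  have hlog : Tendsto (fun t : ℝ => b * Real.log t) atTop atTop :=
    Real.tendsto_log_atTop.const_mul_atTop hb
  have h0 : Tendsto (fun t => (d + r t) / (b * Real.log t)) atTop (nhds 0) :=
    Tendsto.div_atTop (tendsto_const_nhds.add hr) hlog
  have h1 : Tendsto (fun t => 1 + (d + r t) / (b * Real.log t)) atTop (nhds 1) := by
    have := (tendsto_const_nhds (x := (1:ℝ)) (f := atTop)).add h0
    simpa using this
  apply h1.congr'
  filter_upwards [hlog.eventually_gt_atTop 0] with t ht
  have hne : b * Real.log t ≠ 0 := ht.ne'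
  have hb0 : b ≠ 0 := hb.ne'
  have hl0 : Real.log t ≠ 0 := by intro h; simp [h] at hne
  field_simp
  ring

lemma sqrt_coord_le {p : ℝ × ℝ} {t : ℝ} (h : Real.sqrt (p.1^2 + p.2^2) ≤ t) :
    |p.1| ≤ t ∧ |p.2| ≤ t := by
  constructor
  · rw [← Real.sqrt_sq_eq_abs]
    exact le_trans (Real.sqrt_le_sqrt (by nlinarith [sq_nonneg p.2])) h
  · rw [← Real.sqrt_sq_eq_abs]
    exact le_trans (Real.sqrt_le_sqrt (by nlinarith [sq_nonneg p.1])) h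

/-- For every `C > 0` and `A > 0`, the integral of `1/(l₁² l₂²)` over
`{l ∈ ℝ² : A ≤ ‖l‖ ≤ t, |l₁ l₂| ≥ C}` is asymptotically equivalent to `(8/C)·log t`. -/
theorem integral_inv_sq_sq_asymp (C A : ℝ) (hC : 0 < C) (hA : 0 < A) :
    Tendsto (fun t : ℝ =>
      (∫ l in {l : EuclideanSpace ℝ (Fin 2) | A ≤ ‖l‖ ∧ ‖l‖ ≤ t ∧ C ≤ |l 0 * l 1|},
        1 / ((l 0) ^ 2 * (l 1) ^ 2)) / (8 / C * Real.log t)) atTop (nhds 1) := by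
  have hsqrt2 : (0:ℝ) < Real.sqrt 2 := by positivity
  have hone_le_sqrt2 : (1:ℝ) ≤ Real.sqrt 2 := by
    rw [show (1:ℝ) = Real.sqrt 1 from (Real.sqrt_one).symm]
    exact Real.sqrt_le_sqrt (by norm_num)
  -- transfer to ℝ × ℝ
  have htrans : ∀ t : ℝ,
      (∫ l in {l : EuclideanSpace ℝ (Fin 2) | A ≤ ‖l‖ ∧ ‖l‖ ≤ t ∧ C ≤ |l 0 * l 1|},
        1 / ((l 0) ^ 2 * (l 1) ^ 2)) =
      ∫ p in {p : ℝ × ℝ | A ≤ Real.sqrt (p.1^2 + p.2^2) ∧ Real.sqrt (p.1^2 + p.2^2) ≤ t ∧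
          C ≤ |p.1 * p.2|}, 1/(p.1^2*p.2^2) := by
    intro t
    rw [← MeasurePreserving.setIntegral_preimage_emb phi_mp phi_emb
      (fun l : EuclideanSpace ℝ (Fin 2) => 1 / ((l 0) ^ 2 * (l 1) ^ 2)) _]
    have hpre : phi ⁻¹' {l : EuclideanSpace ℝ (Fin 2) | A ≤ ‖l‖ ∧ ‖l‖ ≤ t ∧ C ≤ |l 0 * l 1|} =
        {p : ℝ × ℝ | A ≤ Real.sqrt (p.1^2 + p.2^2) ∧ Real.sqrt (p.1^2 + p.2^2) ≤ t ∧
          C ≤ |p.1 * p.2|} := by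
      ext p
      simp only [Set.mem_preimage, Set.mem_setOf_eq, phi_norm, phi_apply0, phi_apply1]
    rw [hpre]
    rfl
  -- measurability facts
  have hmsqrt : Measurable fun p : ℝ × ℝ => Real.sqrt (p.1^2 + p.2^2) :=
    (Real.continuous_sqrt.comp ((continuous_fst.pow 2).add (continuous_snd.pow 2))).measurable
  have hmabs : Measurable fun p : ℝ × ℝ => |p.1 * p.2| := (measurable_fst.mul measurable_snd).abs
  have hmS : ∀ t : ℝ, MeasurableSet {p : ℝ × ℝ | A ≤ Real.sqrt (p.1^2 + p.2^2) ∧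
      Real.sqrt (p.1^2 + p.2^2) ≤ t ∧ C ≤ |p.1 * p.2|} :=
    fun t => (measurableSet_le measurable_const hmsqrt).inter
      ((measurableSet_le hmsqrt measurable_const).inter (measurableSet_le measurable_const hmabs))
  have hmB : MeasurableSet {p : ℝ × ℝ | Real.sqrt (p.1^2 + p.2^2) < A ∧ C ≤ |p.1 * p.2|} :=
    (measurableSet_lt hmsqrt measurable_const).inter (measurableSet_le measurable_const hmabs)
  have hmD : ∀ t : ℝ, MeasurableSet {p : ℝ × ℝ | Real.sqrt (p.1^2 + p.2^2) ≤ t ∧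
      C ≤ |p.1 * p.2|} :=
    fun t => (measurableSet_le hmsqrt measurable_const).inter
      (measurableSet_le measurable_const hmabs)
  -- boundedness helper
  have hball : ∀ (s : Set (ℝ × ℝ)) (t : ℝ), (∀ p ∈ s, |p.1| ≤ t ∧ |p.2| ≤ t) →
      Bornology.IsBounded s := by
    intro s t hsub
    apply (Metric.isBounded_closedBall (x := (0 : ℝ × ℝ)) (r := t)).subset
    intro p hp
    rw [Metric.mem_closedBall, dist_zero_right, Prod.norm_def]
    exact max_le (by rw [Real.norm_eq_abs]; exact (hsub p hp).1)
      (by rw [Real.norm_eq_abs]; exact (hsub p hp).2)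
  -- integrability on D t for t ≥ 0
  have hintD : ∀ t : ℝ, IntegrableOn (fun p : ℝ × ℝ => 1/(p.1^2*p.2^2))
      {p : ℝ × ℝ | Real.sqrt (p.1^2 + p.2^2) ≤ t ∧ C ≤ |p.1 * p.2|} := by
    intro t
    refine integrableOn_g hC (hmD t) (hball _ t fun p hp => sqrt_coord_le hp.1) fun p hp => hp.2
  have hintB : IntegrableOn (fun p : ℝ × ℝ => 1/(p.1^2*p.2^2))
      {p : ℝ × ℝ | Real.sqrt (p.1^2 + p.2^2) < A ∧ C ≤ |p.1 * p.2|} :=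
    integrableOn_g hC hmB (hball _ A fun p hp => sqrt_coord_le hp.1.le) fun p hp => hp.2
  have hintT : ∀ s : ℝ, IntegrableOn (fun p : ℝ × ℝ => 1/(p.1^2*p.2^2))
      {p : ℝ × ℝ | C ≤ |p.1 * p.2| ∧ |p.1| ≤ s ∧ |p.2| ≤ s} := by
    intro s
    refine integrableOn_g hC ?_ (hball _ s fun p hp => hp.2) fun p hp => hp.1
    exact (measurableSet_le measurable_const hmabs).inter
      ((measurableSet_le measurable_fst.abs measurable_const).inter
        (measurableSet_le measurable_snd.abs measurable_const))
  have hnn : ∀ p : ℝ × ℝ, 0 ≤ 1/(p.1^2*p.2^2) := fun p => by positivity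
  set c₀ := ∫ p in {p : ℝ × ℝ | Real.sqrt (p.1^2 + p.2^2) < A ∧ C ≤ |p.1 * p.2|},
    1/(p.1^2*p.2^2) with hc₀
  set t₀ := max (max A 2) (Real.sqrt 2 * Real.sqrt C) with ht₀
  -- the two key bounds
  have hbound : ∀ t : ℝ, t₀ ≤ t →
      (8/C * Real.log (t / Real.sqrt 2) - 4*(Real.log C + 1)/C + 4/(t / Real.sqrt 2)^2) - c₀ ≤
        (∫ p in {p : ℝ × ℝ | A ≤ Real.sqrt (p.1^2 + p.2^2) ∧ Real.sqrt (p.1^2 + p.2^2) ≤ t ∧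
          C ≤ |p.1 * p.2|}, 1/(p.1^2*p.2^2)) ∧
      (∫ p in {p : ℝ × ℝ | A ≤ Real.sqrt (p.1^2 + p.2^2) ∧ Real.sqrt (p.1^2 + p.2^2) ≤ t ∧
          C ≤ |p.1 * p.2|}, 1/(p.1^2*p.2^2)) ≤
        8/C * Real.log t - 4*(Real.log C + 1)/C + 4/t^2 := by
    intro t ht
    have hAt : A ≤ t := le_trans (le_trans (le_max_left A 2) (le_max_left _ _)) ht
    have h2t : (2:ℝ) ≤ t := le_trans (le_trans (le_max_right A 2) (le_max_left _ _)) ht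
    have ht0 : (0:ℝ) < t := by linarith
    have hsCt : Real.sqrt 2 * Real.sqrt C ≤ t := le_trans (le_max_right _ _) ht
    have hsC2 : Real.sqrt C ≤ t / Real.sqrt 2 := by
      rw [le_div_iff₀ hsqrt2]
      calc Real.sqrt C * Real.sqrt 2 = Real.sqrt 2 * Real.sqrt C := mul_comm _ _
        _ ≤ t := hsCt
    have hsC1 : Real.sqrt C ≤ t := by
      have h1 : Real.sqrt C ≤ Real.sqrt 2 * Real.sqrt C :=
        le_mul_of_one_le_left (Real.sqrt_nonneg C) hone_le_sqrt2
      linarith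
    constructor
    · -- lower bound
      have hsplit : {p : ℝ × ℝ | Real.sqrt (p.1^2 + p.2^2) ≤ t ∧ C ≤ |p.1 * p.2|} =
          {p : ℝ × ℝ | A ≤ Real.sqrt (p.1^2 + p.2^2) ∧ Real.sqrt (p.1^2 + p.2^2) ≤ t ∧
            C ≤ |p.1 * p.2|} ∪
          {p : ℝ × ℝ | Real.sqrt (p.1^2 + p.2^2) < A ∧ C ≤ |p.1 * p.2|} := by
        ext p
        simp only [Set.mem_setOf_eq, Set.mem_union]
        constructor
        · rintro ⟨h1, h2⟩
          rcases le_or_gt A (Real.sqrt (p.1^2 + p.2^2)) with h | h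
          · exact Or.inl ⟨h, h1, h2⟩
          · exact Or.inr ⟨h, h2⟩
        · rintro (⟨h1, h2, h3⟩ | ⟨h1, h2⟩)
          · exact ⟨h2, h3⟩
          · exact ⟨by linarith, h2⟩
      have hdisj : Disjoint
          {p : ℝ × ℝ | A ≤ Real.sqrt (p.1^2 + p.2^2) ∧ Real.sqrt (p.1^2 + p.2^2) ≤ t ∧
            C ≤ |p.1 * p.2|}
          {p : ℝ × ℝ | Real.sqrt (p.1^2 + p.2^2) < A ∧ C ≤ |p.1 * p.2|} := by
        rw [Set.disjoint_left]
        rintro p ⟨h1, _⟩ ⟨h2, _⟩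
        linarith
      have hintS : IntegrableOn (fun p : ℝ × ℝ => 1/(p.1^2*p.2^2))
          {p : ℝ × ℝ | A ≤ Real.sqrt (p.1^2 + p.2^2) ∧ Real.sqrt (p.1^2 + p.2^2) ≤ t ∧
            C ≤ |p.1 * p.2|} := by
        apply (hintD t).mono_set
        rintro p ⟨_, h2, h3⟩
        exact ⟨h2, h3⟩
      have heq : (∫ p in {p : ℝ × ℝ | Real.sqrt (p.1^2 + p.2^2) ≤ t ∧ C ≤ |p.1 * p.2|},
          1/(p.1^2*p.2^2)) =
          (∫ p in {p : ℝ × ℝ | A ≤ Real.sqrt (p.1^2 + p.2^2) ∧ Real.sqrt (p.1^2 + p.2^2) ≤ t ∧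
            C ≤ |p.1 * p.2|}, 1/(p.1^2*p.2^2)) + c₀ := by
        rw [hsplit, setIntegral_union hdisj hmB hintS hintB]
      have hTsub : {p : ℝ × ℝ | C ≤ |p.1 * p.2| ∧ |p.1| ≤ t / Real.sqrt 2 ∧
          |p.2| ≤ t / Real.sqrt 2} ⊆
          {p : ℝ × ℝ | Real.sqrt (p.1^2 + p.2^2) ≤ t ∧ C ≤ |p.1 * p.2|} := by
        rintro p ⟨h1, h2, h3⟩
        refine ⟨?_, h1⟩
        have hts : (t / Real.sqrt 2)^2 = t^2/2 := by
          rw [div_pow, Real.sq_sqrt (by norm_num : (0:ℝ) ≤ 2)]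
        have e2 : p.1^2 ≤ t^2/2 := by
          rw [← hts, ← sq_abs p.1]
          exact pow_le_pow_left₀ (abs_nonneg _) h2 2
        have e3 : p.2^2 ≤ t^2/2 := by
          rw [← hts, ← sq_abs p.2]
          exact pow_le_pow_left₀ (abs_nonneg _) h3 2
        calc Real.sqrt (p.1^2 + p.2^2) ≤ Real.sqrt (t^2) := Real.sqrt_le_sqrt (by linarith)
          _ = t := Real.sqrt_sq ht0.le
      have hmono : (∫ p in {p : ℝ × ℝ | C ≤ |p.1 * p.2| ∧ |p.1| ≤ t / Real.sqrt 2 ∧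
            |p.2| ≤ t / Real.sqrt 2}, 1/(p.1^2*p.2^2)) ≤
          ∫ p in {p : ℝ × ℝ | Real.sqrt (p.1^2 + p.2^2) ≤ t ∧ C ≤ |p.1 * p.2|},
            1/(p.1^2*p.2^2) :=
        setIntegral_mono_set (hintD t) (Filter.Eventually.of_forall hnn) hTsub.eventuallyLE
      rw [square_integral hC hsC2] at hmono
      linarith
    · -- upper bound
      have hSsub : {p : ℝ × ℝ | A ≤ Real.sqrt (p.1^2 + p.2^2) ∧ Real.sqrt (p.1^2 + p.2^2) ≤ t ∧
          C ≤ |p.1 * p.2|} ⊆ {p : ℝ × ℝ | C ≤ |p.1 * p.2| ∧ |p.1| ≤ t ∧ |p.2| ≤ t} := by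
        rintro p ⟨_, h2, h3⟩
        exact ⟨h3, sqrt_coord_le h2⟩
      have hmono := setIntegral_mono_set (hintT t) (Filter.Eventually.of_forall hnn)
        hSsub.eventuallyLE
      rw [square_integral hC hsC1] at hmono
      exact hmono
  -- limits of the two bounding functions
  have hbC : (0:ℝ) < 8/C := by positivity
  have hr4 : Tendsto (fun t : ℝ => 4/t^2) atTop (nhds 0) :=
    Tendsto.div_atTop tendsto_const_nhds (tendsto_pow_atTop two_ne_zero)
  have hr8 : Tendsto (fun t : ℝ => 8/t^2) atTop (nhds 0) :=
    Tendsto.div_atTop tendsto_const_nhds (tendsto_pow_atTop two_ne_zero)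
  have hup : Tendsto (fun t : ℝ =>
      (8/C * Real.log t - 4*(Real.log C + 1)/C + 4/t^2) / (8/C * Real.log t)) atTop (nhds 1) := by
    have := tendsto_ratio (8/C) (-(4*(Real.log C + 1)/C)) hbC (fun t => 4/t^2) hr4
    apply this.congr
    intro t
    ring_nf
  have hlo : Tendsto (fun t : ℝ =>
      (8/C * Real.log t + (-(8/C) * Real.log (Real.sqrt 2) - 4*(Real.log C + 1)/C - c₀) + 8/t^2)
        / (8/C * Real.log t)) atTop (nhds 1) :=
    tendsto_ratio (8/C) (-(8/C) * Real.log (Real.sqrt 2) - 4*(Real.log C + 1)/C - c₀) hbC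
      (fun t => 8/t^2) hr8
  -- squeeze
  refine tendsto_of_tendsto_of_tendsto_of_le_of_le' hlo hup ?_ ?_
  · filter_upwards [eventually_ge_atTop t₀] with t ht
    have h2t : (2:ℝ) ≤ t := le_trans (le_trans (le_max_right A 2) (le_max_left _ _)) ht
    have ht0 : (0:ℝ) < t := by linarith
    have hlogt : 0 < Real.log t := Real.log_pos (by linarith)
    have hden : 0 < 8/C * Real.log t := by positivity
    rw [htrans t]
    have hlow := (hbound t ht).1
    have hnum : 8/C * Real.log t + (-(8/C) * Real.log (Real.sqrt 2) - 4*(Real.log C + 1)/C - c₀)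
        + 8/t^2 =
        (8/C * Real.log (t / Real.sqrt 2) - 4*(Real.log C + 1)/C + 4/(t / Real.sqrt 2)^2) - c₀ := by
      rw [Real.log_div ht0.ne' hsqrt2.ne']
      rw [div_pow, Real.sq_sqrt (by norm_num : (0:ℝ) ≤ 2)]
      field_simp
      ring
    rw [hnum]
    exact div_le_div_of_nonneg_right hlow hden.le
  · filter_upwards [eventually_ge_atTop t₀] with t ht
    have h2t : (2:ℝ) ≤ t := le_trans (le_trans (le_max_right A 2) (le_max_left _ _)) ht
    have hlogt : 0 < Real.log t := Real.log_pos (by linarith)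
    have hden : 0 < 8/C * Real.log t := by positivity
    rw [htrans t]
    exact div_le_div_of_nonneg_right (hbound t ht).2 hden.le
end

section
/- Let L be an admissible lattice of ℝ², i.e. there exists C > 0 such that |l₁ l₂| ≥ C for all nonzero l = (l₁,l₂) ∈ L. Then there exists a constant D > 0 such that for all sufficiently large t, (1/D)·log t ≤ V(L,t) ≤ D·log t, where V(L,t) = Σ_{l ∈ L, 0 < ‖l‖ ≤ t} 1/(l₁² l₂²). -/
open MeasureTheory Filter Real
open scoped ENNReal NNReal

noncomputable def Vsum (L : Submodule ℤ (EuclideanSpace ℝ (Fin 2))) (t : ℝ) : ℝ :=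
  ∑' l : {l : EuclideanSpace ℝ (Fin 2) // l ∈ L ∧ 0 < ‖l‖ ∧ ‖l‖ ≤ t},
    1 / ((l.1 0) ^ 2 * (l.1 1) ^ 2)

namespace VsumAux

abbrev E2 := EuclideanSpace ℝ (Fin 2)

noncomputable def f (l : E2) : ℝ := 1 / ((l 0) ^ 2 * (l 1) ^ 2)

lemma f_nonneg (l : E2) : 0 ≤ f l := by
  unfold f; positivity

lemma abs_coord_le_norm (l : E2) (i : Fin 2) : |l i| ≤ ‖l‖ := by
  rw [EuclideanSpace.norm_eq]
  rw [← Real.sqrt_sq_eq_abs]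
  apply Real.sqrt_le_sqrt
  have : ∀ j, (0:ℝ) ≤ ‖l j‖ ^ 2 := fun j => by positivity
  calc (l i)^2 = ‖l i‖ ^ 2 := by rw [Real.norm_eq_abs, sq_abs]
    _ ≤ ∑ j, ‖l j‖ ^ 2 := Finset.single_le_sum (fun j _ => this j) (Finset.mem_univ i)

lemma norm_le_add (l : E2) : ‖l‖ ≤ |l 0| + |l 1| := by
  rw [EuclideanSpace.norm_eq, Fin.sum_univ_two]
  have h : ‖l 0‖ ^ 2 + ‖l 1‖ ^ 2 ≤ (|l 0| + |l 1|) ^ 2 := by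
    simp only [Real.norm_eq_abs]
    nlinarith [abs_nonneg (l 0), abs_nonneg (l 1)]
  calc Real.sqrt (‖l 0‖ ^ 2 + ‖l 1‖ ^ 2) ≤ Real.sqrt ((|l 0| + |l 1|) ^ 2) :=
        Real.sqrt_le_sqrt h
    _ = |l 0| + |l 1| := by
        rw [Real.sqrt_sq (by positivity)]

lemma setFinite (L : Submodule ℤ E2) [DiscreteTopology L] (t : ℝ) :
    {l : E2 | l ∈ L ∧ 0 < ‖l‖ ∧ ‖l‖ ≤ t}.Finite := by
  have hd : DiscreteTopology (L.toAddSubgroup : Set E2) :=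
    (inferInstance : DiscreteTopology L)
  have hc : IsClosed (L.toAddSubgroup : Set E2) := AddSubgroup.isClosed_of_discrete
  have hfin : (Metric.closedBall (0:E2) t ∩ (L.toAddSubgroup : Set E2)).Finite :=
    Metric.finite_isBounded_inter_isClosed DiscreteTopology.isDiscrete Metric.isBounded_closedBall hc
  refine hfin.subset fun l hl => ?_
  exact ⟨Metric.mem_closedBall.2 (by simpa [dist_zero_right] using hl.2.2), hl.1⟩

noncomputable def SF (L : Submodule ℤ E2) [DiscreteTopology L] (t : ℝ) : Finset E2 :=
  (setFinite L t).toFinset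

lemma mem_SF {L : Submodule ℤ E2} [DiscreteTopology L] {t : ℝ} {l : E2} :
    l ∈ SF L t ↔ l ∈ L ∧ 0 < ‖l‖ ∧ ‖l‖ ≤ t := by
  simp [SF, Set.Finite.mem_toFinset]

lemma Vsum_eq_sum (L : Submodule ℤ E2) [DiscreteTopology L] (t : ℝ) :
    Vsum L t = ∑ l ∈ SF L t, f l := by
  have hfin := setFinite L t
  rw [Vsum]
  have h1 : (∑' l : {l : E2 // l ∈ L ∧ 0 < ‖l‖ ∧ ‖l‖ ≤ t}, 1 / ((l.1 0) ^ 2 * (l.1 1) ^ 2))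
      = ∑' l : {l : E2 | l ∈ L ∧ 0 < ‖l‖ ∧ ‖l‖ ≤ t}, f l.1 := rfl
  rw [h1, tsum_subtype {l : E2 | l ∈ L ∧ 0 < ‖l‖ ∧ ‖l‖ ≤ t} f]
  have h2 : ∀ l ∉ SF L t, Set.indicator {l : E2 | l ∈ L ∧ 0 < ‖l‖ ∧ ‖l‖ ≤ t} f l = 0 := by
    intro l hl
    apply Set.indicator_of_notMem
    exact fun h => hl (mem_SF.2 h)
  rw [tsum_eq_sum h2]
  refine Finset.sum_congr rfl fun l hl => ?_
  have hm : l ∈ {l : E2 | l ∈ L ∧ 0 < ‖l‖ ∧ ‖l‖ ≤ t} := mem_SF.1 hl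
  exact Set.indicator_of_mem hm f


noncomputable def box (R S : ℝ) : Set E2 := {x : E2 | |x 0| ≤ R ∧ |x 1| ≤ S}

lemma volume_box {R S : ℝ} (hR : 0 ≤ R) (hS : 0 ≤ S) :
    volume (box R S) = ENNReal.ofReal (2*R) * ENNReal.ofReal (2*S) := by
  have hmp := (EuclideanSpace.volume_preserving_symm_measurableEquiv_toLp (Fin 2)).symm
  have hme : MeasurableSet (box R S) := by
    have : box R S = (fun x : E2 => x 0) ⁻¹' (Set.Icc (-R) R) ∩
        (fun x : E2 => x 1) ⁻¹' (Set.Icc (-S) S) := by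
      ext x
      simp [box, abs_le, Set.mem_Icc, and_comm, and_assoc, and_left_comm]
    rw [this]
    have m0 : Measurable (fun x : E2 => x 0) :=
      (measurable_pi_apply 0).comp ((MeasurableEquiv.toLp 2 (Fin 2 → ℝ)).symm).measurable
    have m1 : Measurable (fun x : E2 => x 1) :=
      (measurable_pi_apply 1).comp ((MeasurableEquiv.toLp 2 (Fin 2 → ℝ)).symm).measurable
    exact (m0 measurableSet_Icc).inter (m1 measurableSet_Icc)
  have key : volume (((MeasurableEquiv.toLp 2 (Fin 2 → ℝ)).symm).symm ⁻¹' (box R S))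
      = volume (box R S) := hmp.measure_preimage hme.nullMeasurableSet
  have hpre : ((MeasurableEquiv.toLp 2 (Fin 2 → ℝ)).symm).symm ⁻¹' (box R S)
      = Set.Icc (![-R, -S]) (![R, S]) := by
    ext y
    simp only [Set.mem_preimage, box, Set.mem_setOf_eq, Set.mem_Icc, Pi.le_def]
    have h0 : (((MeasurableEquiv.toLp 2 (Fin 2 → ℝ)).symm).symm y) 0 = y 0 := rfl
    have h1 : (((MeasurableEquiv.toLp 2 (Fin 2 → ℝ)).symm).symm y) 1 = y 1 := rfl
    rw [h0, h1]
    constructor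
    · rintro ⟨ha, hb⟩
      rw [abs_le] at ha hb
      refine ⟨fun i => ?_, fun i => ?_⟩ <;> fin_cases i <;> simp [ha.1, ha.2, hb.1, hb.2]
    · rintro ⟨ha, hb⟩
      have a0 := ha 0; have a1 := ha 1; have b0 := hb 0; have b1 := hb 1
      simp only [Matrix.cons_val_zero, Matrix.cons_val_one, Matrix.head_cons] at a0 a1 b0 b1
      constructor <;> rw [abs_le] <;> exact ⟨by assumption, by assumption⟩
  rw [← key, hpre, Real.volume_Icc_pi, Fin.prod_univ_two]
  simp only [Matrix.cons_val_zero, Matrix.cons_val_one, Matrix.head_cons]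
  rw [show R - -R = 2*R by ring, show S - -S = 2*S by ring]

lemma convex_box (R S : ℝ) : Convex ℝ (box R S) := by
  intro x hx y hy a b ha hb hab
  obtain ⟨hx0, hx1⟩ := hx
  obtain ⟨hy0, hy1⟩ := hy
  constructor
  · have : (a • x + b • y) 0 = a * x 0 + b * y 0 := by
      simp [PiLp.add_apply, PiLp.smul_apply, smul_eq_mul]
    rw [this]
    calc |a * x 0 + b * y 0| ≤ |a * x 0| + |b * y 0| := abs_add_le _ _
      _ = a * |x 0| + b * |y 0| := by rw [abs_mul, abs_mul, abs_of_nonneg ha, abs_of_nonneg hb]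
      _ ≤ a * R + b * R := by gcongr
      _ = R := by rw [← add_mul, hab, one_mul]
  · have : (a • x + b • y) 1 = a * x 1 + b * y 1 := by
      simp [PiLp.add_apply, PiLp.smul_apply, smul_eq_mul]
    rw [this]
    calc |a * x 1 + b * y 1| ≤ |a * x 1| + |b * y 1| := abs_add_le _ _
      _ = a * |x 1| + b * |y 1| := by rw [abs_mul, abs_mul, abs_of_nonneg ha, abs_of_nonneg hb]
      _ ≤ a * S + b * S := by gcongr
      _ = S := by rw [← add_mul, hab, one_mul]

lemma minkowski_box (L : Submodule ℤ E2) [DiscreteTopology L] [IsZLattice ℝ L] :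
    ∃ d > 0, ∀ R > 0, ∃ l, l ∈ L ∧ l ≠ 0 ∧ |l 0| ≤ R ∧ |l 1| ≤ d / R := by
  classical
  let b := Module.Free.chooseBasis ℤ L
  set F := ZSpan.fundamentalDomain (b.ofZLatticeBasis ℝ L) with hF
  have hFb : Bornology.IsBounded F := ZSpan.fundamentalDomain_isBounded _
  have hFfin : volume F ≠ ⊤ := hFb.measure_lt_top.ne
  set V := (volume F).toReal with hV
  have hVnn : 0 ≤ V := ENNReal.toReal_nonneg
  refine ⟨V + 1, by positivity, fun R hR => ?_⟩
  set S := (V + 1) / R with hSdef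
  have hS : 0 < S := by positivity
  have fund : IsAddFundamentalDomain L.toAddSubgroup F volume :=
    ZLattice.isAddFundamentalDomain b volume
  have h_symm : ∀ x ∈ box R S, -x ∈ box R S := by
    intro x hx
    have h0 : (-x) 0 = -(x 0) := rfl
    have h1 : (-x) 1 = -(x 1) := rfl
    exact ⟨by rw [h0, abs_neg]; exact hx.1, by rw [h1, abs_neg]; exact hx.2⟩
  have hvol : volume F * 2 ^ (Module.finrank ℝ E2) < volume (box R S) := by
    rw [volume_box hR.le hS.le, finrank_euclideanSpace_fin]
    have h2 : ENNReal.ofReal (2*R) * ENNReal.ofReal (2*S) = ENNReal.ofReal (4 * (V+1)) := by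
      rw [← ENNReal.ofReal_mul (by positivity)]
      congr 1
      rw [hSdef]
      field_simp
      norm_num
    rw [h2]
    have hv : volume F = ENNReal.ofReal V := by
      rw [hV, ENNReal.ofReal_toReal hFfin]
    rw [hv]
    calc ENNReal.ofReal V * 2 ^ 2 = ENNReal.ofReal (4 * V) := by
          rw [show ((2:ℝ≥0∞) ^ 2) = ENNReal.ofReal 4 by norm_num,
            ← ENNReal.ofReal_mul hVnn, mul_comm]
      _ < ENNReal.ofReal (4 * (V+1)) := by
          rw [ENNReal.ofReal_lt_ofReal_iff (by positivity)]
          linarith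
  haveI : Countable L.toAddSubgroup := (inferInstance : Countable L)
  obtain ⟨x, hx0, hxs⟩ := exists_ne_zero_mem_lattice_of_measure_mul_two_pow_lt_measure
    fund h_symm (convex_box R S) hvol
  refine ⟨(x : E2), SetLike.coe_mem _, ?_, hxs.1, hxs.2⟩
  simpa using hx0


set_option maxHeartbeats 1000000 in
lemma lower_bound (L : Submodule ℤ E2) [DiscreteTopology L] [IsZLattice ℝ L]
    {C : ℝ} (hC : 0 < C) (hadm' : ∀ l ∈ L, l ≠ 0 → C ≤ |l 0 * l 1|) :
    ∃ D > 0, ∀ᶠ t : ℝ in atTop, (1 / D) * Real.log t ≤ Vsum L t := by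
  classical
  obtain ⟨d, hd, hmk⟩ := minkowski_box L
  have hCd : C ≤ d := by
    obtain ⟨l, hlL, hl0, h0, h1⟩ := hmk 1 one_pos
    calc C ≤ |l 0 * l 1| := hadm' l hlL hl0
      _ = |l 0| * |l 1| := abs_mul _ _
      _ ≤ 1 * (d / 1) := mul_le_mul h0 h1 (abs_nonneg _) one_pos.le
      _ = d := by ring
  set ρ := 2 * d / C with hρdef
  have hρ2 : 2 ≤ ρ := by
    rw [hρdef, le_div_iff₀ hC]
    linarith
  have hρ1 : (1:ℝ) < ρ := by linarith
  have hρ0 : (0:ℝ) < ρ := by linarith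
  have hlogρ : 0 < Real.log ρ := Real.log_pos hρ1
  have hCρ : C * ρ = 2 * d := by
    rw [hρdef]
    field_simp
  have hpt : ∀ k : ℕ, ∃ l, l ∈ L ∧ l ≠ 0 ∧ |l 0| ≤ ρ^k ∧ |l 1| ≤ d / ρ^k :=
    fun k => hmk (ρ^k) (by positivity)
  choose p hpL hp0 hpc0 hpc1 using hpt
  have hq : ∀ k, C ≤ |p k 0| * |p k 1| := by
    intro k
    rw [← abs_mul]
    exact hadm' _ (hpL k) (hp0 k)
  have hp1pos : ∀ k, 0 < |p k 1| := by
    intro k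
    rcases (abs_nonneg (p k 1)).lt_or_eq with h | h
    · exact h
    · exfalso
      have h2 := hq k
      rw [← h, mul_zero] at h2
      linarith
  have hqd : ∀ k, |p k 0| * |p k 1| ≤ d := by
    intro k
    calc |p k 0| * |p k 1| ≤ ρ^k * (d / ρ^k) :=
          mul_le_mul (hpc0 k) (hpc1 k) (abs_nonneg _) (by positivity)
      _ = d := by field_simp
  have hsep : ∀ k m : ℕ, k < m → p k ≠ p m := by
    intro k m hkm heq
    have h1 : C / |p m 1| ≤ |p m 0| := (div_le_iff₀ (hp1pos m)).2 (by linarith [hq m, mul_comm (|p m 0|) (|p m 1|)])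
    have h2 : C * ρ^m / d ≤ C / |p m 1| := by
      rw [div_le_div_iff₀ hd (hp1pos m)]
      have := hpc1 m
      have hpk : (0:ℝ) < ρ^m := by positivity
      calc C * ρ^m * |p m 1| ≤ C * ρ^m * (d / ρ^m) := by
            gcongr
        _ = C * d := by field_simp
    have h3 : ρ^k < C * ρ^m / d := by
      have hm : ρ^(k+1) ≤ ρ^m := pow_le_pow_right₀ hρ1.le hkm
      have h4 : C * ρ^(k+1) / d ≤ C * ρ^m / d := by gcongr
      have h5 : C * ρ^(k+1) / d = 2 * ρ^k := by
        rw [pow_succ]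
        rw [show C * (ρ^k * ρ) = C * ρ * ρ^k by ring, hCρ]
        field_simp
      have hpk : (0:ℝ) < ρ^k := by positivity
      calc ρ^k < 2 * ρ^k := by linarith
        _ = C * ρ^(k+1) / d := h5.symm
        _ ≤ C * ρ^m / d := h4
    have : |p m 0| ≤ ρ^k := heq ▸ hpc0 k
    linarith [h1, h2, h3, this]
  -- Now the eventual bound
  refine ⟨4 * d^2 * Real.log ρ, mul_pos (by positivity) hlogρ, ?_⟩
  have hev : ∀ᶠ t : ℝ in atTop,
      t ≥ Real.exp (4 * Real.log ρ) ∧ t ≥ (1+d)^2 ∧ t ≥ 1 :=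
    (eventually_ge_atTop _).and ((eventually_ge_atTop _).and (eventually_ge_atTop _))
  filter_upwards [hev] with t ⟨hte, htd, ht1⟩
  have ht0 : (0:ℝ) < t := by linarith
  have hlt : 4 * Real.log ρ ≤ Real.log t := by
    calc 4 * Real.log ρ = Real.log (Real.exp (4 * Real.log ρ)) := (Real.log_exp _).symm
      _ ≤ Real.log t := Real.log_le_log (Real.exp_pos _) hte
  set u := Real.log t / (2 * Real.log ρ) with hudef
  have hu2 : 2 ≤ u := by
    rw [hudef, le_div_iff₀ (by positivity)]
    linarith
  set K := Nat.floor u with hKdef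
  have hKu : (K:ℝ) ≤ u := Nat.floor_le (by linarith)
  have hKgt : u - 1 < (K:ℝ) := Nat.sub_one_lt_floor u
  have hKlb : Real.log t / (4 * Real.log ρ) ≤ (K:ℝ) := by
    have : Real.log t / (4 * Real.log ρ) = u / 2 := by
      rw [hudef]; ring
    rw [this]
    linarith
  -- membership of points
  have hmem : ∀ k < K, p k ∈ SF L t := by
    intro k hk
    refine mem_SF.2 ⟨hpL k, norm_pos_iff.2 (hp0 k), ?_⟩
    have hku : (k:ℝ) ≤ u := le_trans (by exact_mod_cast hk.le) hKu
    have hρk : ρ^k ≤ Real.sqrt t := by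
      have hkl : (k:ℝ) * Real.log ρ ≤ u * Real.log ρ := by gcongr
      have hsq : (ρ^k)^2 ≤ t := by
        have hlog : Real.log ((ρ^k)^2) ≤ Real.log t := by
          rw [← pow_mul, Real.log_pow]
          push_cast
          calc (k:ℝ) * 2 * Real.log ρ = 2 * ((k:ℝ) * Real.log ρ) := by ring
            _ ≤ 2 * (u * Real.log ρ) := by linarith
            _ = Real.log t := by rw [hudef]; field_simp
        exact (Real.log_le_log_iff (by positivity) ht0).1 hlog
      calc ρ^k = Real.sqrt ((ρ^k)^2) := (Real.sqrt_sq (by positivity)).symm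
        _ ≤ Real.sqrt t := Real.sqrt_le_sqrt hsq
    have h1d : 1 + d ≤ Real.sqrt t := by
      calc 1 + d = Real.sqrt ((1+d)^2) := by rw [Real.sqrt_sq (by positivity)]
        _ ≤ Real.sqrt t := Real.sqrt_le_sqrt htd
    have hρk1 : (1:ℝ) ≤ ρ^k := one_le_pow₀ hρ1.le
    calc ‖p k‖ ≤ |p k 0| + |p k 1| := norm_le_add _
      _ ≤ ρ^k + d / ρ^k := add_le_add (hpc0 k) (hpc1 k)
      _ ≤ ρ^k + d := by
          have : d / ρ^k ≤ d := by
            rw [div_le_iff₀ (by positivity)]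
            nlinarith
          linarith
      _ ≤ ρ^k * (1 + d) := by nlinarith
      _ ≤ Real.sqrt t * Real.sqrt t := by
          apply mul_le_mul hρk h1d (by positivity) (Real.sqrt_nonneg t)
      _ = t := Real.mul_self_sqrt ht0.le
  set T := (Finset.range K).image p with hTdef
  have hTsub : T ⊆ SF L t := by
    intro l hl
    obtain ⟨k, hk, rfl⟩ := Finset.mem_image.1 hl
    exact hmem k (Finset.mem_range.1 hk)
  have hTcard : T.card = K := by
    rw [hTdef, Finset.card_image_of_injOn, Finset.card_range]
    intro k hk m hm hkm
    rcases lt_trichotomy k m with h | h | h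
    · exact absurd hkm (hsep k m h)
    · exact h
    · exact absurd hkm.symm (hsep m k h)
  have hfT : ∀ l ∈ T, 1/d^2 ≤ f l := by
    intro l hl
    obtain ⟨k, _, rfl⟩ := Finset.mem_image.1 hl
    have h1 : (p k 0)^2 * (p k 1)^2 ≤ d^2 := by
      have : (|p k 0| * |p k 1|)^2 ≤ d^2 := by
        have h0 := hq k
        nlinarith [hqd k]
      calc (p k 0)^2 * (p k 1)^2 = (|p k 0| * |p k 1|)^2 := by
            rw [mul_pow, sq_abs, sq_abs]
        _ ≤ d^2 := this
    have h2 : 0 < (p k 0)^2 * (p k 1)^2 := by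
      have := hq k
      have h0 : 0 < |p k 0| := by
        rcases (abs_nonneg (p k 0)).lt_or_eq with h | h
        · exact h
        · exfalso; nlinarith [hq k, hp1pos k]
      have h1p := hp1pos k
      have : 0 < |p k 0|^2 * |p k 1|^2 := by positivity
      simpa [sq_abs] using this
    exact one_div_le_one_div_of_le h2 h1
  have hd0 : d ≠ 0 := hd.ne'
  have hl0 : Real.log ρ ≠ 0 := hlogρ.ne'
  calc (1 / (4 * d^2 * Real.log ρ)) * Real.log t
      = Real.log t / (4 * Real.log ρ) * (1/d^2) := by ring
    _ ≤ (K:ℝ) * (1/d^2) := by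
        have hd2 : (0:ℝ) < 1/d^2 := by positivity
        nlinarith [hKlb]
    _ ≤ ∑ l ∈ T, f l := by
        have := Finset.card_nsmul_le_sum T f (1/d^2) hfT
        rw [hTcard] at this
        simpa [nsmul_eq_mul] using this
    _ ≤ ∑ l ∈ SF L t, f l :=
        Finset.sum_le_sum_of_subset_of_nonneg hTsub (fun l _ _ => f_nonneg l)
    _ = Vsum L t := (Vsum_eq_sum L t).symm


/-- Dyadic address of a lattice point. -/
noncomputable def dyad (C : ℝ) (l : E2) : ℤ × ℕ :=
  (Int.log 2 |l 0|, (Int.log 2 (|l 0 * l 1| / C)).toNat)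

set_option maxHeartbeats 1600000 in
lemma fiber_sum_le (L : Submodule ℤ E2) [DiscreteTopology L]
    {C : ℝ} (hC : 0 < C) (hadm' : ∀ l ∈ L, l ≠ 0 → C ≤ |l 0 * l 1|)
    (t : ℝ) (a : ℤ) (j : ℕ) :
    ∑ l ∈ (SF L t).filter (fun l => dyad C l = (a, j)), f l ≤ (8 / C^2) * (1/2)^j := by
  classical
  set G := (SF L t).filter (fun l => dyad C l = (a, j)) with hG
  set X := (2:ℝ)^a with hX
  have hXpos : (0:ℝ) < X := zpow_pos two_pos a
  set A := C * 2^j with hA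
  have hApos : (0:ℝ) < A := by positivity
  have h2j : (0:ℝ) < 2^j := by positivity
  -- basic membership facts
  have hfact : ∀ l ∈ G, l ∈ L ∧ l ≠ 0 ∧ X ≤ |l 0| ∧ |l 0| < 2*X ∧
      A ≤ |l 0| * |l 1| ∧ |l 0| * |l 1| < 2*A := by
    intro l hl
    rw [hG, Finset.mem_filter] at hl
    obtain ⟨hlS, hld⟩ := hl
    obtain ⟨hlL, hln, hlt⟩ := mem_SF.1 hlS
    have hlne : l ≠ 0 := norm_pos_iff.1 hln
    have hq : C ≤ |l 0 * l 1| := hadm' l hlL hlne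
    have hqq : C ≤ |l 0| * |l 1| := by rwa [abs_mul] at hq
    have h0pos : 0 < |l 0| := by
      rcases (abs_nonneg (l 0)).lt_or_eq with h | h
      · exact h
      · exfalso
        rw [← h, zero_mul] at hqq
        linarith
    have hda : Int.log 2 |l 0| = a := congrArg Prod.fst hld
    have hdj : (Int.log 2 (|l 0 * l 1| / C)).toNat = j := congrArg Prod.snd hld
    have hrpos : 0 < |l 0 * l 1| / C := div_pos (lt_of_lt_of_le hC hq) hC
    have hr1 : (1:ℝ) ≤ |l 0 * l 1| / C := by
      rw [le_div_iff₀ hC, one_mul]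
      exact hq
    have hlognn : 0 ≤ Int.log 2 (|l 0 * l 1| / C) := by
      have := Int.log_mono_right (b := 2) one_pos hr1
      rwa [Int.log_one_right] at this
    have hdjz : Int.log 2 (|l 0 * l 1| / C) = (j:ℤ) := by
      rw [← hdj, Int.toNat_of_nonneg hlognn]
    refine ⟨hlL, hlne, ?_, ?_, ?_, ?_⟩
    · have := Int.zpow_log_le_self (b := 2) one_lt_two h0pos
      rwa [hda] at this
    · have := Int.lt_zpow_succ_log_self (b := 2) one_lt_two |l 0|
      rw [hda] at this
      calc |l 0| < (2:ℝ)^(a+1) := by exact_mod_cast this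
        _ = 2*X := by rw [hX, zpow_add_one₀ (two_ne_zero)]; ring
    · have := Int.zpow_log_le_self (b := 2) one_lt_two hrpos
      rw [hdjz] at this
      have h2 : (2:ℝ)^(j:ℤ) ≤ |l 0 * l 1| / C := by exact_mod_cast this
      rw [zpow_natCast] at h2
      rw [le_div_iff₀ hC] at h2
      calc A = C * 2^j := hA
        _ = 2^j * C := mul_comm _ _
        _ ≤ |l 0 * l 1| := h2
        _ = |l 0| * |l 1| := abs_mul _ _
    · have := Int.lt_zpow_succ_log_self (b := 2) one_lt_two (|l 0 * l 1| / C)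
      rw [hdjz] at this
      have h2 : |l 0 * l 1| / C < (2:ℝ)^((j:ℤ)+1) := by exact_mod_cast this
      rw [show ((j:ℤ)+1) = ((j+1:ℕ):ℤ) by push_cast; ring, zpow_natCast, pow_succ] at h2
      rw [div_lt_iff₀ hC] at h2
      calc |l 0| * |l 1| = |l 0 * l 1| := (abs_mul _ _).symm
        _ < 2^j * 2 * C := h2
        _ = 2*A := by rw [hA]; ring
  -- coordinates are nonzero and second coordinate bounds
  have hcoord : ∀ l ∈ G, 0 < |l 0| ∧ 0 < |l 1| ∧
      A/(2*X) < |l 1| ∧ |l 1| < 2*A/X := by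
    intro l hl
    obtain ⟨_, _, h1, h2, h3, h4⟩ := hfact l hl
    have h0pos : 0 < |l 0| := lt_of_lt_of_le hXpos h1
    have h1pos : 0 < |l 1| := by
      rcases (abs_nonneg (l 1)).lt_or_eq with h | h
      · exact h
      · exfalso
        rw [← h, mul_zero] at h3
        linarith
    refine ⟨h0pos, h1pos, ?_, ?_⟩
    · rw [div_lt_iff₀ (by positivity)]
      calc A ≤ |l 0| * |l 1| := h3
        _ < (2*X) * |l 1| := by nlinarith
        _ = |l 1| * (2*X) := mul_comm _ _
    · rw [lt_div_iff₀ hXpos]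
      calc |l 1| * X ≤ |l 1| * |l 0| := by exact mul_le_mul_of_nonneg_left h1 (abs_nonneg _)
        _ = |l 0| * |l 1| := mul_comm _ _
        _ < 2*A := h4
  -- the injection
  set ψ : E2 → Bool × Bool × ℕ := fun l =>
    (decide (0 < l 0), decide (0 < l 1), Nat.floor ((|l 1| - A/(2*X)) / (C/X))) with hψ
  have hCX : (0:ℝ) < C/X := by positivity
  have hcard : G.card ≤ 4 * (2 * 2^j) := by
    have hmapsto : ∀ l ∈ G, ψ l ∈
        (Finset.univ : Finset Bool) ×ˢ ((Finset.univ : Finset Bool) ×ˢ Finset.range (2 * 2^j)) := by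
      intro l hl
      obtain ⟨h0pos, h1pos, hlo, hhi⟩ := hcoord l hl
      have hu0 : 0 ≤ (|l 1| - A/(2*X)) / (C/X) := by
        apply div_nonneg _ hCX.le
        linarith
      have huu : (|l 1| - A/(2*X)) / (C/X) < (2 * 2^j : ℕ) := by
        push_cast
        rw [div_lt_iff₀ hCX]
        have e1 : (2:ℝ) * 2^j * (C/X) = 2*A/X := by
          rw [hA]; field_simp
        rw [e1]
        have : A/(2*X) > 0 := by positivity
        have h2 : |l 1| < 2*A/X := hhi
        have h3 : (0:ℝ) < A/(2*X) := by positivity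
        linarith
      simp only [Finset.mem_product, Finset.mem_univ, Finset.mem_range, true_and, hψ]
      exact Nat.floor_lt hu0 |>.2 huu
    have hinj : Set.InjOn ψ G := by
      intro l hl l' hl' heq
      by_contra hne
      obtain ⟨hlL, hlne, ha1, ha2, ha3, ha4⟩ := hfact l hl
      obtain ⟨hb1, hb2, hb3, hb4⟩ := hcoord l hl
      obtain ⟨hcL, hcne, hc1, hc2, hc3, hc4⟩ := hfact l' hl'
      obtain ⟨hd1, hd2, hd3, hd4⟩ := hcoord l' hl'
      have hs0 : decide (0 < l 0) = decide (0 < l' 0) := congrArg Prod.fst heq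
      have hs1 : decide (0 < l 1) = decide (0 < l' 1) := congrArg Prod.fst (congrArg Prod.snd heq)
      have hfl : Nat.floor ((|l 1| - A/(2*X)) / (C/X)) =
          Nat.floor ((|l' 1| - A/(2*X)) / (C/X)) := congrArg Prod.snd (congrArg Prod.snd heq)
      -- same-sign difference bound on coordinate 0
      have habs0 : |l 0 - l' 0| < X := by
        have hne0 : l 0 ≠ 0 := abs_pos.1 hb1
        have hne0' : l' 0 ≠ 0 := abs_pos.1 hd1
        by_cases hpos : 0 < l 0
        · have hpos' : 0 < l' 0 := by
            have := hs0
            rw [decide_eq_true hpos] at this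
            exact of_decide_eq_true this.symm
          rw [abs_of_pos hpos] at ha1 ha2
          rw [abs_of_pos hpos'] at hc1 hc2
          rw [abs_lt]; constructor <;> linarith
        · have hneg : l 0 < 0 := (hne0.lt_or_gt).resolve_right hpos
          have hneg' : l' 0 < 0 := by
            rcases hne0'.lt_or_gt with h | h
            · exact h
            · exfalso
              have := hs0
              rw [decide_eq_false hpos, decide_eq_true h] at this
              exact Bool.false_ne_true this
          rw [abs_of_neg hneg] at ha1 ha2
          rw [abs_of_neg hneg'] at hc1 hc2
          rw [abs_lt]; constructor <;> linarith
      -- floor bin gives second coordinate closeness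
      have habs1 : |l 1 - l' 1| < C/X := by
        set u := (|l 1| - A/(2*X)) / (C/X) with hu
        set u' := (|l' 1| - A/(2*X)) / (C/X) with hu'
        have hu0 : 0 ≤ u := by
          apply div_nonneg _ hCX.le
          linarith
        have hu0' : 0 ≤ u' := by
          apply div_nonneg _ hCX.le
          linarith
        have hd : |u - u'| < 1 := by
          rw [abs_sub_lt_iff]
          constructor
          · calc u - u' < (Nat.floor u + 1) - Nat.floor u' := by
                  have e1 : u < Nat.floor u + 1 := Nat.lt_floor_add_one u
                  have e2 : (Nat.floor u' : ℝ) ≤ u' := Nat.floor_le hu0'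
                  linarith
              _ = 1 := by rw [hfl]; ring
          · calc u' - u < (Nat.floor u' + 1) - Nat.floor u := by
                  have e1 : u' < Nat.floor u' + 1 := Nat.lt_floor_add_one u'
                  have e2 : (Nat.floor u : ℝ) ≤ u := Nat.floor_le hu0
                  linarith
              _ = 1 := by rw [hfl]; ring
        have habs : |(|l 1|) - (|l' 1|)| < C/X := by
          have e1 : |l 1| - |l' 1| = (u - u') * (C/X) := by
            rw [hu, hu']
            field_simp
            ring
          rw [e1, abs_mul, abs_of_pos hCX]
          calc |u - u'| * (C/X) < 1 * (C/X) := by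
                exact mul_lt_mul_of_pos_right hd hCX
            _ = C/X := one_mul _
        -- same sign on coordinate 1
        have hne1 : l 1 ≠ 0 := abs_pos.1 hb2
        have hne1' : l' 1 ≠ 0 := abs_pos.1 hd2
        by_cases hpos : 0 < l 1
        · have hpos' : 0 < l' 1 := by
            have := hs1
            rw [decide_eq_true hpos] at this
            exact of_decide_eq_true this.symm
          rwa [abs_of_pos hpos, abs_of_pos hpos'] at habs
        · have hneg : l 1 < 0 := (hne1.lt_or_gt).resolve_right hpos
          have hneg' : l' 1 < 0 := by
            rcases hne1'.lt_or_gt with h | h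
            · exact h
            · exfalso
              have := hs1
              rw [decide_eq_false hpos, decide_eq_true h] at this
              exact Bool.false_ne_true this
          rw [abs_of_neg hneg, abs_of_neg hneg'] at habs
          rw [show l 1 - l' 1 = -(-(l 1) - -(l' 1)) by ring, abs_neg]
          exact habs
      -- contradiction with admissibility applied to the difference
      have hδL : l - l' ∈ L := sub_mem hlL hcL
      have hδne : l - l' ≠ 0 := sub_ne_zero.2 hne
      have hδ := hadm' _ hδL hδne
      have hδ0 : (l - l') 0 = l 0 - l' 0 := rfl
      have hδ1 : (l - l') 1 = l 1 - l' 1 := rfl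
      rw [abs_mul, hδ0, hδ1] at hδ
      have : |l 0 - l' 0| * |l 1 - l' 1| < C := by
        calc |l 0 - l' 0| * |l 1 - l' 1| ≤ |l 0 - l' 0| * (C/X) := by
              exact mul_le_mul_of_nonneg_left habs1.le (abs_nonneg _)
          _ < X * (C/X) := by exact mul_lt_mul_of_pos_right habs0 hCX
          _ = C := by field_simp
      linarith
    have := Finset.card_le_card_of_injOn ψ hmapsto hinj
    calc G.card ≤ _ := this
      _ = 4 * (2 * 2^j) := by
        rw [Finset.card_product, Finset.card_product, Finset.card_range,
          Finset.card_univ, Fintype.card_bool]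
        ring
  -- each term is at most 1/A^2
  have hterm : ∀ l ∈ G, f l ≤ 1/A^2 := by
    intro l hl
    obtain ⟨_, _, _, _, h3, _⟩ := hfact l hl
    obtain ⟨h0pos, h1pos, _, _⟩ := hcoord l hl
    have he : (l 0)^2 * (l 1)^2 = (|l 0| * |l 1|)^2 := by
      rw [mul_pow, sq_abs, sq_abs]
    have hgt : A^2 ≤ (l 0)^2 * (l 1)^2 := by
      rw [he]
      have := mul_pos h0pos h1pos
      nlinarith
    have hpos2 : (0:ℝ) < A^2 := by positivity
    exact one_div_le_one_div_of_le hpos2 hgt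
  calc ∑ l ∈ G, f l ≤ G.card • (1/A^2) := Finset.sum_le_card_nsmul G f (1/A^2) hterm
    _ = (G.card : ℝ) * (1/A^2) := by rw [nsmul_eq_mul]
    _ ≤ (4 * (2 * 2^j) : ℕ) * (1/A^2) := by
        have : (0:ℝ) < 1/A^2 := by positivity
        have hc := hcard
        have : ((G.card : ℕ) : ℝ) ≤ ((4 * (2 * 2^j) : ℕ) : ℝ) := by exact_mod_cast hc
        nlinarith [this, sq_nonneg A]
    _ = (8 / C^2) * (1/2)^j := by
        push_cast
        rw [hA]
        have h2jne : (2:ℝ)^j ≠ 0 := ne_of_gt h2j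
        field_simp
        have h21 : (2:ℝ)^j * (1/2)^j = 1 := by rw [← mul_pow]; norm_num
        linear_combination (-8:ℝ) * h21


set_option maxHeartbeats 1600000 in
lemma upper_bound (L : Submodule ℤ E2) [DiscreteTopology L] [IsZLattice ℝ L]
    {C : ℝ} (hC : 0 < C) (hadm' : ∀ l ∈ L, l ≠ 0 → C ≤ |l 0 * l 1|) :
    ∃ D > 0, ∀ᶠ t : ℝ in atTop, Vsum L t ≤ D * Real.log t := by
  classical
  have hlog2 : 0 < Real.log 2 := Real.log_pos one_lt_two
  set m := max 0 (-Real.log C) with hm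
  have hm0 : 0 ≤ m := le_max_left _ _
  have hm1 : -Real.log C ≤ m := le_max_right _ _
  set B1 : ℝ := 2 / Real.log 2 + m / Real.log 2 + 3 with hB1
  have hB1pos : 0 < B1 := by positivity
  refine ⟨(16 / C^2) * B1, by positivity, ?_⟩
  filter_upwards [eventually_ge_atTop (2:ℝ), eventually_ge_atTop (Real.exp 1)] with t ht2 hte
  have ht0 : (0:ℝ) < t := by linarith
  have hlt1 : 1 ≤ Real.log t := by
    calc (1:ℝ) = Real.log (Real.exp 1) := (Real.log_exp 1).symm
      _ ≤ Real.log t := Real.log_le_log (Real.exp_pos 1) hte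
  have hltpos : 0 < Real.log t := by linarith
  rw [Vsum_eq_sum]
  set amin := Int.log 2 (C/t) with hamin
  set amax := Int.log 2 t with hamax
  set J := (Int.log 2 (t^2/C)).toNat with hJ
  set T2 := Finset.Icc amin amax ×ˢ Finset.range (J+1) with hT2
  have hmaps : ∀ l ∈ SF L t, dyad C l ∈ T2 := by
    intro l hl
    obtain ⟨hlL, hln, hlt⟩ := mem_SF.1 hl
    have hlne : l ≠ 0 := norm_pos_iff.1 hln
    have hq : C ≤ |l 0 * l 1| := hadm' l hlL hlne
    have hqq : C ≤ |l 0| * |l 1| := by rwa [abs_mul] at hq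
    have h0t : |l 0| ≤ t := (abs_coord_le_norm l 0).trans hlt
    have h1t : |l 1| ≤ t := (abs_coord_le_norm l 1).trans hlt
    have h0pos : 0 < |l 0| := by
      rcases (abs_nonneg (l 0)).lt_or_eq with h | h
      · exact h
      · exfalso
        rw [← h, zero_mul] at hqq
        linarith
    have hCt : C/t ≤ |l 0| := by
      rw [div_le_iff₀ ht0]
      calc C ≤ |l 0| * |l 1| := hqq
        _ ≤ |l 0| * t := by
            exact mul_le_mul_of_nonneg_left h1t (abs_nonneg _)
    rw [hT2, Finset.mem_product]
    constructor
    · rw [Finset.mem_Icc]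
      exact ⟨Int.log_mono_right (div_pos hC ht0) hCt, Int.log_mono_right h0pos h0t⟩
    · rw [Finset.mem_range]
      have hq2 : |l 0 * l 1| ≤ t^2 := by
        rw [abs_mul]
        calc |l 0| * |l 1| ≤ t * t := mul_le_mul h0t h1t (abs_nonneg _) ht0.le
          _ = t^2 := (sq t).symm
      have hmono : Int.log 2 (|l 0 * l 1| / C) ≤ Int.log 2 (t^2/C) := by
        apply Int.log_mono_right (div_pos (lt_of_lt_of_le hC hq) hC)
        gcongr
      have hle := Int.toNat_le_toNat hmono
      have hsnd : (dyad C l).2 = (Int.log 2 (|l 0 * l 1| / C)).toNat := rfl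
      rw [hsnd, hJ]
      omega
  have hcard : ((Finset.Icc amin amax).card : ℝ) ≤ B1 * Real.log t := by
    by_cases h : amin ≤ amax
    · have hc : (Finset.Icc amin amax).card = (amax + 1 - amin).toNat := Int.card_Icc _ _
      have hnn : (0:ℤ) ≤ amax + 1 - amin := by omega
      have hcast : ((Finset.Icc amin amax).card : ℝ) = (amax:ℝ) + 1 - (amin:ℝ) := by
        rw [hc]
        have h2 : (((amax + 1 - amin).toNat : ℤ) : ℝ) = ((amax + 1 - amin : ℤ) : ℝ) := by
          exact_mod_cast congrArg (fun z : ℤ => (z : ℝ)) (Int.toNat_of_nonneg hnn)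
        push_cast at h2 ⊢
        linarith
      rw [hcast]
      -- bound amax
      have hzle : (2:ℝ)^amax ≤ t := Int.zpow_log_le_self (b := 2) one_lt_two ht0
      have hamaxb : (amax:ℝ) * Real.log 2 ≤ Real.log t := by
        rw [← Real.log_zpow]
        exact Real.log_le_log (by positivity) hzle
      -- bound amin
      have hzlt : C/t < (2:ℝ)^(amin+1) := Int.lt_zpow_succ_log_self (b := 2) one_lt_two (C/t)
      have haminb : Real.log C - Real.log t < ((amin:ℝ)+1) * Real.log 2 := by
        have h3 := Real.log_lt_log (div_pos hC ht0) hzlt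
        rw [Real.log_div hC.ne' ht0.ne', Real.log_zpow] at h3
        push_cast at h3
        linarith
      have h1 : (amax:ℝ) ≤ Real.log t / Real.log 2 := (le_div_iff₀ hlog2).2 hamaxb
      have h2 : -(amin:ℝ) ≤ (Real.log t + m) / Real.log 2 + 1 := by
        rw [← sub_le_iff_le_add, le_div_iff₀ hlog2]
        have : Real.log C - Real.log t ≥ -m - Real.log t := by linarith
        nlinarith [haminb]
      have hgoal : (amax:ℝ) + 1 - (amin:ℝ) ≤ B1 * Real.log t := by
        rw [hB1]
        have e1 : (2 / Real.log 2 + m / Real.log 2 + 3) * Real.log t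
            = (2 * Real.log t) / Real.log 2 + (m / Real.log 2) * Real.log t + 3 * Real.log t := by
          field_simp
        rw [e1]
        have e2 : (m / Real.log 2) * 1 ≤ (m / Real.log 2) * Real.log t := by
          apply mul_le_mul_of_nonneg_left hlt1 (by positivity)
        have e3 : Real.log t / Real.log 2 + ((Real.log t + m) / Real.log 2 + 1) + 1
            ≤ (2 * Real.log t) / Real.log 2 + m / Real.log 2 + 2 := by
          have : (Real.log t + m) / Real.log 2 = Real.log t / Real.log 2 + m / Real.log 2 :=
            add_div _ _ _
          rw [this]
          have : (2 * Real.log t) / Real.log 2 = Real.log t / Real.log 2 + Real.log t / Real.log 2 := by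
            field_simp
            ring
          rw [this]
          linarith
        nlinarith [h1, h2, e2, e3, hltpos]
      exact hgoal
    · have hc : (Finset.Icc amin amax).card = 0 := by
        rw [Finset.Icc_eq_empty h, Finset.card_empty]
      rw [hc]
      push_cast
      positivity
  calc ∑ l ∈ SF L t, f l
      = ∑ p ∈ T2, ∑ l ∈ (SF L t).filter (fun l => dyad C l = p), f l :=
        (Finset.sum_fiberwise_of_maps_to hmaps f).symm
    _ ≤ ∑ p ∈ T2, (8 / C^2) * (1/2)^p.2 := by
        apply Finset.sum_le_sum
        intro p hp
        exact fiber_sum_le L hC hadm' t p.1 p.2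
    _ = ((Finset.Icc amin amax).card : ℝ) *
          ((8/C^2) * ∑ jj ∈ Finset.range (J+1), (1/2:ℝ)^jj) := by
        rw [hT2, Finset.sum_product]
        have einner : ∀ x : ℤ, ∑ y ∈ Finset.range (J + 1), (8 / C^2) * (1/2:ℝ)^((x, y).2)
            = (8/C^2) * ∑ jj ∈ Finset.range (J+1), (1/2:ℝ)^jj := by
          intro x
          rw [Finset.mul_sum]
        rw [Finset.sum_congr rfl (fun x _ => einner x), Finset.sum_const, nsmul_eq_mul]
    _ ≤ ((Finset.Icc amin amax).card : ℝ) * ((8/C^2) * 2) := by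
        apply mul_le_mul_of_nonneg_left _ (by positivity)
        apply mul_le_mul_of_nonneg_left _ (by positivity)
        exact sum_geometric_two_le _
    _ = (16/C^2) * ((Finset.Icc amin amax).card : ℝ) := by ring
    _ ≤ (16/C^2) * (B1 * Real.log t) := by
        apply mul_le_mul_of_nonneg_left hcard (by positivity)
    _ = ((16/C^2) * B1) * Real.log t := by ring

end VsumAux

/-- If `L` is an admissible lattice of `ℝ²`, then there is `D > 0` with
`(1/D) log t ≤ V(L,t) ≤ D log t` for all large `t`. -/
theorem Vsum_asymp_log (L : Submodule ℤ (EuclideanSpace ℝ (Fin 2)))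
    [DiscreteTopology L] [IsZLattice ℝ L]
    (hadm : ∃ C > 0, ∀ l ∈ L, l ≠ 0 → C ≤ |l 0 * l 1|) :
    ∃ D > 0, ∀ᶠ t : ℝ in atTop,
      (1 / D) * Real.log t ≤ Vsum L t ∧ Vsum L t ≤ D * Real.log t := by
  obtain ⟨C, hC, hadm'⟩ := hadm
  obtain ⟨D1, hD1, h1⟩ := VsumAux.lower_bound L hC hadm'
  obtain ⟨D2, hD2, h2⟩ := VsumAux.upper_bound L hC hadm'
  refine ⟨max D1 D2, lt_of_lt_of_le hD1 (le_max_left _ _), ?_⟩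
  filter_upwards [h1, h2, eventually_ge_atTop (1:ℝ)] with t hl hu ht1
  have hlog : 0 ≤ Real.log t := Real.log_nonneg ht1
  have hstep : (1 / max D1 D2) * Real.log t ≤ (1/D1) * Real.log t :=
    mul_le_mul_of_nonneg_right (one_div_le_one_div_of_le hD1 (le_max_left _ _)) hlog
  exact ⟨le_trans hstep hl,
    le_trans hu (mul_le_mul_of_nonneg_right (le_max_right _ _) hlog)⟩
end

section
/- For every C > 0 and A > 0, the integral of 1/(l₁³ l₂²) over the region {l ∈ ℝ² : A ≤ ‖l‖ ≤ T, l₁ > 0, l₂ > 0, l₁ l₂ ≥ C} is O(T) as T → ∞. -/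
set_option maxHeartbeats 1000000

open MeasureTheory Filter Real Asymptotics Set

lemma ptwise_bound {C : ℝ} (hC : 0 < C) {x y : ℝ} (hx : 0 < x) (hy : 0 < y)
    (hxy : C ≤ x * y) :
    1 / (x ^ 3 * y ^ 2) ≤ C ^ (-(3/2) : ℝ) * (x ^ (-(3/2) : ℝ) * y ^ (-(1/2) : ℝ)) := by
  have key : 1 / (x ^ 3 * y ^ 2)
      = (x * y) ^ (-(3/2) : ℝ) * (x ^ (-(3/2) : ℝ) * y ^ (-(1/2) : ℝ)) := by
    rw [Real.mul_rpow hx.le hy.le]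
    rw [show x ^ (-(3/2):ℝ) * y ^ (-(3/2):ℝ) * (x ^ (-(3/2) : ℝ) * y ^ (-(1/2) : ℝ))
        = (x ^ (-(3/2):ℝ) * x ^ (-(3/2):ℝ)) * (y ^ (-(3/2):ℝ) * y ^ (-(1/2):ℝ)) by ring]
    rw [← Real.rpow_add hx, ← Real.rpow_add hy]
    norm_num
    exact mul_comm _ _
  rw [key]
  exact mul_le_mul_of_nonneg_right
    (Real.rpow_le_rpow_of_nonpos hC hxy (by norm_num))
    (mul_nonneg (Real.rpow_nonneg hx.le _) (Real.rpow_nonneg hy.le _))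

/-- The integral of `1/(l₁³ l₂²)` over
`{l ∈ ℝ² : A ≤ ‖l‖ ≤ T, l₁ > 0, l₂ > 0, l₁ l₂ ≥ C}` is `O(T)` as `T → ∞`. -/
theorem integral_inv_cube_sq_isBigO (C A : ℝ) (hC : 0 < C) (hA : 0 < A) :
    (fun T : ℝ =>
      ∫ l in {l : EuclideanSpace ℝ (Fin 2) |
          A ≤ ‖l‖ ∧ ‖l‖ ≤ T ∧ 0 < l 0 ∧ 0 < l 1 ∧ C ≤ l 0 * l 1},
        1 / ((l 0) ^ 3 * (l 1) ^ 2)) =O[atTop] (fun T : ℝ => T) := by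
  set φ : ℝ × ℝ → EuclideanSpace ℝ (Fin 2) :=
    fun p => (MeasurableEquiv.toLp 2 (Fin 2 → ℝ))
      (MeasurableEquiv.finTwoArrow.symm p) with hφ
  have hφmp : MeasurePreserving φ volume volume :=
    ((EuclideanSpace.volume_preserving_symm_measurableEquiv_toLp (Fin 2)).symm).comp
      ((volume_preserving_finTwoArrow ℝ).symm)
  have hφemb : MeasurableEmbedding φ :=
    (MeasurableEquiv.finTwoArrow.symm.trans
      (MeasurableEquiv.toLp 2 (Fin 2 → ℝ))).measurableEmbedding
  have hφ0 : ∀ p : ℝ × ℝ, (φ p) 0 = p.1 := fun p => rfl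
  have hφ1 : ∀ p : ℝ × ℝ, (φ p) 1 = p.2 := fun p => rfl
  rw [Asymptotics.isBigO_iff]
  refine ⟨6 / C ^ 2, ?_⟩
  filter_upwards [eventually_ge_atTop (1 : ℝ), eventually_ge_atTop C] with T hT1 hTC
  have hT0 : (0 : ℝ) < T := lt_of_lt_of_le one_pos hT1
  set S : Set (EuclideanSpace ℝ (Fin 2)) :=
    {l | A ≤ ‖l‖ ∧ ‖l‖ ≤ T ∧ 0 < l 0 ∧ 0 < l 1 ∧ C ≤ l 0 * l 1} with hS
  set a : ℝ := C / (2 * T) with ha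
  have ha0 : 0 < a := div_pos hC (by linarith)
  -- transfer to ℝ × ℝ
  have heq : (∫ l in S, 1 / ((l 0) ^ 3 * (l 1) ^ 2))
      = ∫ p in φ ⁻¹' S, 1 / (p.1 ^ 3 * p.2 ^ 2) :=
    (hφmp.setIntegral_preimage_emb hφemb
      (fun l : EuclideanSpace ℝ (Fin 2) => 1 / ((l 0) ^ 3 * (l 1) ^ 2)) S).symm
  -- membership description of the preimage
  have hmem : ∀ p : ℝ × ℝ, p ∈ φ ⁻¹' S ↔
      A ≤ ‖φ p‖ ∧ ‖φ p‖ ≤ T ∧ 0 < p.1 ∧ 0 < p.2 ∧ C ≤ p.1 * p.2 := by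
    intro p
    simp only [mem_preimage, hS, mem_setOf_eq, hφ0, hφ1]
  -- the preimage is contained in a nice box
  have habs : ∀ p : ℝ × ℝ, |p.1| ≤ ‖φ p‖ ∧ |p.2| ≤ ‖φ p‖ := by
    intro p
    have hnrm : ‖φ p‖ = Real.sqrt (p.1 ^ 2 + p.2 ^ 2) := by
      rw [EuclideanSpace.norm_eq, Fin.sum_univ_two, hφ0, hφ1]
      simp [sq_abs]
    constructor
    · rw [hnrm, ← Real.sqrt_sq_eq_abs]
      exact Real.sqrt_le_sqrt (by nlinarith [sq_nonneg p.2])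
    · rw [hnrm, ← Real.sqrt_sq_eq_abs]
      exact Real.sqrt_le_sqrt (by nlinarith [sq_nonneg p.1])
  have hsub : φ ⁻¹' S ⊆ Ioi a ×ˢ Ioc 0 T := by
    intro p hp
    obtain ⟨hA', hle, hx, hy, hxy⟩ := (hmem p).1 hp
    have hxT : p.1 ≤ T := le_trans (le_abs_self _) (le_trans (habs p).1 hle)
    have hyT : p.2 ≤ T := le_trans (le_abs_self _) (le_trans (habs p).2 hle)
    refine ⟨?_, hy, hyT⟩
    have hxC : C / T ≤ p.1 := by
      rw [div_le_iff₀ hT0]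
      calc C ≤ p.1 * p.2 := hxy
        _ ≤ p.1 * T := by nlinarith
    have : a < C / T := by
      rw [ha, div_lt_div_iff₀ (by linarith) hT0]
      nlinarith
    exact lt_of_lt_of_le this hxC
  -- measurability of the preimage
  have hPm : MeasurableSet (φ ⁻¹' S) := by
    have hφm : Measurable φ := hφmp.measurable
    have : φ ⁻¹' S = ({p : ℝ × ℝ | A ≤ ‖φ p‖} ∩ {p | ‖φ p‖ ≤ T} ∩ {p | 0 < p.1}
        ∩ {p | 0 < p.2} ∩ {p | C ≤ p.1 * p.2}) := by
      ext p
      rw [hmem p]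
      simp only [mem_inter_iff, mem_setOf_eq]
      tauto
    rw [this]
    exact ((((measurableSet_le measurable_const hφm.norm).inter
      (measurableSet_le hφm.norm measurable_const)).inter
      (measurableSet_lt measurable_const measurable_fst)).inter
      (measurableSet_lt measurable_const measurable_snd)).inter
      (measurableSet_le measurable_const (measurable_fst.mul measurable_snd))
  have hboxm : MeasurableSet (Ioi a ×ˢ Ioc (0:ℝ) T) :=
    measurableSet_Ioi.prod measurableSet_Ioc
  -- the majorant and its integrability on the box
  set G : ℝ × ℝ → ℝ := fun p => p.1 ^ (-(3/2) : ℝ) * p.2 ^ (-(1/2) : ℝ) with hG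
  have hix : IntegrableOn (fun x : ℝ => x ^ (-(3/2) : ℝ)) (Ioi a) :=
    integrableOn_Ioi_rpow_of_lt (by norm_num) ha0
  have hiy : IntegrableOn (fun y : ℝ => y ^ (-(1/2) : ℝ)) (Ioc (0:ℝ) T) := by
    have := intervalIntegral.intervalIntegrable_rpow' (a := 0) (b := T)
      (r := -(1/2)) (by norm_num)
    rwa [intervalIntegrable_iff_integrableOn_Ioc_of_le hT0.le] at this
  have hiG : IntegrableOn (fun p : ℝ × ℝ => C ^ (-(3/2):ℝ) * G p)
      (Ioi a ×ˢ Ioc (0:ℝ) T) := by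
    have : IntegrableOn G (Ioi a ×ˢ Ioc (0:ℝ) T) := by
      rw [IntegrableOn, Measure.volume_eq_prod, ← Measure.prod_restrict]
      exact hix.mul_prod hiy
    exact this.const_mul _
  -- comparison
  have hcomp : (∫ p in φ ⁻¹' S, 1 / (p.1 ^ 3 * p.2 ^ 2))
      ≤ ∫ p in Ioi a ×ˢ Ioc (0:ℝ) T, C ^ (-(3/2):ℝ) * G p := by
    rw [← integral_indicator hPm, ← integral_indicator hboxm]
    have hGnn : ∀ p ∈ Ioi a ×ˢ Ioc (0:ℝ) T, 0 ≤ C ^ (-(3/2):ℝ) * G p := by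
      rintro ⟨x, y⟩ ⟨hx, hy⟩
      have hx0 : (0:ℝ) ≤ x := le_of_lt (lt_trans ha0 hx)
      have hy0 : (0:ℝ) ≤ y := hy.1.le
      exact mul_nonneg (Real.rpow_nonneg hC.le _)
        (mul_nonneg (Real.rpow_nonneg hx0 _) (Real.rpow_nonneg hy0 _))
    apply integral_mono_of_nonneg
    · filter_upwards with p
      apply indicator_nonneg
      intro q hq
      obtain ⟨_, _, hx, hy, _⟩ := (hmem q).1 hq
      positivity
    · rwa [integrable_indicator_iff hboxm]
    · filter_upwards with p
      by_cases hp : p ∈ φ ⁻¹' S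
      · rw [indicator_of_mem hp, indicator_of_mem (hsub hp)]
        obtain ⟨_, _, hx, hy, hxy⟩ := (hmem p).1 hp
        exact ptwise_bound hC hx hy hxy
      · rw [indicator_of_notMem hp]
        exact indicator_nonneg hGnn p
  -- value of the box integral
  have hval : (∫ p in Ioi a ×ˢ Ioc (0:ℝ) T, C ^ (-(3/2):ℝ) * G p) ≤ 6 / C ^ 2 * T := by
    rw [MeasureTheory.integral_const_mul]
    have hxval : (∫ x in Ioi a, x ^ (-(3/2) : ℝ)) = 2 * a ^ (-(1/2) : ℝ) := by
      rw [integral_Ioi_rpow_of_lt (by norm_num) ha0]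
      norm_num
      ring
    have hyval : (∫ y in Ioc (0:ℝ) T, y ^ (-(1/2) : ℝ)) = 2 * T ^ ((1/2) : ℝ) := by
      rw [← intervalIntegral.integral_of_le hT0.le,
        integral_rpow (Or.inl (by norm_num))]
      rw [Real.zero_rpow (by norm_num)]
      norm_num
      ring
    have hprod : (∫ p in Ioi a ×ˢ Ioc (0:ℝ) T, G p)
        = (∫ x in Ioi a, x ^ (-(3/2) : ℝ)) * ∫ y in Ioc (0:ℝ) T, y ^ (-(1/2) : ℝ) := by
      rw [hG, Measure.volume_eq_prod]
      exact setIntegral_prod_mul (fun x : ℝ => x ^ (-(3/2) : ℝ))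
        (fun y : ℝ => y ^ (-(1/2) : ℝ)) (Ioi a) (Ioc (0:ℝ) T)
    rw [hprod, hxval, hyval]
    -- now pure computation
    have ea : a ^ (-(1/2) : ℝ) = (2 * T) ^ ((1/2):ℝ) / C ^ ((1/2):ℝ) := by
      rw [ha, Real.rpow_neg ha0.le, ← Real.inv_rpow (div_pos hC (by linarith)).le,
        inv_div, Real.div_rpow (by linarith) hC.le]
    rw [ea]
    have e2T : (2 * T) ^ ((1/2):ℝ) = 2 ^ ((1/2):ℝ) * T ^ ((1/2):ℝ) :=
      Real.mul_rpow (by norm_num) hT0.le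
    have eTT : T ^ ((1/2):ℝ) * T ^ ((1/2):ℝ) = T := by
      rw [← Real.rpow_add hT0]; norm_num
    have eC : C ^ (-(3/2):ℝ) / C ^ ((1/2):ℝ) = (C ^ 2)⁻¹ := by
      rw [div_eq_mul_inv, ← Real.rpow_neg hC.le, ← Real.rpow_add hC,
        show (-(3/2) + -(1/2) : ℝ) = -(2:ℕ) by norm_num,
        Real.rpow_neg hC.le, Real.rpow_natCast]
    have h2 : (2:ℝ) ^ ((1/2):ℝ) ≤ 3 / 2 := by
      have h := Real.rpow_natCast ((2:ℝ) ^ ((1/2):ℝ)) 2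
      have hsq : ((2:ℝ) ^ ((1/2):ℝ)) ^ (2:ℕ) = 2 := by
        rw [← h, ← Real.rpow_mul (by norm_num)]
        norm_num
      nlinarith [Real.rpow_nonneg (by norm_num : (0:ℝ) ≤ 2) ((1/2):ℝ)]
    have hC2 : (0:ℝ) < C ^ 2 := by positivity
    calc C ^ (-(3/2):ℝ) * (2 * ((2 * T) ^ ((1/2):ℝ) / C ^ ((1/2):ℝ)) * (2 * T ^ ((1/2):ℝ)))
        = (C ^ (-(3/2):ℝ) / C ^ ((1/2):ℝ)) * 4 * (2 ^ ((1/2):ℝ))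
            * (T ^ ((1/2):ℝ) * T ^ ((1/2):ℝ)) := by
          rw [e2T]; ring
      _ = (C ^ 2)⁻¹ * 4 * (2 ^ ((1/2):ℝ)) * T := by rw [eC, eTT]
      _ ≤ (C ^ 2)⁻¹ * 4 * (3/2) * T := by
          exact mul_le_mul_of_nonneg_right
            (mul_le_mul_of_nonneg_left h2 (by positivity)) hT0.le
      _ = 6 / C ^ 2 * T := by field_simp; ring
  -- nonnegativity of the integral
  have hnn : 0 ≤ ∫ p in φ ⁻¹' S, 1 / (p.1 ^ 3 * p.2 ^ 2) := by
    apply setIntegral_nonneg hPm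
    intro p hp
    obtain ⟨_, _, hx, hy, _⟩ := (hmem p).1 hp
    positivity
  rw [Real.norm_of_nonneg (heq ▸ hnn), Real.norm_of_nonneg hT0.le, heq]
  exact le_trans hcomp hval
end

section
/- For every C > 0, A > 0 and α > 0, the integral of 1/(l₁² l₂²) over the region {l ∈ ℝ² : A ≤ ‖l‖ ≤ t, |l₁ l₂| ≥ C·(log ‖l‖)^{-1-α}} is O((log t)^{2+α}) as t → ∞. -/
open MeasureTheory Filter Real Asymptotics

open Set
open scoped ENNReal

namespace IntegralInvSqSq

noncomputable def ψ : (ℝ × ℝ) ≃ᵐ EuclideanSpace ℝ (Fin 2) :=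
  (MeasurableEquiv.finTwoArrow.symm.trans
    ((MeasurableEquiv.toLp 2 (Fin 2 → ℝ)).symm).symm)

lemma ψ_mp : MeasurePreserving (ψ : ℝ × ℝ → EuclideanSpace ℝ (Fin 2)) volume volume := by
  rw [show (⇑ψ : ℝ × ℝ → EuclideanSpace ℝ (Fin 2)) =
    ((MeasurableEquiv.toLp 2 (Fin 2 → ℝ)).symm).symm ∘ MeasurableEquiv.finTwoArrow.symm from rfl]
  exact ((EuclideanSpace.volume_preserving_symm_measurableEquiv_toLp (Fin 2)).symm).comp
    ((volume_preserving_finTwoArrow ℝ).symm _)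

lemma ψ_norm (p : ℝ × ℝ) : ‖ψ p‖ = Real.sqrt (p.1 ^ 2 + p.2 ^ 2) := by
  rw [EuclideanSpace.norm_eq]
  congr 1
  rw [Fin.sum_univ_two]
  norm_num
  rfl

noncomputable def fE : EuclideanSpace ℝ (Fin 2) → ℝ := fun l => 1 / ((l 0) ^ 2 * (l 1) ^ 2)

lemma fE_meas : Measurable fE := by
  have h0 : Measurable (fun l : EuclideanSpace ℝ (Fin 2) => l 0) :=
    (EuclideanSpace.proj (0 : Fin 2)).continuous.measurable
  have h1 : Measurable (fun l : EuclideanSpace ℝ (Fin 2) => l 1) :=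
    (EuclideanSpace.proj (1 : Fin 2)).continuous.measurable
  exact measurable_const.div ((h0.pow_const 2).mul (h1.pow_const 2))

lemma fE_nn (l : EuclideanSpace ℝ (Fin 2)) : 0 ≤ fE l := by
  unfold fE; positivity

def SS (C A α t : ℝ) : Set (EuclideanSpace ℝ (Fin 2)) :=
  {l | A ≤ ‖l‖ ∧ ‖l‖ ≤ t ∧ C * (Real.log ‖l‖) ^ (-1 - α) ≤ |l 0 * l 1|}

lemma lint_Ici_inv_sq {m : ℝ} (hm : 0 < m) :
    ∫⁻ y in Ici m, ENNReal.ofReal (1 / y ^ 2) = ENNReal.ofReal (1 / m) := by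
  rw [← setLIntegral_congr (Ioi_ae_eq_Ici (μ := volume) (a := m))]
  have hint : IntegrableOn (fun y : ℝ => y ^ (-2 : ℝ)) (Ioi m) :=
    integrableOn_Ioi_rpow_of_lt (by norm_num) hm
  have hcong : ∀ y ∈ Ioi m, y ^ (-2 : ℝ) = 1 / y ^ 2 := by
    intro y hy
    have hy0 : (0:ℝ) < y := hm.trans hy
    rw [Real.rpow_neg hy0.le, Real.rpow_two, one_div]
  have hint' : IntegrableOn (fun y : ℝ => 1 / y ^ 2) (Ioi m) :=
    hint.congr_fun hcong measurableSet_Ioi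
  rw [← ofReal_integral_eq_lintegral_ofReal hint'
      (ae_of_all _ fun y => by positivity)]
  congr 1
  rw [← setIntegral_congr_fun measurableSet_Ioi hcong,
    integral_Ioi_rpow_of_lt (by norm_num) hm]
  rw [show (-2 : ℝ) + 1 = -1 by norm_num, Real.rpow_neg_one]
  field_simp

lemma lint_abs_ge_inv_sq {m : ℝ} (hm : 0 < m) :
    ∫⁻ y in {y : ℝ | m ≤ |y|}, ENNReal.ofReal (1 / y ^ 2) ≤ ENNReal.ofReal (2 / m) := by
  have hsub : {y : ℝ | m ≤ |y|} ⊆ Iic (-m) ∪ Ici m := by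
    intro y hy
    simp only [mem_setOf_eq] at hy
    rcases le_or_gt 0 y with h | h
    · right; rw [mem_Ici]; rwa [abs_of_nonneg h] at hy
    · left; rw [mem_Iic]; rw [abs_of_neg h] at hy; linarith
  calc ∫⁻ y in {y : ℝ | m ≤ |y|}, ENNReal.ofReal (1 / y ^ 2)
      ≤ ∫⁻ y in Iic (-m) ∪ Ici m, ENNReal.ofReal (1 / y ^ 2) := lintegral_mono_set hsub
    _ ≤ (∫⁻ y in Iic (-m), ENNReal.ofReal (1 / y ^ 2))
        + ∫⁻ y in Ici m, ENNReal.ofReal (1 / y ^ 2) := lintegral_union_le _ _ _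
    _ = ENNReal.ofReal (1 / m) + ENNReal.ofReal (1 / m) := by
        rw [lint_Ici_inv_sq hm]
        congr 1
        have hneg : (Neg.neg : ℝ → ℝ) ⁻¹' (Iic (-m)) = Ici m := by
          ext y; simp
        have key := (Measure.measurePreserving_neg (volume : Measure ℝ)).setLIntegral_comp_preimage_emb
          (Homeomorph.neg ℝ).measurableEmbedding (fun y => ENNReal.ofReal (1 / y ^ 2)) (Iic (-m))
        rw [hneg] at key
        rw [← key]
        simp only [neg_sq]
        exact lint_Ici_inv_sq hm
    _ = ENNReal.ofReal (2 / m) := by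
        rw [← ENNReal.ofReal_add (by positivity) (by positivity)]; ring_nf

lemma contOn_log2x {α t : ℝ} (hα : 0 < α) :
    ContinuousOn (fun x : ℝ => (Real.log (2 * x)) ^ ((1:ℝ) + α) / x) (Icc 1 t) := by
  apply ContinuousOn.div
  · apply ContinuousOn.rpow_const
    · exact Real.continuousOn_log.comp (continuousOn_const.mul continuousOn_id)
        (fun x hx => by simp only [mem_compl_iff, mem_singleton_iff]; intro h; nlinarith [hx.1])
    · intro x hx; right; positivity
  · exact continuousOn_id
  · intro x hx; nlinarith [hx.1]

lemma hasDeriv_log2x_rpow {α x : ℝ} (hα : 0 < α) (hx : 1 ≤ x) :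
    HasDerivAt (fun u : ℝ => (Real.log (2 * u)) ^ ((2:ℝ) + α))
      (((2:ℝ) + α) * (Real.log (2 * x)) ^ ((1:ℝ) + α) / x) x := by
  have hx0 : (0:ℝ) < x := lt_of_lt_of_le one_pos hx
  have hlog : (0:ℝ) < Real.log (2 * x) := by
    apply Real.log_pos; nlinarith
  have h1 : HasDerivAt (fun u : ℝ => Real.log (2 * u)) (1 / x) x := by
    have h2 : HasDerivAt (fun u : ℝ => 2 * u) 2 x := by
      simpa using (hasDerivAt_id x).const_mul 2
    have := (Real.hasDerivAt_log (by positivity)).comp x h2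
    refine this.congr_deriv ?_
    field_simp
  have h3 := (Real.hasDerivAt_rpow_const (p := (2:ℝ) + α) (Or.inl hlog.ne')).comp x h1
  refine h3.congr_deriv ?_
  rw [show (2:ℝ) + α - 1 = 1 + α by ring]
  ring

lemma lint_Icc_log_rpow_div {α C : ℝ} (hα : 0 < α) (hC : 0 < C) {t : ℝ} (ht : 1 ≤ t) :
    ∫⁻ x in Icc 1 t, ENNReal.ofReal ((2 / C) * ((Real.log (2 * x)) ^ ((1:ℝ) + α) / x))
      ≤ ENNReal.ofReal ((2 / C) * ((Real.log (2 * t)) ^ ((2:ℝ) + α) / (2 + α))) := by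
  have hcont : ContinuousOn (fun x : ℝ => (2 / C) * ((Real.log (2 * x)) ^ ((1:ℝ) + α) / x))
      (Icc 1 t) := continuousOn_const.mul (contOn_log2x hα)
  have hint : IntegrableOn (fun x : ℝ => (2 / C) * ((Real.log (2 * x)) ^ ((1:ℝ) + α) / x))
      (Icc 1 t) := hcont.integrableOn_Icc
  have hnn : ∀ x ∈ Icc (1:ℝ) t, 0 ≤ (2 / C) * ((Real.log (2 * x)) ^ ((1:ℝ) + α) / x) := by
    intro x hx
    have hx1 : (1:ℝ) ≤ x := hx.1
    have : (0:ℝ) ≤ Real.log (2 * x) := Real.log_nonneg (by nlinarith)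
    positivity
  rw [← ofReal_integral_eq_lintegral_ofReal hint
      ((ae_restrict_iff' measurableSet_Icc).2 (ae_of_all _ hnn))]
  apply ENNReal.ofReal_le_ofReal
  rw [MeasureTheory.integral_Icc_eq_integral_Ioc, ← intervalIntegral.integral_of_le ht]
  have hca : ((2:ℝ) + α) ≠ 0 := by positivity
  have hderiv : ∀ x ∈ uIcc (1:ℝ) t,
      HasDerivAt (fun u : ℝ => (Real.log (2 * u)) ^ ((2:ℝ) + α) / (2 + α))
        ((Real.log (2 * x)) ^ ((1:ℝ) + α) / x) x := by
    intro x hx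
    rw [uIcc_of_le ht] at hx
    have hx0 : x ≠ 0 := by have := hx.1; intro h; rw [h] at this; linarith
    have := (hasDeriv_log2x_rpow (α := α) hα hx.1).div_const (2 + α)
    refine this.congr_deriv ?_
    field_simp
  have hci : IntervalIntegrable (fun x : ℝ => (Real.log (2 * x)) ^ ((1:ℝ) + α) / x)
      volume 1 t := by
    apply ContinuousOn.intervalIntegrable
    rw [uIcc_of_le ht]
    exact contOn_log2x hα
  have key := intervalIntegral.integral_eq_sub_of_hasDerivAt hderiv hci
  calc ∫ x in (1:ℝ)..t, 2 / C * ((Real.log (2 * x)) ^ ((1:ℝ) + α) / x)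
      = (2 / C) * ((Real.log (2 * t)) ^ ((2:ℝ) + α) / (2 + α)
          - (Real.log (2 * 1)) ^ ((2:ℝ) + α) / (2 + α)) := by
        rw [intervalIntegral.integral_const_mul, key]
    _ ≤ (2 / C) * ((Real.log (2 * t)) ^ ((2:ℝ) + α) / (2 + α)) := by
        have h0 : (0:ℝ) ≤ (Real.log (2 * 1)) ^ ((2:ℝ) + α) / (2 + α) := by
          have : (0:ℝ) ≤ Real.log (2 * 1) := Real.log_nonneg (by norm_num)
          positivity
        have h2C : (0:ℝ) ≤ 2 / C := by positivity
        nlinarith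

lemma meas_f2 : Measurable (fun p : ℝ × ℝ => ENNReal.ofReal (1 / (p.1 ^ 2 * p.2 ^ 2))) := by
  apply ENNReal.measurable_ofReal.comp
  exact (measurable_const.div ((measurable_fst.pow_const 2).mul (measurable_snd.pow_const 2)))

lemma meas_V {C α t : ℝ} : MeasurableSet {p : ℝ × ℝ | 1 ≤ |p.1| ∧ |p.1| ≤ t ∧
    C * (Real.log (2 * |p.1|)) ^ (-1 - α) ≤ |p.1 * p.2|} := by
  apply MeasurableSet.inter
  · exact measurableSet_le measurable_const measurable_fst.abs
  apply MeasurableSet.inter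
  · exact measurableSet_le measurable_fst.abs measurable_const
  · show MeasurableSet {p : ℝ × ℝ | C * (Real.log (2 * |p.1|)) ^ (-1 - α) ≤ |p.1 * p.2|}
    apply measurableSet_le
    · exact (measurable_const.mul (((Real.measurable_log.comp
        (measurable_const.mul measurable_fst.abs))).pow_const (-1 - α)))
    · exact (measurable_fst.mul measurable_snd).abs

lemma lint_V_le {C α : ℝ} (hC : 0 < C) (hα : 0 < α) {t : ℝ} (ht : 1 ≤ t) :
    ∫⁻ p in {p : ℝ × ℝ | 1 ≤ |p.1| ∧ |p.1| ≤ t ∧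
        C * (Real.log (2 * |p.1|)) ^ (-1 - α) ≤ |p.1 * p.2|},
      ENNReal.ofReal (1 / (p.1 ^ 2 * p.2 ^ 2))
    ≤ 2 * ENNReal.ofReal ((2 / C) * ((Real.log (2 * t)) ^ ((2:ℝ) + α) / (2 + α))) := by
  set V : Set (ℝ × ℝ) := {p : ℝ × ℝ | 1 ≤ |p.1| ∧ |p.1| ≤ t ∧
      C * (Real.log (2 * |p.1|)) ^ (-1 - α) ≤ |p.1 * p.2|} with hV
  set G : ℝ → ℝ≥0∞ := Set.indicator {x : ℝ | 1 ≤ |x| ∧ |x| ≤ t}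
      (fun x => ENNReal.ofReal ((2 / C) * ((Real.log (2 * |x|)) ^ ((1:ℝ) + α) / |x|))) with hG
  have hmeasG : MeasurableSet {x : ℝ | 1 ≤ |x| ∧ |x| ≤ t} :=
    (measurableSet_le measurable_const measurable_abs).inter
      (measurableSet_le measurable_abs measurable_const)
  have step1 : ∀ x : ℝ, (∫⁻ y, V.indicator
      (fun p : ℝ × ℝ => ENNReal.ofReal (1 / (p.1 ^ 2 * p.2 ^ 2))) (x, y)) ≤ G x := by
    intro x
    by_cases hx : 1 ≤ |x| ∧ |x| ≤ t
    · have hx0 : (0:ℝ) < |x| := lt_of_lt_of_le one_pos hx.1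
      have hlog : (0:ℝ) < Real.log (2 * |x|) := Real.log_pos (by nlinarith [hx.1])
      have hrp : (0:ℝ) < (Real.log (2 * |x|)) ^ (-1 - α) := Real.rpow_pos_of_pos hlog _
      set m : ℝ := C * (Real.log (2 * |x|)) ^ (-1 - α) / |x| with hm
      have hmpos : 0 < m := by positivity
      have hptwise : ∀ y : ℝ, V.indicator
          (fun p : ℝ × ℝ => ENNReal.ofReal (1 / (p.1 ^ 2 * p.2 ^ 2))) (x, y)
          ≤ Set.indicator {y : ℝ | m ≤ |y|}
            (fun y => ENNReal.ofReal (1 / x ^ 2) * ENNReal.ofReal (1 / y ^ 2)) y := by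
        intro y
        by_cases hy : (x, y) ∈ V
        · rw [Set.indicator_of_mem hy]
          have hy3 : C * (Real.log (2 * |x|)) ^ (-1 - α) ≤ |x * y| := hy.2.2
          have hy' : y ∈ {y : ℝ | m ≤ |y|} := by
            rw [mem_setOf_eq, hm, div_le_iff₀ hx0]
            rw [abs_mul] at hy3
            linarith [hy3]
          rw [Set.indicator_of_mem hy']
          apply le_of_eq
          rw [← ENNReal.ofReal_mul (by positivity), one_div_mul_one_div]
        · rw [Set.indicator_of_notMem hy]
          exact bot_le
      calc (∫⁻ y, V.indicator
            (fun p : ℝ × ℝ => ENNReal.ofReal (1 / (p.1 ^ 2 * p.2 ^ 2))) (x, y))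
          ≤ ∫⁻ y, Set.indicator {y : ℝ | m ≤ |y|}
              (fun y => ENNReal.ofReal (1 / x ^ 2) * ENNReal.ofReal (1 / y ^ 2)) y :=
            lintegral_mono hptwise
        _ = ∫⁻ y in {y : ℝ | m ≤ |y|},
              ENNReal.ofReal (1 / x ^ 2) * ENNReal.ofReal (1 / y ^ 2) := by
            rw [lintegral_indicator (measurableSet_le measurable_const measurable_abs) _]
        _ = ENNReal.ofReal (1 / x ^ 2) * ∫⁻ y in {y : ℝ | m ≤ |y|},
              ENNReal.ofReal (1 / y ^ 2) :=
            lintegral_const_mul' _ _ ENNReal.ofReal_ne_top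
        _ ≤ ENNReal.ofReal (1 / x ^ 2) * ENNReal.ofReal (2 / m) :=
            mul_le_mul_right (lint_abs_ge_inv_sq hmpos) _
        _ = G x := by
            rw [hG, Set.indicator_of_mem (show x ∈ {x : ℝ | 1 ≤ |x| ∧ |x| ≤ t} from hx),
              ← ENNReal.ofReal_mul (by positivity)]
            congr 1
            rw [hm, show (-1 - α : ℝ) = -(1 + α) by ring, Real.rpow_neg hlog.le]
            have hrp2 : (0:ℝ) < (Real.log (2 * |x|)) ^ ((1:ℝ) + α) :=
              Real.rpow_pos_of_pos hlog _
            have hxne : x ≠ 0 := fun h => by simp [h] at hx0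
            field_simp [hxne, hC.ne']
            rw [← sq_abs x]
    · have hnot : ∀ y : ℝ, (x, y) ∉ V := fun y hy => hx ⟨hy.1, hy.2.1⟩
      have : ∀ y : ℝ, V.indicator
          (fun p : ℝ × ℝ => ENNReal.ofReal (1 / (p.1 ^ 2 * p.2 ^ 2))) (x, y) = 0 :=
        fun y => Set.indicator_of_notMem (hnot y) _
      simp only [this, lintegral_zero]
      exact bot_le
  have step2 : (∫⁻ x, G x) ≤ 2 * ENNReal.ofReal
      ((2 / C) * ((Real.log (2 * t)) ^ ((2:ℝ) + α) / (2 + α))) := by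
    rw [hG, lintegral_indicator hmeasG _]
    have hsub : {x : ℝ | 1 ≤ |x| ∧ |x| ≤ t} ⊆ Icc (-t) (-1) ∪ Icc 1 t := by
      intro x hx
      simp only [mem_setOf_eq] at hx
      rcases le_or_gt 0 x with h | h
      · right; rw [abs_of_nonneg h] at hx; exact ⟨hx.1, hx.2⟩
      · left; rw [abs_of_neg h] at hx; constructor <;> linarith [hx.1, hx.2]
    have hIcc : ∫⁻ x in Icc (1:ℝ) t,
        ENNReal.ofReal ((2 / C) * ((Real.log (2 * |x|)) ^ ((1:ℝ) + α) / |x|))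
        ≤ ENNReal.ofReal ((2 / C) * ((Real.log (2 * t)) ^ ((2:ℝ) + α) / (2 + α))) := by
      rw [setLIntegral_congr_fun measurableSet_Icc (
        (fun x hx => by rw [abs_of_pos (lt_of_lt_of_le one_pos hx.1)]))]
      exact lint_Icc_log_rpow_div hα hC ht
    calc ∫⁻ x in {x : ℝ | 1 ≤ |x| ∧ |x| ≤ t},
          ENNReal.ofReal ((2 / C) * ((Real.log (2 * |x|)) ^ ((1:ℝ) + α) / |x|))
        ≤ ∫⁻ x in Icc (-t) (-1) ∪ Icc 1 t,
          ENNReal.ofReal ((2 / C) * ((Real.log (2 * |x|)) ^ ((1:ℝ) + α) / |x|)) :=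
          lintegral_mono_set hsub
      _ ≤ (∫⁻ x in Icc (-t) (-1),
            ENNReal.ofReal ((2 / C) * ((Real.log (2 * |x|)) ^ ((1:ℝ) + α) / |x|)))
          + ∫⁻ x in Icc (1:ℝ) t,
            ENNReal.ofReal ((2 / C) * ((Real.log (2 * |x|)) ^ ((1:ℝ) + α) / |x|)) :=
          lintegral_union_le _ _ _
      _ ≤ ENNReal.ofReal ((2 / C) * ((Real.log (2 * t)) ^ ((2:ℝ) + α) / (2 + α)))
          + ENNReal.ofReal ((2 / C) * ((Real.log (2 * t)) ^ ((2:ℝ) + α) / (2 + α))) := by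
          apply add_le_add _ hIcc
          have hneg : (Neg.neg : ℝ → ℝ) ⁻¹' (Icc (-t) (-1)) = Icc 1 t := by
            ext x; simp only [mem_preimage, mem_Icc]
            constructor <;> (intro h; constructor <;> linarith [h.1, h.2])
          have key := (Measure.measurePreserving_neg (volume : Measure ℝ)).setLIntegral_comp_preimage_emb
            (Homeomorph.neg ℝ).measurableEmbedding
            (fun x => ENNReal.ofReal ((2 / C) * ((Real.log (2 * |x|)) ^ ((1:ℝ) + α) / |x|)))
            (Icc (-t) (-1))
          rw [hneg] at key
          rw [← key]
          simp only [abs_neg]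
          exact hIcc
      _ = 2 * ENNReal.ofReal ((2 / C) * ((Real.log (2 * t)) ^ ((2:ℝ) + α) / (2 + α))) :=
          (two_mul _).symm
  calc ∫⁻ p in V, ENNReal.ofReal (1 / (p.1 ^ 2 * p.2 ^ 2))
      = ∫⁻ p, V.indicator (fun p : ℝ × ℝ => ENNReal.ofReal (1 / (p.1 ^ 2 * p.2 ^ 2))) p :=
        (lintegral_indicator meas_V _).symm
    _ = ∫⁻ x, ∫⁻ y, V.indicator
          (fun p : ℝ × ℝ => ENNReal.ofReal (1 / (p.1 ^ 2 * p.2 ^ 2))) (x, y) := by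
        rw [Measure.volume_eq_prod, lintegral_prod]
        exact (meas_f2.indicator meas_V).aemeasurable
    _ ≤ ∫⁻ x, G x := lintegral_mono step1
    _ ≤ _ := step2

lemma lint_W_le {C α : ℝ} (hC : 0 < C) (hα : 0 < α) {t : ℝ} (ht : 1 ≤ t) :
    ∫⁻ p in {p : ℝ × ℝ | 1 ≤ max |p.1| |p.2| ∧ max |p.1| |p.2| ≤ t ∧
        C * (Real.log (2 * max |p.1| |p.2|)) ^ (-1 - α) ≤ |p.1 * p.2|},
      ENNReal.ofReal (1 / (p.1 ^ 2 * p.2 ^ 2))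
    ≤ 4 * ENNReal.ofReal ((2 / C) * ((Real.log (2 * t)) ^ ((2:ℝ) + α) / (2 + α))) := by
  set V : Set (ℝ × ℝ) := {p : ℝ × ℝ | 1 ≤ |p.1| ∧ |p.1| ≤ t ∧
      C * (Real.log (2 * |p.1|)) ^ (-1 - α) ≤ |p.1 * p.2|} with hV
  set V' : Set (ℝ × ℝ) := {p : ℝ × ℝ | 1 ≤ |p.2| ∧ |p.2| ≤ t ∧
      C * (Real.log (2 * |p.2|)) ^ (-1 - α) ≤ |p.1 * p.2|} with hV'
  have hsub : {p : ℝ × ℝ | 1 ≤ max |p.1| |p.2| ∧ max |p.1| |p.2| ≤ t ∧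
      C * (Real.log (2 * max |p.1| |p.2|)) ^ (-1 - α) ≤ |p.1 * p.2|} ⊆ V ∪ V' := by
    intro p hp
    obtain ⟨h1, h2, h3⟩ := hp
    rcases le_total |p.2| |p.1| with h | h
    · left
      rw [max_eq_left h] at h1 h2 h3
      exact ⟨h1, h2, h3⟩
    · right
      rw [max_eq_right h] at h1 h2 h3
      exact ⟨h1, h2, h3⟩
  have hswap : (∫⁻ p in V', ENNReal.ofReal (1 / (p.1 ^ 2 * p.2 ^ 2)))
      = ∫⁻ p in V, ENNReal.ofReal (1 / (p.1 ^ 2 * p.2 ^ 2)) := by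
    have hmp : MeasurePreserving (Prod.swap : ℝ × ℝ → ℝ × ℝ) volume volume := by
      rw [Measure.volume_eq_prod]
      exact Measure.measurePreserving_swap
    have key := hmp.setLIntegral_comp_preimage_emb
      MeasurableEquiv.prodComm.measurableEmbedding
      (fun p : ℝ × ℝ => ENNReal.ofReal (1 / (p.1 ^ 2 * p.2 ^ 2))) V'
    rw [← key]
    have hpre : (Prod.swap : ℝ × ℝ → ℝ × ℝ) ⁻¹' V' = V := by
      ext p
      simp only [mem_preimage, Prod.fst_swap, Prod.snd_swap, hV, hV', mem_setOf_eq]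
      rw [mul_comm p.2 p.1]
    rw [hpre]
    apply lintegral_congr
    intro p
    simp only [Prod.fst_swap, Prod.snd_swap]
    rw [mul_comm (p.2 ^ 2)]
  calc ∫⁻ p in {p : ℝ × ℝ | 1 ≤ max |p.1| |p.2| ∧ max |p.1| |p.2| ≤ t ∧
        C * (Real.log (2 * max |p.1| |p.2|)) ^ (-1 - α) ≤ |p.1 * p.2|},
      ENNReal.ofReal (1 / (p.1 ^ 2 * p.2 ^ 2))
      ≤ ∫⁻ p in V ∪ V', ENNReal.ofReal (1 / (p.1 ^ 2 * p.2 ^ 2)) := lintegral_mono_set hsub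
    _ ≤ (∫⁻ p in V, ENNReal.ofReal (1 / (p.1 ^ 2 * p.2 ^ 2)))
        + ∫⁻ p in V', ENNReal.ofReal (1 / (p.1 ^ 2 * p.2 ^ 2)) := lintegral_union_le _ _ _
    _ ≤ 2 * ENNReal.ofReal ((2 / C) * ((Real.log (2 * t)) ^ ((2:ℝ) + α) / (2 + α)))
        + 2 * ENNReal.ofReal ((2 / C) * ((Real.log (2 * t)) ^ ((2:ℝ) + α) / (2 + α))) := by
        apply add_le_add (lint_V_le hC hα ht)
        rw [hswap]
        exact lint_V_le hC hα ht
    _ = 4 * ENNReal.ofReal ((2 / C) * ((Real.log (2 * t)) ^ ((2:ℝ) + α) / (2 + α))) := by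
        ring

lemma outer_bound {C A α : ℝ} (hC : 0 < C) (hA : 0 < A) (hα : 0 < α) {t : ℝ}
    (ht : A + 3 ≤ t) :
    ∫⁻ l in SS C A α t ∩ {l | A + 3 < ‖l‖}, ENNReal.ofReal (fE l)
      ≤ 4 * ENNReal.ofReal ((2 / C) * ((Real.log (2 * t)) ^ ((2:ℝ) + α) / (2 + α))) := by
  have ht1 : (1:ℝ) ≤ t := by linarith
  have key := ψ_mp.setLIntegral_comp_preimage_emb ψ.measurableEmbedding
    (fun l => ENNReal.ofReal (fE l)) (SS C A α t ∩ {l | A + 3 < ‖l‖})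
  rw [← key]
  have hsub : (⇑ψ) ⁻¹' (SS C A α t ∩ {l | A + 3 < ‖l‖}) ⊆
      {p : ℝ × ℝ | 1 ≤ max |p.1| |p.2| ∧ max |p.1| |p.2| ≤ t ∧
        C * (Real.log (2 * max |p.1| |p.2|)) ^ (-1 - α) ≤ |p.1 * p.2|} := by
    intro p hp
    simp only [mem_preimage, mem_inter_iff, mem_setOf_eq, SS] at hp
    obtain ⟨⟨hA', hle, hcond⟩, hgt⟩ := hp
    set n : ℝ := ‖ψ p‖ with hn
    have hub : n ≤ |p.1| + |p.2| := by
      rw [hn, ψ_norm]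
      have h1 : p.1 ^ 2 + p.2 ^ 2 ≤ (|p.1| + |p.2|) ^ 2 := by
        nlinarith [sq_abs p.1, sq_abs p.2, abs_nonneg p.1, abs_nonneg p.2]
      calc Real.sqrt (p.1 ^ 2 + p.2 ^ 2) ≤ Real.sqrt ((|p.1| + |p.2|) ^ 2) :=
            Real.sqrt_le_sqrt h1
        _ = |p.1| + |p.2| := Real.sqrt_sq (by positivity)
    have hlb1 : |p.1| ≤ n := by
      rw [hn, ψ_norm]
      have := Real.sqrt_le_sqrt (show p.1 ^ 2 ≤ p.1 ^ 2 + p.2 ^ 2 by nlinarith [sq_nonneg p.2])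
      rwa [Real.sqrt_sq_eq_abs] at this
    have hlb2 : |p.2| ≤ n := by
      rw [hn, ψ_norm]
      have := Real.sqrt_le_sqrt (show p.2 ^ 2 ≤ p.1 ^ 2 + p.2 ^ 2 by nlinarith [sq_nonneg p.1])
      rwa [Real.sqrt_sq_eq_abs] at this
    set M : ℝ := max |p.1| |p.2| with hM
    have hMn : M ≤ n := max_le hlb1 hlb2
    have hn2M : n ≤ 2 * M := by
      have := le_max_left |p.1| |p.2|
      have := le_max_right |p.1| |p.2|
      calc n ≤ |p.1| + |p.2| := hub
        _ ≤ 2 * M := by nlinarith [le_max_left |p.1| |p.2|, le_max_right |p.1| |p.2|]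
    have hn3 : (3:ℝ) < n := by linarith
    have hM1 : (1:ℝ) ≤ M := by linarith
    refine ⟨hM1, hMn.trans hle, ?_⟩
    have hlogn : (0:ℝ) < Real.log n := Real.log_pos (by linarith)
    have hloglog : Real.log n ≤ Real.log (2 * M) := Real.log_le_log (by linarith) hn2M
    have hrle : (Real.log (2 * M)) ^ (-1 - α) ≤ (Real.log n) ^ (-1 - α) :=
      Real.rpow_le_rpow_of_nonpos hlogn hloglog (by linarith)
    have hC' : C * (Real.log (2 * M)) ^ (-1 - α) ≤ C * (Real.log n) ^ (-1 - α) :=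
      mul_le_mul_of_nonneg_left hrle hC.le
    calc C * (Real.log (2 * M)) ^ (-1 - α) ≤ C * (Real.log n) ^ (-1 - α) := hC'
      _ ≤ |(ψ p) 0 * (ψ p) 1| := hcond
      _ = |p.1 * p.2| := rfl
  calc ∫⁻ p in (⇑ψ) ⁻¹' (SS C A α t ∩ {l | A + 3 < ‖l‖}), ENNReal.ofReal (fE (ψ p))
      = ∫⁻ p in (⇑ψ) ⁻¹' (SS C A α t ∩ {l | A + 3 < ‖l‖}),
          ENNReal.ofReal (1 / (p.1 ^ 2 * p.2 ^ 2)) := rfl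
    _ ≤ ∫⁻ p in {p : ℝ × ℝ | 1 ≤ max |p.1| |p.2| ∧ max |p.1| |p.2| ≤ t ∧
          C * (Real.log (2 * max |p.1| |p.2|)) ^ (-1 - α) ≤ |p.1 * p.2|},
        ENNReal.ofReal (1 / (p.1 ^ 2 * p.2 ^ 2)) := lintegral_mono_set hsub
    _ ≤ _ := lint_W_le hC hα ht1

end IntegralInvSqSq


open IntegralInvSqSq

/-- For every `C, A, α > 0`, the integral of `1/(l₁² l₂²)` over
`{l ∈ ℝ² : A ≤ ‖l‖ ≤ t, |l₁ l₂| ≥ C (log ‖l‖)^{-1-α}}` is `O((log t)^{2+α})`. -/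
theorem integral_inv_sq_sq_log_isBigO (C A α : ℝ) (hC : 0 < C) (hA : 0 < A) (hα : 0 < α) :
    (fun t : ℝ =>
      ∫ l in {l : EuclideanSpace ℝ (Fin 2) |
          A ≤ ‖l‖ ∧ ‖l‖ ≤ t ∧ C * (Real.log ‖l‖) ^ (-1 - α) ≤ |l 0 * l 1|},
        1 / ((l 0) ^ 2 * (l 1) ^ 2)) =O[atTop]
      (fun t : ℝ => (Real.log t) ^ ((2 : ℝ) + α)) := by
  set R : ℝ := A + 3 with hR
  set B : ℝ≥0∞ := ∫⁻ l in SS C A α R, ENNReal.ofReal (fE l) with hB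
  have hca : (0:ℝ) < 2 + α := by linarith
  have hsplit : ∀ t : ℝ, R ≤ t → ∫⁻ l in SS C A α t, ENNReal.ofReal (fE l)
      ≤ B + 4 * ENNReal.ofReal ((2 / C) * ((Real.log (2 * t)) ^ ((2:ℝ) + α) / (2 + α))) := by
    intro t ht
    have hsub : SS C A α t ⊆ SS C A α R ∪ (SS C A α t ∩ {l | R < ‖l‖}) := by
      intro l hl
      obtain ⟨h1, h2, h3⟩ := hl
      by_cases hlr : ‖l‖ ≤ R
      · left; exact ⟨h1, hlr, h3⟩
      · right; exact ⟨⟨h1, h2, h3⟩, lt_of_not_ge hlr⟩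
    calc ∫⁻ l in SS C A α t, ENNReal.ofReal (fE l)
        ≤ ∫⁻ l in SS C A α R ∪ (SS C A α t ∩ {l | R < ‖l‖}), ENNReal.ofReal (fE l) :=
          lintegral_mono_set hsub
      _ ≤ B + ∫⁻ l in SS C A α t ∩ {l | R < ‖l‖}, ENNReal.ofReal (fE l) :=
          lintegral_union_le _ _ _
      _ ≤ B + 4 * ENNReal.ofReal ((2 / C) * ((Real.log (2 * t)) ^ ((2:ℝ) + α) / (2 + α))) :=
          add_le_add_right (outer_bound hC hA hα ht) _
  rw [Asymptotics.isBigO_iff]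
  refine ⟨B.toReal + (8 / C) * ((2:ℝ) ^ ((2:ℝ) + α) / (2 + α)), ?_⟩
  filter_upwards [eventually_ge_atTop R] with t ht
  have ht3 : (3:ℝ) ≤ t := by rw [hR] at ht; linarith
  have ht0 : (0:ℝ) < t := by linarith
  have hlogt1 : (1:ℝ) ≤ Real.log t := by
    rw [Real.le_log_iff_exp_le ht0]
    calc Real.exp 1 ≤ Real.exp 1 := le_refl _
      _ ≤ 3 := by nlinarith [Real.exp_one_lt_d9]
      _ ≤ t := ht3
  have hY1 : (1:ℝ) ≤ (Real.log t) ^ ((2:ℝ) + α) := by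
    calc (1:ℝ) = 1 ^ ((2:ℝ) + α) := (Real.one_rpow _).symm
      _ ≤ (Real.log t) ^ ((2:ℝ) + α) := Real.rpow_le_rpow (by norm_num) hlogt1 hca.le
  have hYnn : (0:ℝ) ≤ (Real.log t) ^ ((2:ℝ) + α) := by linarith
  have hX : (Real.log (2 * t)) ^ ((2:ℝ) + α)
      ≤ 2 ^ ((2:ℝ) + α) * (Real.log t) ^ ((2:ℝ) + α) := by
    have h2t : Real.log (2 * t) ≤ 2 * Real.log t := by
      rw [Real.log_mul (by norm_num) ht0.ne']
      have := Real.log_two_lt_d9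
      linarith
    have hl2t : (0:ℝ) ≤ Real.log (2 * t) := Real.log_nonneg (by nlinarith)
    calc (Real.log (2 * t)) ^ ((2:ℝ) + α) ≤ (2 * Real.log t) ^ ((2:ℝ) + α) :=
          Real.rpow_le_rpow hl2t h2t hca.le
      _ = 2 ^ ((2:ℝ) + α) * (Real.log t) ^ ((2:ℝ) + α) :=
          Real.mul_rpow (by norm_num) (by linarith)
  have hgoal_rhs : 0 ≤ (B.toReal + (8 / C) * ((2:ℝ) ^ ((2:ℝ) + α) / (2 + α)))
      * |(Real.log t) ^ ((2:ℝ) + α)| := by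
    have h1 : (0:ℝ) ≤ B.toReal := ENNReal.toReal_nonneg
    have h2 : (0:ℝ) ≤ (8 / C) * ((2:ℝ) ^ ((2:ℝ) + α) / (2 + α)) := by positivity
    positivity
  show ‖∫ l in SS C A α t, fE l‖ ≤ _
  by_cases hBtop : B = ⊤
  · have hnint : ¬ IntegrableOn fE (SS C A α t) volume := by
      intro hint
      have h1 : (∫⁻ l in SS C A α t, ENNReal.ofReal (fE l)) < ⊤ := by
        have h2 := hint.2
        rw [HasFiniteIntegral] at h2
        have h3 : ∀ l, ‖fE l‖ₑ = ENNReal.ofReal (fE l) :=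
          fun l => Real.enorm_eq_ofReal (fE_nn l)
        simp only [h3] at h2
        exact h2
      have h2 : B ≤ ∫⁻ l in SS C A α t, ENNReal.ofReal (fE l) :=
        lintegral_mono_set (fun l hl => ⟨hl.1, hl.2.1.trans ht, hl.2.2⟩)
      rw [hBtop] at h2
      exact absurd (lt_of_le_of_lt h2 h1) (lt_irrefl ⊤)
    rw [integral_undef hnint, norm_zero]
    exact hgoal_rhs
  · have heq : (∫ l in SS C A α t, fE l)
        = (∫⁻ l in SS C A α t, ENNReal.ofReal (fE l)).toReal :=
      integral_eq_lintegral_of_nonneg_ae (ae_of_all _ fE_nn)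
        fE_meas.aestronglyMeasurable
    have hmulfin : (4 : ℝ≥0∞) * ENNReal.ofReal
        ((2 / C) * ((Real.log (2 * t)) ^ ((2:ℝ) + α) / (2 + α))) ≠ ⊤ :=
      ENNReal.mul_ne_top (by simp) ENNReal.ofReal_ne_top
    have hfin : B + 4 * ENNReal.ofReal
        ((2 / C) * ((Real.log (2 * t)) ^ ((2:ℝ) + α) / (2 + α))) ≠ ⊤ :=
      ENNReal.add_ne_top.2 ⟨hBtop, hmulfin⟩
    have hbound := ENNReal.toReal_mono hfin (hsplit t ht)
    have hcnn : (0:ℝ) ≤ (2 / C) * ((Real.log (2 * t)) ^ ((2:ℝ) + α) / (2 + α)) := by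
      have hl2t : (0:ℝ) ≤ Real.log (2 * t) := Real.log_nonneg (by nlinarith)
      have : (0:ℝ) ≤ (Real.log (2 * t)) ^ ((2:ℝ) + α) := Real.rpow_nonneg hl2t _
      positivity
    rw [ENNReal.toReal_add hBtop hmulfin, ENNReal.toReal_mul,
      ENNReal.toReal_ofReal hcnn] at hbound
    have h4 : ((4 : ℝ≥0∞)).toReal = (4:ℝ) := by simp
    rw [h4] at hbound
    rw [heq]
    rw [Real.norm_eq_abs, Real.norm_eq_abs, abs_of_nonneg ENNReal.toReal_nonneg,
      abs_of_nonneg hYnn]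
    have hfinal : (∫⁻ l in SS C A α t, ENNReal.ofReal (fE l)).toReal
        ≤ (B.toReal + (8 / C) * ((2:ℝ) ^ ((2:ℝ) + α) / (2 + α)))
          * (Real.log t) ^ ((2:ℝ) + α) := by
      have hBnn : (0:ℝ) ≤ B.toReal := ENNReal.toReal_nonneg
      have hCpos : (0:ℝ) < 2 / C := by positivity
      have h2rpow : (0:ℝ) < (2:ℝ) ^ ((2:ℝ) + α) := Real.rpow_pos_of_pos (by norm_num) _
      calc (∫⁻ l in SS C A α t, ENNReal.ofReal (fE l)).toReal
          ≤ B.toReal + 4 * ((2 / C) * ((Real.log (2 * t)) ^ ((2:ℝ) + α) / (2 + α))) := hbound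
        _ ≤ B.toReal + 4 * ((2 / C) * ((2 ^ ((2:ℝ) + α) * (Real.log t) ^ ((2:ℝ) + α)) / (2 + α))) := by
            gcongr
        _ ≤ (B.toReal + (8 / C) * ((2:ℝ) ^ ((2:ℝ) + α) / (2 + α)))
            * (Real.log t) ^ ((2:ℝ) + α) := by
            have expand : 4 * ((2 / C) * ((2 ^ ((2:ℝ) + α) * (Real.log t) ^ ((2:ℝ) + α)) / (2 + α)))
                = (8 / C) * ((2:ℝ) ^ ((2:ℝ) + α) / (2 + α)) * (Real.log t) ^ ((2:ℝ) + α) := by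
              field_simp
              ring
            rw [expand]
            nlinarith [hBnn, hY1]
    exact hfinal
end

section
/- For every integer d ≥ 2 and every C > 0, A > 0, the integral of 1/(l₁² ⋯ l_d²) over {l ∈ ℝ^d : A ≤ ‖l‖ ≤ t, |l₁ ⋯ l_d| ≥ C} is O((log t)^{d-1}) as t → ∞. -/
open MeasureTheory Filter Real Asymptotics Set
open scoped ENNReal

lemma absSet_eq (a t : ℝ) (ha : 0 < a) :
    {y : ℝ | a ≤ |y| ∧ |y| ≤ t} = Icc a t ∪ Icc (-t) (-a) := by
  ext y
  simp only [Set.mem_setOf_eq, Set.mem_union, Set.mem_Icc, le_abs, abs_le]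
  constructor
  · rintro ⟨h1 | h1, h2, h3⟩
    · exact Or.inl ⟨h1, h3⟩
    · exact Or.inr ⟨h2, by linarith⟩
  · rintro (⟨h1, h2⟩ | ⟨h1, h2⟩)
    · exact ⟨Or.inl h1, by constructor <;> linarith⟩
    · exact ⟨Or.inr (by linarith), by constructor <;> linarith⟩

lemma absSet_meas (a t : ℝ) : MeasurableSet {y : ℝ | a ≤ |y| ∧ |y| ≤ t} := by
  have : {y : ℝ | a ≤ |y| ∧ |y| ≤ t} = {y : ℝ | a ≤ |y|} ∩ {y : ℝ | |y| ≤ t} := rfl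
  rw [this]
  exact (measurableSet_le measurable_const (measurable_id.abs)).inter
    (measurableSet_le measurable_id.abs measurable_const)

lemma lint_abs_inv_le (a t : ℝ) (ha : 0 < a) :
    ∫⁻ y : ℝ, Set.indicator {y : ℝ | a ≤ |y| ∧ |y| ≤ t}
        (fun y => ENNReal.ofReal |y|⁻¹) y
      ≤ ENNReal.ofReal (2 * (Real.log t - Real.log a)) := by
  rw [lintegral_indicator (absSet_meas a t)]
  rcases lt_or_ge t a with hat | hat
  · have : {y : ℝ | a ≤ |y| ∧ |y| ≤ t} = ∅ := by
      ext y; simp only [Set.mem_setOf_eq, Set.mem_empty_iff_false, iff_false, not_and, not_le]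
      intro h; linarith
    simp [this]
  have hlog : Real.log a ≤ Real.log t := Real.log_le_log ha hat
  have hpos : ∫⁻ y in Icc a t, ENNReal.ofReal |y|⁻¹ = ENNReal.ofReal (Real.log t - Real.log a) := by
    rw [setLIntegral_congr_fun_ae measurableSet_Icc (ae_of_all _ fun y hy => by
      rw [abs_of_pos (lt_of_lt_of_le ha hy.1)])]
    rw [← ofReal_integral_eq_lintegral_ofReal]
    · congr 1
      rw [integral_Icc_eq_integral_Ioc, ← intervalIntegral.integral_of_le hat,
        integral_inv (Set.notMem_uIcc_of_lt ha (lt_of_lt_of_le ha hat)),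
        Real.log_div (by linarith) (by linarith)]
    · exact (continuousOn_id.inv₀ fun y hy => ne_of_gt (lt_of_lt_of_le ha hy.1)).integrableOn_Icc
    · exact (ae_restrict_iff' measurableSet_Icc).2 (ae_of_all _ fun y hy =>
        inv_nonneg.2 (le_of_lt (lt_of_lt_of_le ha hy.1)))
  have hneg : ∫⁻ y in Icc (-t) (-a), ENNReal.ofReal |y|⁻¹
      = ENNReal.ofReal (Real.log t - Real.log a) := by
    rw [setLIntegral_congr_fun_ae measurableSet_Icc (ae_of_all _ fun y hy => by
      rw [abs_of_neg (lt_of_le_of_lt hy.2 (by linarith))])]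
    rw [← ofReal_integral_eq_lintegral_ofReal]
    · congr 1
      rw [integral_Icc_eq_integral_Ioc, ← intervalIntegral.integral_of_le (by linarith : -t ≤ -a)]
      have : (∫ y in (-t)..(-a), (-y)⁻¹) = ∫ y in a..t, y⁻¹ := by
        rw [intervalIntegral.integral_comp_neg fun x => x⁻¹]
        simp
      rw [this, integral_inv (Set.notMem_uIcc_of_lt ha (lt_of_lt_of_le ha hat)),
        Real.log_div (by linarith) (by linarith)]
    · exact (ContinuousOn.inv₀ continuous_neg.continuousOn fun y hy =>
        ne_of_gt (by have := hy.2; linarith : (0:ℝ) < -y)).integrableOn_Icc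
    · exact (ae_restrict_iff' measurableSet_Icc).2 (ae_of_all _ fun y hy =>
        inv_nonneg.2 (by have := hy.2; nlinarith))
  calc ∫⁻ y in {y : ℝ | a ≤ |y| ∧ |y| ≤ t}, ENNReal.ofReal |y|⁻¹
      = ∫⁻ y in Icc a t ∪ Icc (-t) (-a), ENNReal.ofReal |y|⁻¹ := by rw [absSet_eq a t ha]
    _ ≤ (∫⁻ y in Icc a t, ENNReal.ofReal |y|⁻¹) + ∫⁻ y in Icc (-t) (-a), ENNReal.ofReal |y|⁻¹ :=
        lintegral_union_le _ _ _
    _ ≤ ENNReal.ofReal (2 * (Real.log t - Real.log a)) := by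
        rw [hpos, hneg, ← ENNReal.ofReal_add (by linarith) (by linarith)]
        apply ENNReal.ofReal_le_ofReal; ring_nf; rfl

lemma integral_invsq (a t : ℝ) (ha : 0 < a) (hat : a ≤ t) :
    ∫ y in a..t, (y ^ 2)⁻¹ = a⁻¹ - t⁻¹ := by
  have h : ∀ x ∈ Set.uIcc a t, HasDerivAt (fun y : ℝ => -y⁻¹) ((x ^ 2)⁻¹) x := by
    intro x hx
    have hx0 : x ≠ 0 := by
      rw [Set.uIcc_of_le hat] at hx; exact ne_of_gt (lt_of_lt_of_le ha hx.1)
    simpa [Pi.neg_def] using (hasDerivAt_inv hx0).neg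
  rw [intervalIntegral.integral_eq_sub_of_hasDerivAt h]
  · ring
  · apply ContinuousOn.intervalIntegrable
    exact ContinuousOn.inv₀ (continuousOn_pow 2) fun x hx => pow_ne_zero 2 (by
      rw [Set.uIcc_of_le hat] at hx; exact ne_of_gt (lt_of_lt_of_le ha hx.1))

lemma lint_abs_invsq_le (a t : ℝ) (ha : 0 < a) :
    ∫⁻ y : ℝ, Set.indicator {y : ℝ | a ≤ |y| ∧ |y| ≤ t}
        (fun y => ENNReal.ofReal ((y ^ 2)⁻¹)) y
      ≤ ENNReal.ofReal (2 * a⁻¹) := by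
  rw [lintegral_indicator (absSet_meas a t)]
  rcases lt_or_ge t a with hat | hat
  · have : {y : ℝ | a ≤ |y| ∧ |y| ≤ t} = ∅ := by
      ext y; simp only [Set.mem_setOf_eq, Set.mem_empty_iff_false, iff_false, not_and, not_le]
      intro h; linarith
    simp [this]
  have hcont : ContinuousOn (fun y : ℝ => (y ^ 2)⁻¹) (Icc a t) :=
    ContinuousOn.inv₀ (continuousOn_pow 2) fun x hx =>
      pow_ne_zero 2 (ne_of_gt (lt_of_lt_of_le ha hx.1))
  have hposval : ∫ y in Icc a t, (y ^ 2)⁻¹ = a⁻¹ - t⁻¹ := by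
    rw [integral_Icc_eq_integral_Ioc, ← intervalIntegral.integral_of_le hat,
      integral_invsq a t ha hat]
  have hpos : ∫⁻ y in Icc a t, ENNReal.ofReal ((y ^ 2)⁻¹) = ENNReal.ofReal (a⁻¹ - t⁻¹) := by
    rw [← ofReal_integral_eq_lintegral_ofReal hcont.integrableOn_Icc
      ((ae_restrict_iff' measurableSet_Icc).2 (ae_of_all _ fun y hy =>
        inv_nonneg.2 (sq_nonneg y))), hposval]
  have hnegval : ∫ y in Icc (-t) (-a), (y ^ 2)⁻¹ = a⁻¹ - t⁻¹ := by
    rw [integral_Icc_eq_integral_Ioc, ← intervalIntegral.integral_of_le (by linarith : -t ≤ -a)]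
    have h1 : (∫ y in (-t)..(-a), (y ^ 2)⁻¹) = ∫ y in (-t)..(-a), ((-y) ^ 2)⁻¹ := by
      congr 1; ext y; rw [neg_sq]
    rw [h1, intervalIntegral.integral_comp_neg fun x => (x ^ 2)⁻¹]
    simp only [neg_neg]
    rw [← hposval, integral_Icc_eq_integral_Ioc, ← intervalIntegral.integral_of_le hat]
  have hcontn : ContinuousOn (fun y : ℝ => (y ^ 2)⁻¹) (Icc (-t) (-a)) :=
    ContinuousOn.inv₀ (continuousOn_pow 2) fun x hx =>
      pow_ne_zero 2 (ne_of_lt (lt_of_le_of_lt hx.2 (by linarith)))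
  have hneg : ∫⁻ y in Icc (-t) (-a), ENNReal.ofReal ((y ^ 2)⁻¹)
      = ENNReal.ofReal (a⁻¹ - t⁻¹) := by
    rw [← ofReal_integral_eq_lintegral_ofReal hcontn.integrableOn_Icc
      ((ae_restrict_iff' measurableSet_Icc).2 (ae_of_all _ fun y hy =>
        inv_nonneg.2 (sq_nonneg y))), hnegval]
  have hit : a⁻¹ - t⁻¹ ≤ a⁻¹ := by
    have : (0:ℝ) ≤ t⁻¹ := inv_nonneg.2 (by linarith)
    linarith
  have hit0 : (0:ℝ) ≤ a⁻¹ - t⁻¹ := by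
    have : t⁻¹ ≤ a⁻¹ := inv_anti₀ ha hat
    linarith
  calc ∫⁻ y in {y : ℝ | a ≤ |y| ∧ |y| ≤ t}, ENNReal.ofReal ((y ^ 2)⁻¹)
      = ∫⁻ y in Icc a t ∪ Icc (-t) (-a), ENNReal.ofReal ((y ^ 2)⁻¹) := by rw [absSet_eq a t ha]
    _ ≤ (∫⁻ y in Icc a t, ENNReal.ofReal ((y ^ 2)⁻¹))
        + ∫⁻ y in Icc (-t) (-a), ENNReal.ofReal ((y ^ 2)⁻¹) := lintegral_union_le _ _ _
    _ ≤ ENNReal.ofReal (2 * a⁻¹) := by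
        rw [hpos, hneg, ← ENNReal.ofReal_add (by linarith) (by linarith)]
        apply ENNReal.ofReal_le_ofReal; linarith

lemma Jset_meas (m : ℕ) (t B : ℝ) :
    MeasurableSet {x : Fin m → ℝ | (∀ i, |x i| ≤ t) ∧ B ≤ ∏ i, |x i|} := by
  have h : {x : Fin m → ℝ | (∀ i, |x i| ≤ t) ∧ B ≤ ∏ i, |x i|}
      = (⋂ i, {x : Fin m → ℝ | |x i| ≤ t}) ∩ {x : Fin m → ℝ | B ≤ ∏ i, |x i|} := by
    ext x; simp [Set.mem_iInter]
  rw [h]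
  exact (MeasurableSet.iInter fun i =>
      measurableSet_le (measurable_pi_apply i).abs measurable_const).inter
    (measurableSet_le measurable_const
      (Finset.measurable_prod _ fun i _ => (measurable_pi_apply i).abs))

lemma Jint_meas (m : ℕ) : Measurable (fun x : Fin m → ℝ => ENNReal.ofReal (∏ i, |x i|)⁻¹) :=
  ((Finset.measurable_prod _ fun i _ => (measurable_pi_apply i).abs).inv).ennreal_ofReal

lemma key (m : ℕ) : ∀ (B t : ℝ), 0 < B → 1 ≤ t →
    ∫⁻ x : Fin m → ℝ,
        Set.indicator {x : Fin m → ℝ | (∀ i, |x i| ≤ t) ∧ B ≤ ∏ i, |x i|}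
          (fun x => ENNReal.ofReal (∏ i, |x i|)⁻¹) x
      ≤ ENNReal.ofReal ((2 * Real.log (t ^ m / B)) ^ m) := by
  induction m with
  | zero =>
    intro B t hB ht
    have h1 : ∀ x : Fin 0 → ℝ,
        Set.indicator {x : Fin 0 → ℝ | (∀ i, |x i| ≤ t) ∧ B ≤ ∏ i, |x i|}
          (fun x => ENNReal.ofReal (∏ i, |x i|)⁻¹) x ≤ 1 := by
      intro x
      refine le_trans (Set.indicator_le_self _ _ x) ?_
      simp
    calc ∫⁻ x : Fin 0 → ℝ, Set.indicator _ _ x ≤ ∫⁻ _ : Fin 0 → ℝ, 1 := lintegral_mono h1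
      _ = volume (univ : Set (Fin 0 → ℝ)) := lintegral_one
      _ = 1 := by rw [volume_pi, Measure.pi_univ]; simp
      _ ≤ ENNReal.ofReal ((2 * Real.log (t ^ 0 / B)) ^ 0) := by simp
  | succ m ih =>
    intro B t hB ht
    have ht0 : (0 : ℝ) < t := lt_of_lt_of_le one_pos ht
    set L := Real.log (t ^ (m + 1) / B) with hLdef
    set e := MeasurableEquiv.piFinSuccAbove (fun _ : Fin (m + 1) => ℝ) 0 with he
    set F : (Fin (m + 1) → ℝ) → ℝ≥0∞ :=
      Set.indicator {x : Fin (m + 1) → ℝ | (∀ i, |x i| ≤ t) ∧ B ≤ ∏ i, |x i|}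
        (fun x => ENNReal.ofReal (∏ i, |x i|)⁻¹) with hF
    have hFm : Measurable F := (Jint_meas (m + 1)).indicator (Jset_meas (m + 1) t B)
    have hmp := (measurePreserving_piFinSuccAbove (fun _ : Fin (m + 1) => (volume : Measure ℝ)) 0).symm
    have hsplit : ∫⁻ x : Fin (m + 1) → ℝ, F x
        = ∫⁻ x' : Fin m → ℝ, ∫⁻ y : ℝ, F (e.symm (y, x')) := by
      have h1 : ∫⁻ x : Fin (m + 1) → ℝ, F x
          = ∫⁻ p : ℝ × (Fin m → ℝ), F (e.symm p)
              ∂((volume : Measure ℝ).prod (Measure.pi fun _ : Fin m => (volume : Measure ℝ))) := by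
        rw [volume_pi]
        exact (hmp.lintegral_comp hFm).symm
      rw [h1, lintegral_prod_symm (fun p => F (e.symm p))
        ((hFm.comp e.symm.measurable).aemeasurable), ← volume_pi]
    have hcons : ∀ (y : ℝ) (x' : Fin m → ℝ), e.symm (y, x') = Fin.cons y x' := by
      intro y x'
      simp [he, MeasurableEquiv.piFinSuccAbove, Fin.insertNthEquiv, Fin.insertNth_zero']
    have inner_bd : ∀ x' : Fin m → ℝ,
        (∫⁻ y : ℝ, F (e.symm (y, x')))
          ≤ ENNReal.ofReal (2 * L) *
            Set.indicator {x : Fin m → ℝ | (∀ i, |x i| ≤ t) ∧ B / t ≤ ∏ i, |x i|}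
              (fun x => ENNReal.ofReal (∏ i, |x i|)⁻¹) x' := by
      intro x'
      set P := ∏ j, |x' j| with hP
      have hPnn : 0 ≤ P := Finset.prod_nonneg fun j _ => abs_nonneg _
      have hFy : ∀ y : ℝ, F (e.symm (y, x')) =
          Set.indicator {y : ℝ | (|y| ≤ t ∧ ∀ j, |x' j| ≤ t) ∧ B ≤ |y| * P}
            (fun y => ENNReal.ofReal (|y| * P)⁻¹) y := by
        intro y
        rw [hcons]
        have hprod : (∏ i, |(Fin.cons y x' : Fin (m + 1) → ℝ) i|) = |y| * P := by
          rw [Fin.prod_univ_succ]; simp [hP]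
        have hall : (∀ i, |(Fin.cons y x' : Fin (m + 1) → ℝ) i| ≤ t) ↔ (|y| ≤ t ∧ ∀ j, |x' j| ≤ t) := by
          rw [Fin.forall_fin_succ]; simp
        by_cases hc : y ∈ {y : ℝ | (|y| ≤ t ∧ ∀ j, |x' j| ≤ t) ∧ B ≤ |y| * P}
        · rw [hF, Set.indicator_of_mem (show Fin.cons y x' ∈
              {x : Fin (m + 1) → ℝ | (∀ i, |x i| ≤ t) ∧ B ≤ ∏ i, |x i|} by
              simp only [Set.mem_setOf_eq, hall, hprod]; exact hc),
            Set.indicator_of_mem hc, hprod]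
        · rw [hF, Set.indicator_of_notMem (show Fin.cons y x' ∉
              {x : Fin (m + 1) → ℝ | (∀ i, |x i| ≤ t) ∧ B ≤ ∏ i, |x i|} by
              simp only [Set.mem_setOf_eq, hall, hprod]; exact hc),
            Set.indicator_of_notMem hc]
      simp_rw [hFy]
      by_cases hx1 : ∀ j, |x' j| ≤ t
      · by_cases hx2 : B / t ≤ P
        · have hPpos : 0 < P := lt_of_lt_of_le (div_pos hB ht0) hx2
          have haP : 0 < B / P := div_pos hB hPpos
          have hseteq : {y : ℝ | (|y| ≤ t ∧ ∀ j, |x' j| ≤ t) ∧ B ≤ |y| * P}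
              = {y : ℝ | B / P ≤ |y| ∧ |y| ≤ t} := by
            ext y
            simp only [Set.mem_setOf_eq, hx1, and_true]
            rw [div_le_iff₀ hPpos]
            tauto
          have hval : ∀ y : ℝ, Set.indicator {y : ℝ | B / P ≤ |y| ∧ |y| ≤ t}
                (fun y => ENNReal.ofReal (|y| * P)⁻¹) y
              = Set.indicator {y : ℝ | B / P ≤ |y| ∧ |y| ≤ t}
                (fun y => ENNReal.ofReal |y|⁻¹) y * ENNReal.ofReal P⁻¹ := by
            intro y
            by_cases hy : y ∈ {y : ℝ | B / P ≤ |y| ∧ |y| ≤ t}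
            · rw [Set.indicator_of_mem hy, Set.indicator_of_mem hy, mul_inv,
                ENNReal.ofReal_mul (inv_nonneg.2 (abs_nonneg _))]
            · rw [Set.indicator_of_notMem hy, Set.indicator_of_notMem hy, zero_mul]
          rw [hseteq]
          simp_rw [hval]
          rw [lintegral_mul_const' _ _ ENNReal.ofReal_ne_top]
          have hPle : P ≤ t ^ m := by
            have h := Finset.prod_le_prod (s := Finset.univ)
              (f := fun j : Fin m => |x' j|) (g := fun _ => t)
              (fun j _ => abs_nonneg _) (fun j _ => hx1 j)
            simpa [hP, Finset.prod_const] using h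
          have hlog : 2 * (Real.log t - Real.log (B / P)) ≤ 2 * L := by
            have h1 : Real.log (B / P) = Real.log B - Real.log P :=
              Real.log_div (ne_of_gt hB) (ne_of_gt hPpos)
            have h2 : L = (m + 1) * Real.log t - Real.log B := by
              rw [hLdef, Real.log_div (ne_of_gt (pow_pos ht0 _)) (ne_of_gt hB),
                Real.log_pow]
              push_cast; ring
            have h3 : Real.log P ≤ m * Real.log t := by
              calc Real.log P ≤ Real.log (t ^ m) := Real.log_le_log hPpos hPle
                _ = m * Real.log t := by rw [Real.log_pow]
            linarith
          calc (∫⁻ y : ℝ, Set.indicator {y : ℝ | B / P ≤ |y| ∧ |y| ≤ t}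
                  (fun y => ENNReal.ofReal |y|⁻¹) y) * ENNReal.ofReal P⁻¹
              ≤ ENNReal.ofReal (2 * (Real.log t - Real.log (B / P))) * ENNReal.ofReal P⁻¹ :=
                mul_le_mul_left (lint_abs_inv_le (B / P) t haP) _
            _ ≤ ENNReal.ofReal (2 * L) * ENNReal.ofReal P⁻¹ :=
                mul_le_mul_left (ENNReal.ofReal_le_ofReal hlog) _
            _ = ENNReal.ofReal (2 * L) *
                Set.indicator {x : Fin m → ℝ | (∀ i, |x i| ≤ t) ∧ B / t ≤ ∏ i, |x i|}
                  (fun x => ENNReal.ofReal (∏ i, |x i|)⁻¹) x' := by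
                rw [Set.indicator_of_mem (by exact ⟨hx1, hx2⟩)]
        · have hempty : {y : ℝ | (|y| ≤ t ∧ ∀ j, |x' j| ≤ t) ∧ B ≤ |y| * P} = ∅ := by
            ext y
            simp only [Set.mem_setOf_eq, Set.mem_empty_iff_false, iff_false, not_and]
            rintro ⟨hy, -⟩ hBle
            apply hx2
            rw [div_le_iff₀ ht0]
            calc B ≤ |y| * P := hBle
              _ ≤ t * P := mul_le_mul_of_nonneg_right hy hPnn
              _ = P * t := mul_comm _ _
          simp only [hempty, Set.indicator_empty, Pi.zero_apply, lintegral_zero]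
          exact zero_le
      · have hempty : {y : ℝ | (|y| ≤ t ∧ ∀ j, |x' j| ≤ t) ∧ B ≤ |y| * P} = ∅ := by
          ext y
          simp only [Set.mem_setOf_eq, Set.mem_empty_iff_false, iff_false, not_and]
          rintro ⟨-, hy⟩
          exact absurd hy hx1
        simp only [hempty, Set.indicator_empty, Pi.zero_apply, lintegral_zero]
        exact zero_le
    have harg : t ^ m / (B / t) = t ^ (m + 1) / B := by
      field_simp
      ring
    calc ∫⁻ x : Fin (m + 1) → ℝ, F x
        = ∫⁻ x' : Fin m → ℝ, ∫⁻ y : ℝ, F (e.symm (y, x')) := hsplit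
      _ ≤ ∫⁻ x' : Fin m → ℝ, ENNReal.ofReal (2 * L) *
            Set.indicator {x : Fin m → ℝ | (∀ i, |x i| ≤ t) ∧ B / t ≤ ∏ i, |x i|}
              (fun x => ENNReal.ofReal (∏ i, |x i|)⁻¹) x' := lintegral_mono inner_bd
      _ = ENNReal.ofReal (2 * L) * ∫⁻ x' : Fin m → ℝ,
            Set.indicator {x : Fin m → ℝ | (∀ i, |x i| ≤ t) ∧ B / t ≤ ∏ i, |x i|}
              (fun x => ENNReal.ofReal (∏ i, |x i|)⁻¹) x' :=
          lintegral_const_mul' _ _ ENNReal.ofReal_ne_top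
      _ ≤ ENNReal.ofReal (2 * L) * ENNReal.ofReal ((2 * Real.log (t ^ m / (B / t))) ^ m) :=
          mul_le_mul_right (ih (B / t) t (div_pos hB ht0) ht) _
      _ ≤ ENNReal.ofReal ((2 * L) ^ (m + 1)) := by
          rw [harg, ← hLdef]
          rcases le_or_gt 0 (2 * L) with h | h
          · rw [← ENNReal.ofReal_mul h, ← pow_succ']
          · rw [ENNReal.ofReal_of_nonpos (le_of_lt h), zero_mul]
            exact zero_le

lemma key2 (m : ℕ) (C t : ℝ) (hC : 0 < C) (ht : 1 ≤ t) :
    ∫⁻ x : Fin (m + 1) → ℝ,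
        Set.indicator {x : Fin (m + 1) → ℝ | (∀ i, |x i| ≤ t) ∧ C ≤ ∏ i, |x i|}
          (fun x => ENNReal.ofReal (∏ i, (x i) ^ 2)⁻¹) x
      ≤ ENNReal.ofReal ((2 * C⁻¹) * (2 * Real.log (t ^ (m + 1) / C)) ^ m) := by
  have ht0 : (0 : ℝ) < t := lt_of_lt_of_le one_pos ht
  set e := MeasurableEquiv.piFinSuccAbove (fun _ : Fin (m + 1) => ℝ) 0 with he
  set F : (Fin (m + 1) → ℝ) → ℝ≥0∞ :=
    Set.indicator {x : Fin (m + 1) → ℝ | (∀ i, |x i| ≤ t) ∧ C ≤ ∏ i, |x i|}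
      (fun x => ENNReal.ofReal (∏ i, (x i) ^ 2)⁻¹) with hF
  have hFm : Measurable F :=
    (((Finset.measurable_prod _ fun i _ =>
      (measurable_pi_apply i).pow_const 2).inv).ennreal_ofReal).indicator (Jset_meas (m + 1) t C)
  have hmp := (measurePreserving_piFinSuccAbove (fun _ : Fin (m + 1) => (volume : Measure ℝ)) 0).symm
  have hsplit : ∫⁻ x : Fin (m + 1) → ℝ, F x
      = ∫⁻ x' : Fin m → ℝ, ∫⁻ y : ℝ, F (e.symm (y, x')) := by
    have h1 : ∫⁻ x : Fin (m + 1) → ℝ, F x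
        = ∫⁻ p : ℝ × (Fin m → ℝ), F (e.symm p)
            ∂((volume : Measure ℝ).prod (Measure.pi fun _ : Fin m => (volume : Measure ℝ))) := by
      rw [volume_pi]
      exact (hmp.lintegral_comp hFm).symm
    rw [h1, lintegral_prod_symm (fun p => F (e.symm p))
      ((hFm.comp e.symm.measurable).aemeasurable), ← volume_pi]
  have hcons : ∀ (y : ℝ) (x' : Fin m → ℝ), e.symm (y, x') = Fin.cons y x' := by
    intro y x'
    simp [he, MeasurableEquiv.piFinSuccAbove, Fin.insertNthEquiv, Fin.insertNth_zero']
  have inner_bd : ∀ x' : Fin m → ℝ,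
      (∫⁻ y : ℝ, F (e.symm (y, x')))
        ≤ ENNReal.ofReal (2 * C⁻¹) *
          Set.indicator {x : Fin m → ℝ | (∀ i, |x i| ≤ t) ∧ C / t ≤ ∏ i, |x i|}
            (fun x => ENNReal.ofReal (∏ i, |x i|)⁻¹) x' := by
    intro x'
    set P := ∏ j, |x' j| with hP
    set Q := ∏ j, (x' j) ^ 2 with hQ
    have hPnn : 0 ≤ P := Finset.prod_nonneg fun j _ => abs_nonneg _
    have hQP : Q = P ^ 2 := by
      rw [hQ, hP, ← Finset.prod_pow]
      exact Finset.prod_congr rfl fun j _ => (sq_abs (x' j)).symm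
    have hFy : ∀ y : ℝ, F (e.symm (y, x')) =
        Set.indicator {y : ℝ | (|y| ≤ t ∧ ∀ j, |x' j| ≤ t) ∧ C ≤ |y| * P}
          (fun y => ENNReal.ofReal (y ^ 2 * Q)⁻¹) y := by
      intro y
      rw [hcons]
      have hprod : (∏ i, |(Fin.cons y x' : Fin (m + 1) → ℝ) i|) = |y| * P := by
        rw [Fin.prod_univ_succ]; simp [hP]
      have hprodsq : (∏ i, ((Fin.cons y x' : Fin (m + 1) → ℝ) i) ^ 2) = y ^ 2 * Q := by
        rw [Fin.prod_univ_succ]; simp [hQ]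
      have hall : (∀ i, |(Fin.cons y x' : Fin (m + 1) → ℝ) i| ≤ t) ↔
          (|y| ≤ t ∧ ∀ j, |x' j| ≤ t) := by
        rw [Fin.forall_fin_succ]; simp
      by_cases hc : y ∈ {y : ℝ | (|y| ≤ t ∧ ∀ j, |x' j| ≤ t) ∧ C ≤ |y| * P}
      · rw [hF, Set.indicator_of_mem (show Fin.cons y x' ∈
            {x : Fin (m + 1) → ℝ | (∀ i, |x i| ≤ t) ∧ C ≤ ∏ i, |x i|} by
            simp only [Set.mem_setOf_eq, hall, hprod]; exact hc),
          Set.indicator_of_mem hc, hprodsq]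
      · rw [hF, Set.indicator_of_notMem (show Fin.cons y x' ∉
            {x : Fin (m + 1) → ℝ | (∀ i, |x i| ≤ t) ∧ C ≤ ∏ i, |x i|} by
            simp only [Set.mem_setOf_eq, hall, hprod]; exact hc),
          Set.indicator_of_notMem hc]
    simp_rw [hFy]
    by_cases hx1 : ∀ j, |x' j| ≤ t
    · by_cases hx2 : C / t ≤ P
      · have hPpos : 0 < P := lt_of_lt_of_le (div_pos hC ht0) hx2
        have haP : 0 < C / P := div_pos hC hPpos
        have hQnn : 0 ≤ Q⁻¹ := by rw [hQP]; positivity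
        have hseteq : {y : ℝ | (|y| ≤ t ∧ ∀ j, |x' j| ≤ t) ∧ C ≤ |y| * P}
            = {y : ℝ | C / P ≤ |y| ∧ |y| ≤ t} := by
          ext y
          simp only [Set.mem_setOf_eq, hx1, and_true]
          rw [div_le_iff₀ hPpos]
          tauto
        have hval : ∀ y : ℝ, Set.indicator {y : ℝ | C / P ≤ |y| ∧ |y| ≤ t}
              (fun y => ENNReal.ofReal (y ^ 2 * Q)⁻¹) y
            = Set.indicator {y : ℝ | C / P ≤ |y| ∧ |y| ≤ t}
              (fun y => ENNReal.ofReal ((y ^ 2)⁻¹)) y * ENNReal.ofReal Q⁻¹ := by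
          intro y
          by_cases hy : y ∈ {y : ℝ | C / P ≤ |y| ∧ |y| ≤ t}
          · rw [Set.indicator_of_mem hy, Set.indicator_of_mem hy, mul_inv,
              ENNReal.ofReal_mul (inv_nonneg.2 (sq_nonneg _))]
          · rw [Set.indicator_of_notMem hy, Set.indicator_of_notMem hy, zero_mul]
        rw [hseteq]
        simp_rw [hval]
        rw [lintegral_mul_const' _ _ ENNReal.ofReal_ne_top]
        have hkey : (2 * (C / P)⁻¹) * Q⁻¹ = (2 * C⁻¹) * P⁻¹ := by
          rw [hQP]
          field_simp
        calc (∫⁻ y : ℝ, Set.indicator {y : ℝ | C / P ≤ |y| ∧ |y| ≤ t}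
                (fun y => ENNReal.ofReal ((y ^ 2)⁻¹)) y) * ENNReal.ofReal Q⁻¹
            ≤ ENNReal.ofReal (2 * (C / P)⁻¹) * ENNReal.ofReal Q⁻¹ :=
              mul_le_mul_left (lint_abs_invsq_le (C / P) t haP) _
          _ = ENNReal.ofReal ((2 * (C / P)⁻¹) * Q⁻¹) :=
              (ENNReal.ofReal_mul (by positivity)).symm
          _ = ENNReal.ofReal ((2 * C⁻¹) * P⁻¹) := by rw [hkey]
          _ = ENNReal.ofReal (2 * C⁻¹) * ENNReal.ofReal P⁻¹ :=
              ENNReal.ofReal_mul (by positivity)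
          _ = ENNReal.ofReal (2 * C⁻¹) *
              Set.indicator {x : Fin m → ℝ | (∀ i, |x i| ≤ t) ∧ C / t ≤ ∏ i, |x i|}
                (fun x => ENNReal.ofReal (∏ i, |x i|)⁻¹) x' := by
              rw [Set.indicator_of_mem (show x' ∈
                {x : Fin m → ℝ | (∀ i, |x i| ≤ t) ∧ C / t ≤ ∏ i, |x i|} from ⟨hx1, hx2⟩)]
      · have hempty : {y : ℝ | (|y| ≤ t ∧ ∀ j, |x' j| ≤ t) ∧ C ≤ |y| * P} = ∅ := by
          ext y
          simp only [Set.mem_setOf_eq, Set.mem_empty_iff_false, iff_false, not_and]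
          rintro ⟨hy, -⟩ hCle
          apply hx2
          rw [div_le_iff₀ ht0]
          calc C ≤ |y| * P := hCle
            _ ≤ t * P := mul_le_mul_of_nonneg_right hy hPnn
            _ = P * t := mul_comm _ _
        simp only [hempty, Set.indicator_empty, Pi.zero_apply, lintegral_zero]
        exact zero_le
    · have hempty : {y : ℝ | (|y| ≤ t ∧ ∀ j, |x' j| ≤ t) ∧ C ≤ |y| * P} = ∅ := by
        ext y
        simp only [Set.mem_setOf_eq, Set.mem_empty_iff_false, iff_false, not_and]
        rintro ⟨-, hy⟩
        exact absurd hy hx1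
      simp only [hempty, Set.indicator_empty, Pi.zero_apply, lintegral_zero]
      exact zero_le
  have harg : t ^ m / (C / t) = t ^ (m + 1) / C := by
    field_simp
    ring
  calc ∫⁻ x : Fin (m + 1) → ℝ, F x
      = ∫⁻ x' : Fin m → ℝ, ∫⁻ y : ℝ, F (e.symm (y, x')) := hsplit
    _ ≤ ∫⁻ x' : Fin m → ℝ, ENNReal.ofReal (2 * C⁻¹) *
          Set.indicator {x : Fin m → ℝ | (∀ i, |x i| ≤ t) ∧ C / t ≤ ∏ i, |x i|}
            (fun x => ENNReal.ofReal (∏ i, |x i|)⁻¹) x' := lintegral_mono inner_bd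
    _ = ENNReal.ofReal (2 * C⁻¹) * ∫⁻ x' : Fin m → ℝ,
          Set.indicator {x : Fin m → ℝ | (∀ i, |x i| ≤ t) ∧ C / t ≤ ∏ i, |x i|}
            (fun x => ENNReal.ofReal (∏ i, |x i|)⁻¹) x' :=
        lintegral_const_mul' _ _ ENNReal.ofReal_ne_top
    _ ≤ ENNReal.ofReal (2 * C⁻¹) * ENNReal.ofReal ((2 * Real.log (t ^ m / (C / t))) ^ m) :=
        mul_le_mul_right (key m (C / t) t (div_pos hC ht0) ht) _
    _ ≤ ENNReal.ofReal ((2 * C⁻¹) * (2 * Real.log (t ^ (m + 1) / C)) ^ m) := by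
        rw [harg, ← ENNReal.ofReal_mul (by positivity)]

/-- For `d ≥ 2`, `C, A > 0`, the integral of `1/(l₁²⋯l_d²)` over
`{l ∈ ℝ^d : A ≤ ‖l‖ ≤ t, |l₁⋯l_d| ≥ C}` is `O((log t)^{d-1})`. -/
theorem integral_inv_prod_sq_isBigO (d : ℕ) (hd : 2 ≤ d) (C A : ℝ) (hC : 0 < C) (hA : 0 < A) :
    (fun t : ℝ =>
      ∫ l in {l : EuclideanSpace ℝ (Fin d) |
          A ≤ ‖l‖ ∧ ‖l‖ ≤ t ∧ C ≤ |∏ i, l i|},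
        1 / (∏ i, (l i) ^ 2)) =O[atTop] (fun t : ℝ => (Real.log t) ^ (d - 1)) := by
  obtain ⟨m, rfl⟩ : ∃ m, d = m + 1 := ⟨d - 1, by omega⟩
  have hdm : (m + 1) - 1 = m := rfl
  set c : ℝ := (2 * C⁻¹) * (2 * ((m + 1) + |Real.log C|)) ^ m with hc
  rw [Asymptotics.isBigO_iff]
  refine ⟨c, ?_⟩
  filter_upwards [eventually_ge_atTop (max C (Real.exp 1))] with t ht
  have htC : C ≤ t := le_trans (le_max_left _ _) ht
  have hte : Real.exp 1 ≤ t := le_trans (le_max_right _ _) ht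
  have ht1 : (1 : ℝ) ≤ t := le_trans (by
    have := Real.add_one_le_exp (1 : ℝ); linarith) hte
  have ht0 : (0 : ℝ) < t := lt_of_lt_of_le one_pos ht1
  have hlogt : 1 ≤ Real.log t := (Real.le_log_iff_exp_le ht0).2 hte
  -- the euclidean measurable equiv
  set e := (MeasurableEquiv.toLp 2 (Fin (m + 1) → ℝ)).symm with he
  have hvol := EuclideanSpace.volume_preserving_symm_measurableEquiv_toLp (Fin (m + 1))
  set Tpi : Set (Fin (m + 1) → ℝ) :=
    {x : Fin (m + 1) → ℝ | (∀ i, |x i| ≤ t) ∧ C ≤ ∏ i, |x i|} with hTpi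
  set gpi : (Fin (m + 1) → ℝ) → ℝ≥0∞ :=
    fun x => ENNReal.ofReal (∏ i, (x i) ^ 2)⁻¹ with hgpi
  have hgm : Measurable gpi :=
    ((Finset.measurable_prod _ fun i _ =>
      (measurable_pi_apply i).pow_const 2).inv).ennreal_ofReal
  set S : Set (EuclideanSpace ℝ (Fin (m + 1))) :=
    {l : EuclideanSpace ℝ (Fin (m + 1)) | A ≤ ‖l‖ ∧ ‖l‖ ≤ t ∧ C ≤ |∏ i, l i|} with hS
  -- coordinates bounded by norm
  have habs : ∀ (l : EuclideanSpace ℝ (Fin (m + 1))) (i : Fin (m + 1)), |l i| ≤ ‖l‖ := by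
    intro l i
    rw [EuclideanSpace.norm_eq, ← Real.sqrt_sq_eq_abs]
    apply Real.sqrt_le_sqrt
    have h := Finset.single_le_sum (f := fun j => ‖l j‖ ^ 2)
      (fun j _ => sq_nonneg _) (Finset.mem_univ i)
    simpa [Real.norm_eq_abs, sq_abs] using h
  have hsub : S ⊆ e ⁻¹' Tpi := by
    intro l hl
    obtain ⟨-, hl2, hl3⟩ := hl
    constructor
    · exact fun i => le_trans (habs l i) hl2
    · calc C ≤ |∏ i, l i| := hl3
        _ = ∏ i, |l i| := Finset.abs_prod _ _
  -- the integrand is nonnegative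
  have hnn : ∀ l : EuclideanSpace ℝ (Fin (m + 1)), 0 ≤ 1 / (∏ i, (l i) ^ 2) := by
    intro l
    have : (0:ℝ) ≤ ∏ i, (l i) ^ 2 := Finset.prod_nonneg fun i _ => sq_nonneg _
    positivity
  have hmeasE : Measurable (fun l : EuclideanSpace ℝ (Fin (m + 1)) => 1 / (∏ i, (l i) ^ 2)) := by
    simp_rw [one_div]
    exact (Finset.measurable_prod _ fun i _ =>
      ((measurable_pi_apply i).comp e.measurable).pow_const 2).inv
  -- rewrite integral as toReal of lintegral
  have hint_eq : (∫ l in S, 1 / (∏ i, (l i) ^ 2))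
      = (∫⁻ l in S, ENNReal.ofReal (1 / (∏ i, (l i) ^ 2))).toReal := by
    rw [integral_eq_lintegral_of_nonneg_ae (ae_of_all _ hnn)
      (hmeasE.aestronglyMeasurable)]
  -- bound the lintegral
  have hlint : (∫⁻ l in S, ENNReal.ofReal (1 / (∏ i, (l i) ^ 2)))
      ≤ ENNReal.ofReal ((2 * C⁻¹) * (2 * Real.log (t ^ (m + 1) / C)) ^ m) := by
    have h1 : (∫⁻ l in S, ENNReal.ofReal (1 / (∏ i, (l i) ^ 2)))
        ≤ ∫⁻ l in e ⁻¹' Tpi, ENNReal.ofReal (1 / (∏ i, (l i) ^ 2)) :=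
      lintegral_mono_set hsub
    have hTmeas : MeasurableSet (e ⁻¹' Tpi) := (Jset_meas (m + 1) t C).preimage e.measurable
    have h2 : (∫⁻ l in e ⁻¹' Tpi, ENNReal.ofReal (1 / (∏ i, (l i) ^ 2)))
        = ∫⁻ l : EuclideanSpace ℝ (Fin (m + 1)), Set.indicator Tpi gpi (e l) := by
      rw [← lintegral_indicator hTmeas]
      refine lintegral_congr fun l => ?_
      by_cases hl : e l ∈ Tpi
      · rw [Set.indicator_of_mem (show l ∈ ⇑e ⁻¹' Tpi from hl), Set.indicator_of_mem hl,
          hgpi, one_div]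
        rfl
      · rw [Set.indicator_of_notMem (show l ∉ ⇑e ⁻¹' Tpi from hl), Set.indicator_of_notMem hl]
    have h3 : (∫⁻ l : EuclideanSpace ℝ (Fin (m + 1)), Set.indicator Tpi gpi (e l))
        = ∫⁻ x : Fin (m + 1) → ℝ, Set.indicator Tpi gpi x :=
      hvol.lintegral_comp (hgm.indicator (Jset_meas (m + 1) t C))
    calc (∫⁻ l in S, ENNReal.ofReal (1 / (∏ i, (l i) ^ 2)))
        ≤ ∫⁻ l in e ⁻¹' Tpi, ENNReal.ofReal (1 / (∏ i, (l i) ^ 2)) := h1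
      _ = ∫⁻ x : Fin (m + 1) → ℝ, Set.indicator Tpi gpi x := by rw [h2, h3]
      _ ≤ ENNReal.ofReal ((2 * C⁻¹) * (2 * Real.log (t ^ (m + 1) / C)) ^ m) :=
          key2 m C t hC ht1
  -- nonnegativity of the bound
  have hlogarg : 0 ≤ Real.log (t ^ (m + 1) / C) := by
    apply Real.log_nonneg
    rw [le_div_iff₀ hC]
    calc (1:ℝ) * C = C := one_mul C
      _ ≤ t := htC
      _ = t ^ 1 := (pow_one t).symm
      _ ≤ t ^ (m + 1) := pow_le_pow_right₀ ht1 (by omega)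
  have hM0 : 0 ≤ (2 * C⁻¹) * (2 * Real.log (t ^ (m + 1) / C)) ^ m := by positivity
  have hft : (∫ l in S, 1 / (∏ i, (l i) ^ 2))
      ≤ (2 * C⁻¹) * (2 * Real.log (t ^ (m + 1) / C)) ^ m := by
    rw [hint_eq]
    exact ENNReal.toReal_le_of_le_ofReal hM0 hlint
  -- compare with c * (log t)^m
  have hL : Real.log (t ^ (m + 1) / C) ≤ ((m + 1) + |Real.log C|) * Real.log t := by
    rw [Real.log_div (ne_of_gt (pow_pos ht0 _)) (ne_of_gt hC), Real.log_pow]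
    have h1 : -Real.log C ≤ |Real.log C| := neg_le_abs _
    have h2 : |Real.log C| ≤ |Real.log C| * Real.log t := by
      nlinarith [abs_nonneg (Real.log C)]
    push_cast
    nlinarith [abs_nonneg (Real.log C)]
  have hpow : (2 * Real.log (t ^ (m + 1) / C)) ^ m
      ≤ (2 * ((m + 1) + |Real.log C|)) ^ m * Real.log t ^ m := by
    rw [← mul_pow]
    apply pow_le_pow_left₀ (by positivity)
    nlinarith
  have hfinal : (∫ l in S, 1 / (∏ i, (l i) ^ 2)) ≤ c * Real.log t ^ m := by
    calc (∫ l in S, 1 / (∏ i, (l i) ^ 2))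
        ≤ (2 * C⁻¹) * (2 * Real.log (t ^ (m + 1) / C)) ^ m := hft
      _ ≤ (2 * C⁻¹) * ((2 * ((m + 1) + |Real.log C|)) ^ m * Real.log t ^ m) := by
          apply mul_le_mul_of_nonneg_left hpow (by positivity)
      _ = c * Real.log t ^ m := by rw [hc]; ring
  have hfnn : 0 ≤ ∫ l in S, 1 / (∏ i, (l i) ^ 2) := integral_nonneg hnn
  rw [hdm]
  rw [Real.norm_eq_abs, Real.norm_eq_abs, abs_of_nonneg hfnn,
    abs_of_nonneg (pow_nonneg (by linarith) m)]
  exact hfinal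
end

section
/- Fix x ∈ ℝ and let Δ(t,x) = 4(⌊t+x⌋ − ⌈−t+x⌉ + 1 − 2t). Let y ∈ [0,1] be the fractional distance y = |t_{2,0} − t_{1,0}|, where t_{1,0} is the smallest t ≥ 0 with t + x ∈ ℤ and t_{2,0} is the smallest t ≥ 0 with −t + x ∈ ℤ. Then for every natural number k, (1/T)∫₀^T Δ(t,x)^k dt converges as T → ∞ to a_k = 4^k (1 + (−1)^k)(y^{k+1} + (1−y)^{k+1})/(2(k+1)). -/
open MeasureTheory Filter Real Topology

lemma my_intervalIntegrable {g : ℝ → ℝ} (hm : Measurable g) {M : ℝ}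
    (hb : ∀ t, |g t| ≤ M) (a b : ℝ) : IntervalIntegrable g volume a b :=
  (intervalIntegrable_const (c := M)).mono_fun' hm.aestronglyMeasurable
    (Filter.Eventually.of_forall fun t => by simpa using hb t)

lemma avg_tendsto {g : ℝ → ℝ} {M : ℝ} (hp : Function.Periodic g 1)
    (hint : ∀ a b : ℝ, IntervalIntegrable g volume a b)
    (hb : ∀ t, |g t| ≤ M) :
    Tendsto (fun T : ℝ => (1 / T) * ∫ t in (0:ℝ)..T, g t) atTop
      (𝓝 (∫ t in (0:ℝ)..1, g t)) := by
  set I := ∫ t in (0:ℝ)..1, g t with hI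
  have hM : 0 ≤ M := le_trans (abs_nonneg _) (hb 0)
  have key : ∀ T : ℝ, 1 ≤ T →
      |(1 / T) * (∫ t in (0:ℝ)..T, g t) - I| ≤ (M + |I|) / T := by
    intro T hT
    have hT0 : (0 : ℝ) < T := lt_of_lt_of_le one_pos hT
    set n : ℤ := ⌊T⌋ with hn
    have hn0 : (0:ℝ) ≤ (n:ℝ) := by exact_mod_cast Int.floor_nonneg.2 (by linarith)
    have hnT : (n:ℝ) ≤ T := Int.floor_le T
    have hTn : T < (n:ℝ) + 1 := Int.lt_floor_add_one T
    have h1 : (∫ t in (0:ℝ)..(n:ℝ), g t) = (n:ℝ) * I := by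
      have := hp.intervalIntegral_add_zsmul_eq n 0 hint
      simpa [zsmul_eq_mul] using this
    have hsplit : (∫ t in (0:ℝ)..T, g t) = (n:ℝ) * I + ∫ t in ((n:ℝ))..T, g t := by
      rw [← h1, intervalIntegral.integral_add_adjacent_intervals (hint 0 n) (hint n T)]
    have hR : |∫ t in ((n:ℝ))..T, g t| ≤ M := by
      have h2 := intervalIntegral.norm_integral_le_of_norm_le_const
        (C := M) (a := (n:ℝ)) (b := T) (f := g)
        (fun t _ => by simpa using hb t)
      rw [Real.norm_eq_abs] at h2
      calc |∫ t in ((n:ℝ))..T, g t| ≤ M * |T - n| := h2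
        _ ≤ M * 1 := by
            apply mul_le_mul_of_nonneg_left _ hM
            rw [abs_of_nonneg (by linarith)]; linarith
        _ = M := mul_one M
    rw [hsplit]
    have heq : (1 / T) * ((n:ℝ) * I + ∫ t in ((n:ℝ))..T, g t) - I
        = (((n:ℝ) - T) / T) * I + (∫ t in ((n:ℝ))..T, g t) / T := by
      field_simp; ring
    rw [heq]
    calc |(((n:ℝ) - T) / T) * I + (∫ t in ((n:ℝ))..T, g t) / T|
        ≤ |(((n:ℝ) - T) / T) * I| + |(∫ t in ((n:ℝ))..T, g t) / T| := abs_add_le _ _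
      _ ≤ (1 / T) * |I| + M / T := by
          apply add_le_add
          · rw [abs_mul, abs_div, abs_of_pos hT0]
            apply mul_le_mul_of_nonneg_right _ (abs_nonneg I)
            rw [div_le_div_iff₀ hT0 hT0]
            rw [abs_of_nonpos (by linarith)]
            nlinarith
          · rw [abs_div, abs_of_pos hT0]
            exact div_le_div_of_nonneg_right hR hT0.le
      _ = (M + |I|) / T := by ring
  have hlim : Tendsto (fun T : ℝ => (M + |I|) / T) atTop (𝓝 0) :=
    tendsto_const_nhds.div_atTop tendsto_id
  rw [tendsto_iff_norm_sub_tendsto_zero]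
  apply squeeze_zero_norm' _ hlim
  filter_upwards [eventually_ge_atTop (1:ℝ)] with T hT
  simpa [Real.norm_eq_abs, abs_abs] using key T hT

lemma integral_linear_pow (a u v : ℝ) (k : ℕ) :
    ∫ t in u..v, (4 * (a - 2 * t)) ^ k
      = ((4*(a - 2*u))^(k+1) - (4*(a - 2*v))^(k+1)) / (8*((k:ℝ)+1)) := by
  have h := intervalIntegral.integral_comp_mul_add (a := u) (b := v)
      (f := fun y : ℝ => y ^ k) (c := (-8 : ℝ)) (by norm_num) (4 * a)
  have he : ∀ t : ℝ, (4 * (a - 2 * t)) ^ k = ((-8) * t + 4 * a) ^ k := by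
    intro t; ring_nf
  simp only [he]
  rw [h, integral_pow]
  have e1 : (-8) * u + 4 * a = 4*(a - 2*u) := by ring
  have e2 : (-8) * v + 4 * a = 4*(a - 2*v) := by ring
  rw [e1, e2]
  have hk : ((k:ℝ) + 1) ≠ 0 := by positivity
  rw [smul_eq_mul]
  field_simp
  ring

/-- With `Δ(t,x) = 4(⌊t+x⌋ − ⌈−t+x⌉ + 1 − 2t)`, `t₁₀` the smallest `t ≥ 0` with `t + x ∈ ℤ`,
`t₂₀` the smallest `t ≥ 0` with `−t + x ∈ ℤ` and `y = |t₂₀ − t₁₀|`, for every `k ∈ ℕ` the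
moment `(1/T)∫₀^T Δ(t,x)^k dt` converges to
`a_k = 4^k (1 + (−1)^k)(y^{k+1} + (1−y)^{k+1})/(2(k+1))` as `T → ∞`. -/
theorem moments_of_delta_tendsto (x : ℝ) (t₁₀ t₂₀ y : ℝ)
    (h₁ : IsLeast {t : ℝ | 0 ≤ t ∧ ∃ n : ℤ, t + x = (n : ℝ)} t₁₀)
    (h₂ : IsLeast {t : ℝ | 0 ≤ t ∧ ∃ n : ℤ, -t + x = (n : ℝ)} t₂₀)
    (hy : y = |t₂₀ - t₁₀|) (k : ℕ) :
    Tendsto (fun T : ℝ =>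
        (1 / T) * ∫ t in (0 : ℝ)..T,
          (4 * ((⌊t + x⌋ : ℝ) - (⌈-t + x⌉ : ℝ) + 1 - 2 * t)) ^ k) atTop
      (𝓝 ((4 : ℝ) ^ k * (1 + (-1 : ℝ) ^ k) * (y ^ (k + 1) + (1 - y) ^ (k + 1)) /
        (2 * ((k : ℝ) + 1)))) := by
  obtain ⟨⟨ht₁0, n₁, hn₁⟩, hmin₁⟩ := h₁
  obtain ⟨⟨ht₂0, n₂, hn₂⟩, hmin₂⟩ := h₂
  have ht₁1 : t₁₀ < 1 := by
    have hmem : Int.fract (-x) ∈ {t : ℝ | 0 ≤ t ∧ ∃ n : ℤ, t + x = (n : ℝ)} :=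
      ⟨Int.fract_nonneg _, ⟨-⌊-x⌋, by simp only [Int.fract]; push_cast; ring⟩⟩
    exact lt_of_le_of_lt (hmin₁ hmem) (Int.fract_lt_one _)
  have ht₂1 : t₂₀ < 1 := by
    have hmem : Int.fract x ∈ {t : ℝ | 0 ≤ t ∧ ∃ n : ℤ, -t + x = (n : ℝ)} :=
      ⟨Int.fract_nonneg _, ⟨⌊x⌋, by simp only [Int.fract]; push_cast; ring⟩⟩
    exact lt_of_le_of_lt (hmin₂ hmem) (Int.fract_lt_one _)
  set g : ℝ → ℝ := fun t => (4 * (1 - Int.fract (t + x) - Int.fract (t - x))) ^ k with hg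
  have hgeq : ∀ t : ℝ, (4 * ((⌊t + x⌋ : ℝ) - (⌈-t + x⌉ : ℝ) + 1 - 2 * t)) ^ k = g t := by
    intro t
    have hc : ((⌈-t + x⌉ : ℤ) : ℝ) = -((⌊t - x⌋ : ℤ) : ℝ) := by
      rw [show -t + x = -(t - x) by ring, Int.ceil_neg]; push_cast; ring
    simp only [hg, Int.fract, hc]
    congr 1; push_cast; ring
  have hper : Function.Periodic g 1 := by
    intro t
    simp only [hg]
    rw [show t + 1 + x = (t + x) + 1 by ring, show t + 1 - x = (t - x) + 1 by ring,
      Int.fract_add_one, Int.fract_add_one]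
  have hbd : ∀ t, |g t| ≤ 4 ^ k := by
    intro t
    have h1 := Int.fract_nonneg (t + x); have h2 := Int.fract_lt_one (t + x)
    have h3 := Int.fract_nonneg (t - x); have h4 := Int.fract_lt_one (t - x)
    rw [hg, abs_pow]
    apply pow_le_pow_left₀ (abs_nonneg _)
    rw [abs_le]; constructor <;> nlinarith
  have hmeas : Measurable g := by
    apply Measurable.pow_const
    apply Measurable.const_mul
    exact (measurable_const.sub (measurable_id.add_const x).fract).sub
      (measurable_id.sub_const x).fract
  have hint : ∀ a b : ℝ, IntervalIntegrable g volume a b :=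
    fun a b => my_intervalIntegrable hmeas hbd a b
  set d : ℝ := Int.fract (t₂₀ - t₁₀) with hd
  set b : ℝ := t₁₀ + d with hb
  have hd0 : 0 ≤ d := Int.fract_nonneg _
  have hd1 : d < 1 := Int.fract_lt_one _
  have hbx : b - x = ((-n₂ - ⌊t₂₀ - t₁₀⌋ : ℤ) : ℝ) := by
    simp only [hb, hd, Int.fract]
    push_cast
    linarith [hn₂]
  have hfr1 : ∀ t : ℝ, Int.fract (t + x) = Int.fract (t - t₁₀) := by
    intro t
    rw [show t + x = (t - t₁₀) + (t₁₀ + x) by ring, hn₁, Int.fract_add_intCast]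
  have hfr2 : ∀ t : ℝ, Int.fract (t - x) = Int.fract (t - b) := by
    intro t
    rw [show t - x = (t - b) + (b - x) by ring, hbx, Int.fract_add_intCast]
  have hI1 : (∫ t in t₁₀..b, g t) = ∫ t in t₁₀..b, (4 * ((t₁₀ + b) - 2 * t)) ^ k := by
    apply intervalIntegral.integral_congr_ae
    have hne : ∀ᵐ (t : ℝ), t ≠ b := by
      simp only [ae_iff, not_not, Set.setOf_eq_eq_singleton]
      exact measure_singleton b
    filter_upwards [hne] with t htb ht
    rw [Set.uIoc_of_le (by linarith : t₁₀ ≤ b)] at ht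
    obtain ⟨ht1, ht2⟩ := ht
    have htb' : t < b := lt_of_le_of_ne ht2 htb
    have e1 : Int.fract (t + x) = t - t₁₀ := by
      rw [hfr1]; exact Int.fract_eq_self.2 ⟨by linarith, by linarith⟩
    have e2 : Int.fract (t - x) = t - b + 1 := by
      rw [hfr2, ← Int.fract_add_one]
      exact Int.fract_eq_self.2 ⟨by linarith, by linarith⟩
    simp only [hg, e1, e2]
    congr 1; ring
  have hI2 : (∫ t in b..(t₁₀+1), g t)
      = ∫ t in b..(t₁₀+1), (4 * ((1 + t₁₀ + b) - 2 * t)) ^ k := by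
    apply intervalIntegral.integral_congr_ae
    have hne : ∀ᵐ (t : ℝ), t ≠ t₁₀ + 1 := by
      simp only [ae_iff, not_not, Set.setOf_eq_eq_singleton]
      exact measure_singleton _
    filter_upwards [hne] with t htb ht
    rw [Set.uIoc_of_le (by linarith : b ≤ t₁₀ + 1)] at ht
    obtain ⟨ht1, ht2⟩ := ht
    have htb' : t < t₁₀ + 1 := lt_of_le_of_ne ht2 htb
    have e1 : Int.fract (t + x) = t - t₁₀ := by
      rw [hfr1]; exact Int.fract_eq_self.2 ⟨by linarith, by linarith⟩
    have e2 : Int.fract (t - x) = t - b := by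
      rw [hfr2]; exact Int.fract_eq_self.2 ⟨by linarith, by linarith⟩
    simp only [hg, e1, e2]
    congr 1; ring
  have hsum : (∫ t in (0:ℝ)..1, g t)
      = (∫ t in t₁₀..b, g t) + ∫ t in b..(t₁₀+1), g t := by
    rw [intervalIntegral.integral_add_adjacent_intervals (hint t₁₀ b) (hint b (t₁₀+1))]
    have := hper.intervalIntegral_add_eq t₁₀ 0
    simpa using this.symm
  have hv1 : (∫ t in t₁₀..b, (4 * ((t₁₀ + b) - 2 * t)) ^ k)
      = ((4*d)^(k+1) - (-(4*d))^(k+1)) / (8*((k:ℝ)+1)) := by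
    rw [integral_linear_pow, show 4*((t₁₀ + b) - 2*t₁₀) = 4*d by rw [hb]; ring,
      show 4*((t₁₀ + b) - 2*b) = -(4*d) by rw [hb]; ring]
  have hv2 : (∫ t in b..(t₁₀+1), (4 * ((1 + t₁₀ + b) - 2 * t)) ^ k)
      = ((4*(1-d))^(k+1) - (-(4*(1-d)))^(k+1)) / (8*((k:ℝ)+1)) := by
    rw [integral_linear_pow, show 4*((1 + t₁₀ + b) - 2*b) = 4*(1-d) by rw [hb]; ring,
      show 4*((1 + t₁₀ + b) - 2*(t₁₀+1)) = -(4*(1-d)) by rw [hb]; ring]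
  have hyd : d = y ∨ d = 1 - y := by
    rcases le_or_gt t₁₀ t₂₀ with h | h
    · left
      rw [hd, Int.fract_eq_self.2 ⟨by linarith, by linarith⟩, hy,
        abs_of_nonneg (by linarith)]
    · right
      rw [hy, abs_of_neg (by linarith), hd, ← Int.fract_add_one,
        Int.fract_eq_self.2 ⟨by linarith, by linarith⟩]
      ring
  have hfin : ((4*d)^(k+1) - (-(4*d))^(k+1)) / (8*((k:ℝ)+1))
      + ((4*(1-d))^(k+1) - (-(4*(1-d)))^(k+1)) / (8*((k:ℝ)+1))
      = (4 : ℝ) ^ k * (1 + (-1 : ℝ) ^ k) * (y ^ (k + 1) + (1 - y) ^ (k + 1)) /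
        (2 * ((k : ℝ) + 1)) := by
    have hk : ((k:ℝ) + 1) ≠ 0 := by positivity
    have hneg : ∀ z : ℝ, (-z)^(k+1) = -((-1:ℝ)^k * z^(k+1)) := by
      intro z
      rw [neg_pow, pow_succ]
      ring
    have h4 : ∀ z : ℝ, ((4:ℝ)*z)^(k+1) = 4 * 4^k * z^(k+1) := by
      intro z; rw [mul_pow, pow_succ]; ring
    rcases hyd with h | h <;> rw [h] <;> simp only [hneg, h4] <;> field_simp <;> ring
  have hfun : (fun T : ℝ => (1 / T) * ∫ t in (0:ℝ)..T,
        (4 * ((⌊t + x⌋ : ℝ) - (⌈-t + x⌉ : ℝ) + 1 - 2 * t)) ^ k)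
      = fun T : ℝ => (1 / T) * ∫ t in (0:ℝ)..T, g t := by
    funext T
    congr 1
    exact intervalIntegral.integral_congr fun t _ => hgeq t
  rw [hfun]
  have hval : (∫ t in (0:ℝ)..1, g t)
      = (4 : ℝ) ^ k * (1 + (-1 : ℝ) ^ k) * (y ^ (k + 1) + (1 - y) ^ (k + 1)) /
        (2 * ((k : ℝ) + 1)) := by
    rw [hsum, hI1, hI2, hv1, hv2]; exact hfin
  exact hval ▸ avg_tendsto hper hint hbd
end

section
/- Let F : ℝ₊ → ℝ be measurable, and suppose there is a probability measure μ on ℝ such that for every bounded continuous g : ℝ → ℝ, (1/T)∫₀^T g(F(t)) dt → ∫ g dμ as T → ∞. Then for every probability density ρ on [0,1] and every bounded continuous g, (1/T)∫₀^T g(F(t)) ρ(t/T) dt → ∫ g dμ as T → ∞. -/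
open MeasureTheory Filter Real Topology BoundedContinuousFunction

private lemma phi_intInt (F : ℝ → ℝ) (hF : Measurable F) (g : ℝ →ᵇ ℝ)
    (T a b : ℝ) : IntervalIntegrable (fun u => g (F (T * u))) volume a b := by
  have hm : Measurable fun u : ℝ => g (F (T * u)) :=
    g.continuous.measurable.comp (hF.comp (measurable_const_mul T))
  rw [intervalIntegrable_iff]
  refine Integrable.mono' (g := fun _ => ‖g‖) ?_ hm.aestronglyMeasurable ?_
  · exact integrableOn_const measure_Ioc_lt_top.ne
  · exact Eventually.of_forall fun x => g.norm_coe_le_norm _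

private lemma psi_tendsto (F : ℝ → ℝ) (g : ℝ →ᵇ ℝ) (I : ℝ)
    (h : Tendsto (fun T : ℝ => (1 / T) * ∫ t in (0:ℝ)..T, g (F t)) atTop (𝓝 I))
    {a : ℝ} (ha : 0 ≤ a) :
    Tendsto (fun T : ℝ => ∫ u in (0:ℝ)..a, g (F (T * u))) atTop (𝓝 (a * I)) := by
  rcases eq_or_lt_of_le ha with rfl | ha'
  · simp
  · have h1 : Tendsto (fun T : ℝ => T * a) atTop atTop :=
      Tendsto.atTop_mul_const ha' tendsto_id
    have h2 := (h.comp h1).const_mul a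
    simp only [Function.comp_def] at h2
    refine h2.congr' ?_
    filter_upwards [eventually_gt_atTop 0] with T hT
    rw [intervalIntegral.integral_comp_mul_left (fun t => g (F t)) hT.ne']
    simp only [mul_zero, smul_eq_mul]
    field_simp


private lemma step_approx (φ r : ℝ → ℝ) (hφ : ∀ a b : ℝ, IntervalIntegrable φ volume a b)
    (hr : Continuous r) (C ε₁ : ℝ) (hC : 0 ≤ C) (hε₁ : 0 ≤ ε₁)
    (hφb : ∀ u, |φ u| ≤ C) (n : ℕ) (hn : 0 < n)
    (hclose : ∀ j : ℕ, j < n → ∀ u ∈ Set.Ioc ((j:ℝ)/n) (((j:ℝ)+1)/n),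
      |r u - r ((j:ℝ)/n)| ≤ ε₁) :
    |(∫ u in (0:ℝ)..1, φ u * r u)
      - ∑ j ∈ Finset.range n, r ((j:ℝ)/n) * ∫ u in ((j:ℝ)/n)..(((j:ℝ)+1)/n), φ u| ≤ C * ε₁ := by
  have hn' : (n:ℝ) ≠ 0 := Nat.cast_ne_zero.2 hn.ne'
  have hn0 : (0:ℝ) < n := by exact_mod_cast hn
  have hint : ∀ j : ℕ, j < n → IntervalIntegrable (fun u => φ u * r u) volume
      ((fun k : ℕ => (k:ℝ)/n) j) ((fun k : ℕ => (k:ℝ)/n) (j+1)) :=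
    fun j _ => (hφ _ _).mul_continuousOn hr.continuousOn
  have hsplit : (∫ u in (0:ℝ)..1, φ u * r u)
      = ∑ j ∈ Finset.range n, ∫ u in ((j:ℝ)/n)..(((j:ℝ)+1)/n), φ u * r u := by
    have key := intervalIntegral.sum_integral_adjacent_intervals (a := fun k : ℕ => (k:ℝ)/n)
      (μ := volume) (f := fun u => φ u * r u) (n := n) hint
    simp only [Nat.cast_zero, zero_div, Nat.cast_succ] at key
    rw [div_self hn'] at key
    exact key.symm
  rw [hsplit, ← Finset.sum_sub_distrib]
  refine le_trans (Finset.abs_sum_le_sum_abs _ _) ?_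
  have hterm : ∀ j ∈ Finset.range n,
      |(∫ u in ((j:ℝ)/n)..(((j:ℝ)+1)/n), φ u * r u)
        - r ((j:ℝ)/n) * ∫ u in ((j:ℝ)/n)..(((j:ℝ)+1)/n), φ u| ≤ C * ε₁ * (1/n) := by
    intro j hj
    have hj' := Finset.mem_range.1 hj
    have hdiff : (((j:ℝ)+1)/n) - ((j:ℝ)/n) = 1/n := by ring
    have e1 : r ((j:ℝ)/n) * ∫ u in ((j:ℝ)/n)..(((j:ℝ)+1)/n), φ u
        = ∫ u in ((j:ℝ)/n)..(((j:ℝ)+1)/n), φ u * r ((j:ℝ)/n) := by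
      rw [intervalIntegral.integral_mul_const]; ring
    rw [e1, ← intervalIntegral.integral_sub ((hφ _ _).mul_continuousOn hr.continuousOn)
      ((hφ _ _).mul_const _)]
    have := intervalIntegral.norm_integral_le_of_norm_le_const
      (f := fun u => φ u * r u - φ u * r ((j:ℝ)/n)) (C := C * ε₁)
      (a := (j:ℝ)/n) (b := ((j:ℝ)+1)/n) ?_
    · rw [Real.norm_eq_abs] at this
      refine le_trans this ?_
      rw [hdiff, abs_of_nonneg (by positivity : (0:ℝ) ≤ 1/(n:ℝ))]
    · intro x hx
      rw [Set.uIoc_of_le (by gcongr <;> linarith)] at hx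
      have : φ x * r x - φ x * r ((j:ℝ)/n) = φ x * (r x - r ((j:ℝ)/n)) := by ring
      simp only [Real.norm_eq_abs]
      rw [this, abs_mul]
      exact mul_le_mul (hφb x) (hclose j hj' x hx) (abs_nonneg _) hC
  refine le_trans (Finset.sum_le_sum hterm) ?_
  rw [Finset.sum_const, Finset.card_range, nsmul_eq_mul]
  rw [show (n:ℝ) * (C * ε₁ * (1/n)) = C * ε₁ by field_simp]

private lemma cont_case (F : ℝ → ℝ) (hF : Measurable F) (g : ℝ →ᵇ ℝ) (I : ℝ) (hI : |I| ≤ ‖g‖)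
    (hA : ∀ a : ℝ, 0 ≤ a →
      Tendsto (fun T : ℝ => ∫ u in (0:ℝ)..a, g (F (T * u))) atTop (𝓝 (a * I)))
    (r : ℝ → ℝ) (hr : Continuous r) (hrc : HasCompactSupport r) :
    Tendsto (fun T : ℝ => ∫ u in (0:ℝ)..1, g (F (T * u)) * r u) atTop
      (𝓝 ((∫ u in (0:ℝ)..1, r u) * I)) := by
  rw [Metric.tendsto_nhds]
  intro ε hε
  have hC : (0:ℝ) ≤ ‖g‖ := norm_nonneg g
  set C := ‖g‖ with hCdef
  set ε₁ := ε / (2*C + 2) with hε₁def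
  have hd : (0:ℝ) < 2*C+2 := by linarith
  have hε₁ : 0 < ε₁ := div_pos hε hd
  obtain ⟨δ, hδ0, hδ⟩ := Metric.uniformContinuous_iff.1
    (hrc.uniformContinuous_of_continuous hr) ε₁ hε₁
  obtain ⟨n, hn⟩ := exists_nat_gt (1/δ)
  have hn0 : 0 < n := by
    have h1 : (0:ℝ) < 1/δ := by positivity
    exact_mod_cast h1.trans hn
  have hn0' : (0:ℝ) < n := by exact_mod_cast hn0
  have h1n : 1/(n:ℝ) < δ := by
    rw [div_lt_iff₀ hn0']
    have := (div_lt_iff₀ hδ0).1 hn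
    nlinarith
  have hclose : ∀ j : ℕ, j < n → ∀ u ∈ Set.Ioc ((j:ℝ)/n) (((j:ℝ)+1)/n),
      |r u - r ((j:ℝ)/n)| ≤ ε₁ := by
    intro j hj u hu
    have hdist : dist u ((j:ℝ)/n) < δ := by
      rw [Real.dist_eq, abs_of_nonneg (by linarith [hu.1.le] : (0:ℝ) ≤ u - (j:ℝ)/n)]
      have h2 := hu.2
      have hdiff : ((j:ℝ)+1)/n - (j:ℝ)/n = 1/n := by ring
      linarith
    have := hδ hdist
    rw [Real.dist_eq] at this
    exact this.le
  have hφb : ∀ T u : ℝ, |g (F (T*u))| ≤ C := fun T u => by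
    simpa [Real.norm_eq_abs] using g.norm_coe_le_norm (F (T*u))
  have key1 : ∀ T : ℝ, |(∫ u in (0:ℝ)..1, g (F (T*u)) * r u)
      - ∑ j ∈ Finset.range n, r ((j:ℝ)/n) * ∫ u in ((j:ℝ)/n)..(((j:ℝ)+1)/n), g (F (T*u))|
      ≤ C * ε₁ := fun T =>
    step_approx _ r (phi_intInt F hF g T) hr C ε₁ hC hε₁.le (hφb T) n hn0 hclose
  have key3 : |(∫ u in (0:ℝ)..1, r u)
      - ∑ j ∈ Finset.range n, r ((j:ℝ)/n) * (1/(n:ℝ))| ≤ ε₁ := by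
    have h3 := step_approx (fun _ => 1) r (fun a b => intervalIntegrable_const) hr 1 ε₁
      one_pos.le hε₁.le (by norm_num) n hn0 hclose
    have e : ∀ j ∈ Finset.range n,
        r ((j:ℝ)/n) * ∫ u in ((j:ℝ)/n)..(((j:ℝ)+1)/n), (1:ℝ) = r ((j:ℝ)/n) * (1/(n:ℝ)) := by
      intro j _
      rw [intervalIntegral.integral_const, smul_eq_mul, mul_one,
        show ((j:ℝ)+1)/n - (j:ℝ)/n = 1/n by ring]
    rw [Finset.sum_congr rfl e] at h3
    simpa [one_mul] using h3
  set L : ℝ := (∑ j ∈ Finset.range n, r ((j:ℝ)/n) * (1/(n:ℝ))) * I with hLdef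
  have key2 : Tendsto (fun T : ℝ => ∑ j ∈ Finset.range n,
      r ((j:ℝ)/n) * ∫ u in ((j:ℝ)/n)..(((j:ℝ)+1)/n), g (F (T*u))) atTop (𝓝 L) := by
    have hL : L = ∑ j ∈ Finset.range n,
        r ((j:ℝ)/n) * ((((j:ℝ)+1)/n) * I - ((j:ℝ)/n) * I) := by
      rw [hLdef, Finset.sum_mul]
      exact Finset.sum_congr rfl fun j _ => by ring
    rw [hL]
    apply tendsto_finset_sum
    intro j _
    have hb := hA (((j:ℝ)+1)/n) (by positivity)
    have ha := hA ((j:ℝ)/n) (by positivity)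
    refine ((hb.sub ha).const_mul (r ((j:ℝ)/n))).congr fun T => ?_
    congr 1
    exact intervalIntegral.integral_interval_sub_left (phi_intInt F hF g T 0 _)
      (phi_intInt F hF g T 0 _)
  have e2 : ∀ᶠ T : ℝ in atTop, |(∑ j ∈ Finset.range n,
      r ((j:ℝ)/n) * ∫ u in ((j:ℝ)/n)..(((j:ℝ)+1)/n), g (F (T*u))) - L| < ε₁ := by
    have := Metric.tendsto_nhds.1 key2 ε₁ hε₁
    simpa [Real.dist_eq] using this
  filter_upwards [e2] with T hT2
  rw [Real.dist_eq]
  set K := ∫ u in (0:ℝ)..1, g (F (T*u)) * r u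
  set S := ∑ j ∈ Finset.range n, r ((j:ℝ)/n) * ∫ u in ((j:ℝ)/n)..(((j:ℝ)+1)/n), g (F (T*u))
  have t1 : |K - S| ≤ C * ε₁ := key1 T
  have t3 : |L - (∫ u in (0:ℝ)..1, r u) * I| ≤ ε₁ * C := by
    rw [hLdef, ← sub_mul, abs_mul]
    have := abs_sub_comm (∫ u in (0:ℝ)..1, r u) (∑ j ∈ Finset.range n, r ((j:ℝ)/n) * (1/(n:ℝ)))
    refine mul_le_mul ?_ hI (abs_nonneg _) hε₁.le
    rw [← this]; exact key3
  have tri : |K - (∫ u in (0:ℝ)..1, r u) * I| ≤ |K - S| + |S - L| + |L - (∫ u in (0:ℝ)..1, r u) * I| := by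
    calc |K - (∫ u in (0:ℝ)..1, r u) * I| ≤ |K - L| + |L - (∫ u in (0:ℝ)..1, r u) * I| :=
          abs_sub_le _ _ _
      _ ≤ (|K - S| + |S - L|) + |L - (∫ u in (0:ℝ)..1, r u) * I| := by
          have := abs_sub_le K S L; linarith
  have hcancel : ε₁ * (2*C+2) = ε := div_mul_cancel₀ ε hd.ne'
  nlinarith [hT2, t1, t3, tri]

/-- If `(1/T)∫₀^T g(F(t)) dt → ∫ g dμ` for every bounded continuous `g`, then for every
probability density `ρ` on `[0,1]` and every bounded continuous `g`,
`(1/T)∫₀^T g(F(t)) ρ(t/T) dt → ∫ g dμ`. -/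
theorem density_limit_transfer (F : ℝ → ℝ) (hF : Measurable F)
    (μ : Measure ℝ) [IsProbabilityMeasure μ]
    (h : ∀ g : ℝ →ᵇ ℝ,
      Tendsto (fun T : ℝ => (1 / T) * ∫ t in (0 : ℝ)..T, g (F t)) atTop
        (𝓝 (∫ x, g x ∂μ))) :
    ∀ ρ : ℝ → ℝ, (∀ u, 0 ≤ ρ u) → IntegrableOn ρ (Set.Icc (0 : ℝ) 1) →
      (∫ u in (0 : ℝ)..1, ρ u) = 1 →
      ∀ g : ℝ →ᵇ ℝ,
        Tendsto (fun T : ℝ => (1 / T) * ∫ t in (0 : ℝ)..T, g (F t) * ρ (t / T)) atTop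
          (𝓝 (∫ x, g x ∂μ)) := by
  intro ρ hρ0 hρint hρ1 g
  set I := ∫ x, g x ∂μ with hIdef
  have hI : |I| ≤ ‖g‖ := by
    rw [← Real.norm_eq_abs]
    calc ‖I‖ ≤ ‖g‖ * (μ Set.univ).toReal :=
          norm_integral_le_of_norm_le_const (Eventually.of_forall fun x => g.norm_coe_le_norm x)
      _ = ‖g‖ := by simp
  have hA : ∀ a : ℝ, 0 ≤ a →
      Tendsto (fun T : ℝ => ∫ u in (0:ℝ)..a, g (F (T * u))) atTop (𝓝 (a * I)) :=
    fun a ha => psi_tendsto F g I (h g) ha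
  have hφb : ∀ T u : ℝ, |g (F (T*u))| ≤ ‖g‖ := fun T u => by
    simpa [Real.norm_eq_abs] using g.norm_coe_le_norm (F (T*u))
  have hρIoc : IntegrableOn ρ (Set.Ioc (0:ℝ) 1) := hρint.mono_set Set.Ioc_subset_Icc_self
  have hρII : IntervalIntegrable ρ volume 0 1 :=
    (intervalIntegrable_iff_integrableOn_Ioc_of_le zero_le_one).2 hρIoc
  have hmain : Tendsto (fun T : ℝ => ∫ u in (0:ℝ)..1, g (F (T*u)) * ρ u) atTop (𝓝 I) := by
    rw [Metric.tendsto_nhds]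
    intro ε hε
    have hC : (0:ℝ) ≤ ‖g‖ := norm_nonneg g
    set C := ‖g‖ with hCdef
    set ε₁ := ε / (2*C + 2) with hε₁def
    have hd : (0:ℝ) < 2*C+2 := by linarith
    have hε₁ : 0 < ε₁ := div_pos hε hd
    -- continuous approximation of the (truncated) density
    have hfint : Integrable ((Set.Icc (0:ℝ) 1).indicator ρ) volume :=
      (integrable_indicator_iff measurableSet_Icc).2 hρint
    obtain ⟨r, hrc, herr, hr, hri⟩ := hfint.exists_hasCompactSupport_integral_sub_le hε₁
    have hrII : IntervalIntegrable r volume 0 1 := hr.intervalIntegrable 0 1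
    have hsubII : IntervalIntegrable (fun u => ρ u - r u) volume 0 1 := hρII.sub hrII
    have hL1 : (∫ u in (0:ℝ)..1, |ρ u - r u|) ≤ ε₁ := by
      rw [intervalIntegral.integral_of_le zero_le_one]
      have h1 : ∫ u in Set.Ioc (0:ℝ) 1, |ρ u - r u|
          = ∫ u in Set.Ioc (0:ℝ) 1, ‖(Set.Icc (0:ℝ) 1).indicator ρ u - r u‖ := by
        refine setIntegral_congr_fun measurableSet_Ioc fun u hu => ?_
        rw [Set.indicator_of_mem (Set.Ioc_subset_Icc_self hu), Real.norm_eq_abs]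
      rw [h1]
      calc ∫ u in Set.Ioc (0:ℝ) 1, ‖(Set.Icc (0:ℝ) 1).indicator ρ u - r u‖
          ≤ ∫ u, ‖(Set.Icc (0:ℝ) 1).indicator ρ u - r u‖ :=
            setIntegral_le_integral (hfint.sub hri).norm
              (Eventually.of_forall fun x => norm_nonneg _)
        _ ≤ ε₁ := herr
    -- error bound between the two integrals
    have E1 : ∀ T : ℝ, |(∫ u in (0:ℝ)..1, g (F (T*u)) * ρ u)
        - ∫ u in (0:ℝ)..1, g (F (T*u)) * r u| ≤ C * ε₁ := by
      intro T
      have hintρ : IntervalIntegrable (fun u => g (F (T*u)) * ρ u) volume 0 1 := by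
        rw [intervalIntegrable_iff_integrableOn_Ioc_of_le zero_le_one]
        refine hρIoc.bdd_mul (c := C) ?_ (Eventually.of_forall fun u => ?_)
        · exact (g.continuous.measurable.comp
            (hF.comp (measurable_const_mul T))).aestronglyMeasurable
        · exact g.norm_coe_le_norm _
      have hintr : IntervalIntegrable (fun u => g (F (T*u)) * r u) volume 0 1 :=
        (phi_intInt F hF g T 0 1).mul_continuousOn hr.continuousOn
      have ediff : (∫ u in (0:ℝ)..1, g (F (T*u)) * ρ u) - ∫ u in (0:ℝ)..1, g (F (T*u)) * r u
          = ∫ u in (0:ℝ)..1, g (F (T*u)) * (ρ u - r u) := by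
        rw [← intervalIntegral.integral_sub hintρ hintr]
        refine intervalIntegral.integral_congr fun u _ => by ring
      rw [ediff]
      have habs : |∫ u in (0:ℝ)..1, g (F (T*u)) * (ρ u - r u)|
          ≤ ∫ u in (0:ℝ)..1, |g (F (T*u)) * (ρ u - r u)| :=
        intervalIntegral.abs_integral_le_integral_abs zero_le_one
      have hprodII : IntervalIntegrable (fun u => g (F (T*u)) * (ρ u - r u)) volume 0 1 := by
        have := hintρ.sub hintr
        have e : (fun u => g (F (T*u)) * ρ u - g (F (T*u)) * r u)
            = fun u => g (F (T*u)) * (ρ u - r u) := by funext u; ring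
        rwa [e] at this
      have hmono : (∫ u in (0:ℝ)..1, |g (F (T*u)) * (ρ u - r u)|)
          ≤ ∫ u in (0:ℝ)..1, C * |ρ u - r u| := by
        refine intervalIntegral.integral_mono_on zero_le_one hprodII.abs
          (hsubII.abs.const_mul C) fun u _ => ?_
        rw [abs_mul]
        exact mul_le_mul_of_nonneg_right (hφb T u) (abs_nonneg _)
      have hconst : (∫ u in (0:ℝ)..1, C * |ρ u - r u|) = C * ∫ u in (0:ℝ)..1, |ρ u - r u| :=
        intervalIntegral.integral_const_mul _ _
      have : C * (∫ u in (0:ℝ)..1, |ρ u - r u|) ≤ C * ε₁ :=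
        mul_le_mul_of_nonneg_left hL1 hC
      linarith [habs, hmono, hconst ▸ this]
    have E3 : |(∫ u in (0:ℝ)..1, r u) - 1| ≤ ε₁ := by
      have e : (∫ u in (0:ℝ)..1, r u) - 1 = -∫ u in (0:ℝ)..1, (ρ u - r u) := by
        rw [intervalIntegral.integral_sub hρII hrII, hρ1]; ring
      rw [e, abs_neg]
      calc |∫ u in (0:ℝ)..1, (ρ u - r u)| ≤ ∫ u in (0:ℝ)..1, |ρ u - r u| :=
            intervalIntegral.abs_integral_le_integral_abs zero_le_one
        _ ≤ ε₁ := hL1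
    have E2 : ∀ᶠ T : ℝ in atTop, |(∫ u in (0:ℝ)..1, g (F (T*u)) * r u)
        - (∫ u in (0:ℝ)..1, r u) * I| < ε₁ := by
      have := Metric.tendsto_nhds.1 (cont_case F hF g I hI hA r hr hrc) ε₁ hε₁
      simpa [Real.dist_eq] using this
    filter_upwards [E2] with T hT2
    rw [Real.dist_eq]
    set K1 := ∫ u in (0:ℝ)..1, g (F (T*u)) * ρ u
    set K2 := ∫ u in (0:ℝ)..1, g (F (T*u)) * r u
    have t1 := E1 T
    have t3 : |(∫ u in (0:ℝ)..1, r u) * I - I| ≤ ε₁ * C := by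
      have e : (∫ u in (0:ℝ)..1, r u) * I - I = ((∫ u in (0:ℝ)..1, r u) - 1) * I := by ring
      rw [e, abs_mul]
      exact mul_le_mul E3 hI (abs_nonneg _) hε₁.le
    have tri : |K1 - I| ≤ |K1 - K2| + |K2 - (∫ u in (0:ℝ)..1, r u) * I|
        + |(∫ u in (0:ℝ)..1, r u) * I - I| := by
      calc |K1 - I| ≤ |K1 - (∫ u in (0:ℝ)..1, r u) * I| + |(∫ u in (0:ℝ)..1, r u) * I - I| :=
            abs_sub_le _ _ _
        _ ≤ (|K1 - K2| + |K2 - (∫ u in (0:ℝ)..1, r u) * I|)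
            + |(∫ u in (0:ℝ)..1, r u) * I - I| := by
            have := abs_sub_le K1 K2 ((∫ u in (0:ℝ)..1, r u) * I); linarith
    have hcancel : ε₁ * (2*C+2) = ε := div_mul_cancel₀ ε hd.ne'
    nlinarith [hT2, t1, t3, tri]
  -- transfer back to the original formulation via the substitution t = T u
  refine Tendsto.congr' ?_ hmain
  filter_upwards [eventually_gt_atTop 0] with T hT
  have e1 : (fun u : ℝ => g (F (T*u)) * ρ u)
      = fun u => (fun t => g (F t) * ρ (t/T)) (T * u) := by
    funext u
    simp [mul_div_cancel_left₀ _ hT.ne']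
  rw [e1, intervalIntegral.integral_comp_mul_left (fun t => g (F t) * ρ (t/T)) hT.ne']
  simp [smul_eq_mul, one_div]
end
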